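/- arXiv:2212.14172 — 6 statements merged into one kernel-verified Lean document; each statement's English description precedes it below -/
import Mathlib

section
/- For a ring A, the following are equivalent: (1) the right A-module A is ℵ₀-distributive and A satisfies the minimum condition on principal right ideals; (2) A is right Artinian. -/
universe u

open Submodule

/-- A module `M` is `ℵ₀`-distributive if no subfactor of `M` (quotient of a submodule)
is (isomorphic to) a direct sum of infinitely many pairwise isomorphic simple modules.
The direct sum condition is phrased internally: the subfactor has no independent spanning
family, indexed by an infinite type, of pairwise isomorphic simple submodules. -/
def IsAleph0Distributive (R M : Type u) [Ring R] [AddCommGroup M] [Module R M] : Prop :=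
  ¬ ∃ (N : Submodule R M) (P : Submodule R N) (ι : Type u) (_ : Infinite ι)
      (T : ι → Submodule R (N ⧸ P)),
      iSupIndep T ∧ iSup T = ⊤ ∧ (∀ i, IsSimpleModule R (T i)) ∧
        ∀ i j, Nonempty ((T i) ≃ₗ[R] (T j))

/-- A module is distributive if its lattice of submodules is distributive. -/
def IsDistributiveModule (R M : Type u) [Ring R] [AddCommGroup M] [Module R M] : Prop :=
  ∀ X Y Z : Submodule R M, X ⊓ (Y ⊔ Z) = X ⊓ Y ⊔ X ⊓ Z

/-- A module is completely cyclic if every submodule is cyclic. -/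
def IsCompletelyCyclic (R M : Type u) [Ring R] [AddCommGroup M] [Module R M] : Prop :=
  ∀ N : Submodule R M, ∃ m : M, N = span R {m}

/-- A module is Bezout if every finitely generated submodule is cyclic. -/
def IsBezoutModule (R M : Type u) [Ring R] [AddCommGroup M] [Module R M] : Prop :=
  ∀ N : Submodule R M, N.FG → ∃ m : M, N = span R {m}

/-- A ring satisfies the minimum condition on principal right ideals if there is no
infinite strictly descending chain of principal right ideals. -/
def MinPrincipalRight (A : Type u) [Ring A] : Prop :=
  ¬ ∃ a : ℕ → A, StrictAnti fun n => span Aᵐᵒᵖ ({a n} : Set A)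

/-- A ring satisfies the minimum condition on principal left ideals if there is no
infinite strictly descending chain of principal left ideals. -/
def MinPrincipalLeft (A : Type u) [Ring A] : Prop :=
  ¬ ∃ a : ℕ → A, StrictAnti fun n => span A ({a n} : Set A)

/-- A module is indecomposable if it is nonzero and is not the direct sum of two
nonzero submodules. -/
def IsIndecomposableModule (R M : Type u) [Ring R] [AddCommGroup M] [Module R M] : Prop :=
  Nontrivial M ∧ ∀ N P : Submodule R M, IsCompl N P → N = ⊥ ∨ P = ⊥

/-- A ring `A` has (right) finite representation type if it is right Artinian and has,
up to isomorphism, only finitely many finitely generated indecomposable right modules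
(every finitely generated module is isomorphic to a quotient of some `Aⁿ`, so the
representatives may be taken of this form). -/
def HasFiniteRepresentationType (A : Type u) [Ring A] : Prop :=
  IsArtinian Aᵐᵒᵖ A ∧
    ∃ (n : ℕ) (k : Fin n → ℕ) (N : ∀ i, Submodule Aᵐᵒᵖ (Fin (k i) → A)),
      ∀ (M : Type u) [AddCommGroup M] [Module Aᵐᵒᵖ M],
        Module.Finite Aᵐᵒᵖ M → IsIndecomposableModule Aᵐᵒᵖ M →
          ∃ i, Nonempty (M ≃ₗ[Aᵐᵒᵖ] ((Fin (k i) → A) ⧸ N i))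

/-- `M` has only finitely many simple subfactors up to isomorphism. -/
def FinitelyManySimpleSubfactors (R M : Type u) [Ring R] [AddCommGroup M] [Module R M] : Prop :=
  ∃ (n : ℕ) (N : Fin n → Submodule R M) (P : ∀ i, Submodule R (N i)),
    ∀ (N' : Submodule R M) (P' : Submodule R N'), IsSimpleModule R (N' ⧸ P') →
      ∃ i, Nonempty ((N' ⧸ P') ≃ₗ[R] (N i ⧸ P i))

/-- A module is semi-Artinian if every nonzero quotient module contains a simple submodule. -/
def IsSemiArtinianModule (R M : Type u) [Ring R] [AddCommGroup M] [Module R M] : Prop :=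
  ∀ N : Submodule R M, N ≠ ⊤ → ∃ S : Submodule R (M ⧸ N), IsSimpleModule R S

/-- A ring is semilocal if its quotient by the Jacobson radical is semisimple. -/
def IsSemilocalRing (A : Type u) [Ring A] : Prop :=
  IsSemisimpleModule A (A ⧸ Ideal.jacobson (⊥ : Ideal A))

/-- A ring is semiprimary if it is semilocal and its Jacobson radical is nilpotent. -/
def IsSemiprimaryRing' (A : Type u) [Ring A] : Prop :=
  IsSemilocalRing A ∧ ∃ n : ℕ, 0 < n ∧ ∀ f : Fin n → A,
    (∀ i, f i ∈ Ideal.jacobson (⊥ : Ideal A)) → (List.ofFn f).prod = 0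

section AuxDefs

/-- Auxiliary: `Q` contains an infinite independent spanning family of pairwise
isomorphic simple submodules. -/
def BadFam (R : Type u) [Ring R] (Q : Type u) [AddCommGroup Q] [Module R Q] : Prop :=
  ∃ (ι : Type u) (_ : Infinite ι) (T : ι → Submodule R Q),
    iSupIndep T ∧ iSup T = ⊤ ∧ (∀ i, IsSimpleModule R (T i)) ∧
      ∀ i j, Nonempty ((T i) ≃ₗ[R] (T j))

variable {R : Type u} [Ring R]

theorem BadFam.congr {Q Q' : Type u} [AddCommGroup Q] [Module R Q]
    [AddCommGroup Q'] [Module R Q'] (e : Q ≃ₗ[R] Q') (h : BadFam R Q) : BadFam R Q' := by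
  obtain ⟨ι, hι, T, hind, htop, hsimp, hiso⟩ := h
  have hmapeq : (fun i => (T i).map (e : Q →ₗ[R] Q')) = fun i => (Submodule.orderIsoMapComap e) (T i) := rfl
  refine ⟨ι, hι, fun i => (T i).map (e : Q →ₗ[R] Q'), ?_, ?_, fun i => ?_, fun i j => ?_⟩
  · rw [hmapeq]
    exact (iSupIndep_map_orderIso_iff (Submodule.orderIsoMapComap e)).mpr hind
  · rw [← Submodule.map_iSup, htop, Submodule.map_top]
    exact LinearMap.range_eq_top.mpr e.surjective
  · haveI := hsimp i
    exact IsSimpleModule.congr (Submodule.equivMapOfInjective (e : Q →ₗ[R] Q') e.injective (T i)).symm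
  · haveI := hsimp i; haveI := hsimp j
    obtain ⟨f⟩ := hiso i j
    exact ⟨((Submodule.equivMapOfInjective (e : Q →ₗ[R] Q') e.injective (T i)).symm.trans f).trans
      (Submodule.equivMapOfInjective (e : Q →ₗ[R] Q') e.injective (T j))⟩

/-- Any submodule of a quotient of `M` is isomorphic to a subfactor `N ⧸ P` of `M`. -/
theorem exists_subfactor_of_quot_submodule {M : Type u} [AddCommGroup M] [Module R M]
    (K : Submodule R M) (W : Submodule R (M ⧸ K)) :
    ∃ (N : Submodule R M) (P : Submodule R N), Nonempty ((N ⧸ P) ≃ₗ[R] W) := by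
  set N := W.comap K.mkQ with hN
  set P : Submodule R N := K.comap N.subtype with hP
  refine ⟨N, P, ?_⟩
  have hmem : ∀ x : N, K.mkQ (N.subtype x) ∈ W := fun x => x.2
  set φ : N →ₗ[R] W := LinearMap.codRestrict W (K.mkQ.comp N.subtype) hmem with hφ
  have hsurj : Function.Surjective φ := by
    intro w
    obtain ⟨x, hx⟩ := K.mkQ_surjective w.1
    have hxN : x ∈ N := by
      simp only [hN, Submodule.mem_comap, hx]
      exact w.2
    exact ⟨⟨x, hxN⟩, Subtype.ext hx⟩
  have hker : LinearMap.ker φ = P := by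
    ext x
    simp only [hφ, LinearMap.mem_ker, hP, Submodule.mem_comap]
    constructor
    · intro h
      have : K.mkQ (N.subtype x) = 0 := congrArg Subtype.val h
      simpa [Submodule.Quotient.mk_eq_zero] using this
    · intro h
      apply Subtype.ext
      simpa [Submodule.Quotient.mk_eq_zero] using h
  exact ⟨(Submodule.quotEquivOfEq P (LinearMap.ker φ) hker.symm).trans
    (φ.quotKerEquivOfSurjective hsurj)⟩

/-- Subfactors transport along a linear equivalence. -/
theorem exists_subfactor_congr {M M' : Type u} [AddCommGroup M] [Module R M]
    [AddCommGroup M'] [Module R M'] (e : M ≃ₗ[R] M')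
    (N : Submodule R M) (P : Submodule R N) :
    ∃ (N' : Submodule R M') (P' : Submodule R N'), Nonempty ((N ⧸ P) ≃ₗ[R] (N' ⧸ P')) := by
  refine ⟨N.map (e : M →ₗ[R] M'), P.map (σ₁₂ := RingHom.id R) (e.submoduleMap N : N →ₗ[R] N.map (e : M →ₗ[R] M')), ?_⟩
  exact ⟨Submodule.Quotient.equiv P _ (e.submoduleMap N) rfl⟩

end AuxDefs

section Jrad

variable (R : Type u) [Ring R]

/-- An elementwise stand-in for the Jacobson radical (as a left ideal). -/
def jrad : Submodule R R where
  carrier := {x | ∀ r : R, IsUnit (1 - r * x)}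
  zero_mem' := by simp
  add_mem' := by
    intro a b ha hb r
    obtain ⟨u, hu⟩ := ha r
    have h2 : IsUnit (1 - (↑u⁻¹ * r) * b) := hb (↑u⁻¹ * r)
    have key : (1 - r * a) * (1 - (↑u⁻¹ * r) * b) = 1 - r * (a + b) := by
      rw [← hu]
      calc (u : R) * (1 - (↑u⁻¹ * r) * b) = u - (u * ↑u⁻¹) * (r * b) := by noncomm_ring
      _ = u - r * b := by rw [Units.mul_inv, one_mul]
      _ = 1 - r * a - r * b := by rw [hu]
      _ = 1 - r * (a + b) := by noncomm_ring
    rw [← key, ← hu]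
    exact (Units.isUnit u).mul h2
  smul_mem' := by
    intro c x hx r
    have := hx (r * c)
    simpa [smul_eq_mul, mul_assoc] using this

variable {R}

theorem isUnit_one_sub_swap {a b : R} (h : IsUnit (1 - a * b)) : IsUnit (1 - b * a) := by
  obtain ⟨u, hu⟩ := h
  have h1 : (1 - a * b) * ↑u⁻¹ = 1 := by rw [← hu]; exact Units.mul_inv u
  have h2 : (↑u⁻¹ : R) * (1 - a * b) = 1 := by rw [← hu]; exact Units.inv_mul u
  refine ⟨⟨1 - b * a, 1 + b * ↑u⁻¹ * a, ?_, ?_⟩, rfl⟩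
  · have expand : (1 - b * a) * (1 + b * ↑u⁻¹ * a)
        = 1 - b * a + b * ((1 - a * b) * ↑u⁻¹) * a := by noncomm_ring
    rw [expand, h1]; noncomm_ring
  · have expand : (1 + b * ↑u⁻¹ * a) * (1 - b * a)
        = 1 - b * a + b * (↑u⁻¹ * (1 - a * b)) * a := by noncomm_ring
    rw [expand, h2]; noncomm_ring

theorem jrad_mul_mem {x : R} (hx : x ∈ jrad R) (s : R) : x * s ∈ jrad R := by
  intro r
  have h1 : IsUnit (1 - (s * r) * x) := hx (s * r)
  have h2 : IsUnit (1 - s * (r * x)) := by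
    rw [show s * (r * x) = (s * r) * x by rw [mul_assoc]]
    exact h1
  have h3 := isUnit_one_sub_swap h2
  simpa [mul_assoc] using h3

theorem jrad_smul_simple {S : Type u} [AddCommGroup S] [Module R S]
    (hS : IsSimpleModule R S) {x : R} (hx : x ∈ jrad R) (m : S) : x • m = 0 := by
  by_contra hne
  have hspan : Submodule.span R {x • m} = ⊤ := IsSimpleModule.span_singleton_eq_top R hne
  have hmem : m ∈ Submodule.span R {x • m} := hspan ▸ Submodule.mem_top
  obtain ⟨r, hr⟩ := Submodule.mem_span_singleton.mp hmem
  have h0 : (1 - r * x) • m = 0 := by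
    rw [sub_smul, one_smul, mul_smul] at *
    rw [hr]; exact sub_self m
  obtain ⟨u, hu⟩ := hx r
  have : m = 0 := by
    have := congrArg (fun z => (↑u⁻¹ : R) • z) h0
    simpa [← hu, ← mul_smul, Units.inv_mul, smul_zero] using this
  exact hne (by rw [this, smul_zero])

end Jrad

section DCC

variable {R : Type u} [Ring R]

/-- DCC on cyclic submodules descends to quotients. -/
theorem dcc_cyclic_quot (hm : ¬ ∃ a : ℕ → R, StrictAnti fun n => span R ({a n} : Set R))
    (K : Submodule R R) :
    ¬ ∃ q : ℕ → R ⧸ K, StrictAnti fun n => span R ({q n} : Set (R ⧸ K)) := by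
  rintro ⟨q, hq⟩
  have hstep : ∀ n, ∃ r : R, r • q n = q (n + 1) := by
    intro n
    have hle : span R {q (n + 1)} ≤ span R {q n} := (hq (Nat.lt_succ_self n)).le
    exact mem_span_singleton.mp (hle (mem_span_singleton_self _))
  choose r hr using hstep
  obtain ⟨x0, hx0⟩ := K.mkQ_surjective (q 0)
  set x : ℕ → R := fun n => Nat.rec x0 (fun n xn => r n * xn) n with hxdef
  have hxq : ∀ n, K.mkQ (x n) = q n := by
    intro n
    induction n with
    | zero => exact hx0
    | succ n ih =>
      have hrec : x (n + 1) = r n * x n := rfl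
      rw [hrec, ← smul_eq_mul, map_smul, ih, hr n]
  apply hm
  refine ⟨x, strictAnti_nat_of_succ_lt fun n => ?_⟩
  have hle : span R {x (n + 1)} ≤ span R {x n} := by
    rw [span_singleton_le_iff_mem]
    have hrec : x (n + 1) = r n * x n := rfl
    rw [hrec, ← smul_eq_mul]
    exact Submodule.smul_mem _ _ (mem_span_singleton_self _)
  refine lt_of_le_of_ne hle fun heq => ?_
  have hxmem : x n ∈ span R {x (n + 1)} := heq ▸ mem_span_singleton_self _
  obtain ⟨s, hs⟩ := mem_span_singleton.mp hxmem
  have : q n ∈ span R {q (n + 1)} := by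
    have h2 := congrArg K.mkQ hs
    rw [map_smul] at h2
    rw [hxq n, hxq (n + 1)] at h2
    exact h2 ▸ Submodule.smul_mem _ _ (mem_span_singleton_self _)
  exact absurd ((span_singleton_le_iff_mem _ _).mpr this)
    (not_le_of_gt (hq (Nat.lt_succ_self n)))

/-- Every nonzero submodule of a quotient of `R` contains a simple submodule. -/
theorem exists_simple_le_of_ne_bot
    (hm : ¬ ∃ a : ℕ → R, StrictAnti fun n => span R ({a n} : Set R))
    (K : Submodule R R) (W : Submodule R (R ⧸ K)) (hW : W ≠ ⊥) :
    ∃ L : Submodule R (R ⧸ K), L ≤ W ∧ IsSimpleModule R L := by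
  by_contra hno
  push_neg at hno
  have step : ∀ w : R ⧸ K, w ∈ W → w ≠ 0 → ∃ w' : R ⧸ K, w' ∈ W ∧ w' ≠ 0 ∧
      span R {w'} < span R {w} := by
    intro w hwW hw0
    have hspanle : span R {w} ≤ W := (span_singleton_le_iff_mem _ _).mpr hwW
    have hnotatom : ¬ IsAtom (span R ({w} : Set (R ⧸ K))) := fun h =>
      hno _ hspanle (isSimpleModule_iff_isAtom.mpr h)
    have hnebot : span R ({w} : Set (R ⧸ K)) ≠ ⊥ := by
      simpa [span_singleton_eq_bot] using hw0
    rw [IsAtom] at hnotatom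
    push_neg at hnotatom
    obtain ⟨B, hBlt, hBne⟩ := hnotatom hnebot
    obtain ⟨b, hbB, hb0⟩ := (Submodule.ne_bot_iff B).mp hBne
    exact ⟨b, hspanle (hBlt.le hbB), hb0,
      lt_of_le_of_lt ((span_singleton_le_iff_mem _ _).mpr hbB) hBlt⟩
  obtain ⟨w0, hw0W, hw00⟩ := (Submodule.ne_bot_iff W).mp hW
  have hf : ∀ t : {w : R ⧸ K // w ∈ W ∧ w ≠ 0},
      ∃ t' : {w : R ⧸ K // w ∈ W ∧ w ≠ 0}, span R {t'.1} < span R {t.1} := by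
    rintro ⟨w, hwW, hw0⟩
    obtain ⟨w', h1, h2, h3⟩ := step w hwW hw0
    exact ⟨⟨w', h1, h2⟩, h3⟩
  choose f hfspec using hf
  apply dcc_cyclic_quot hm K
  refine ⟨fun n => (f^[n] ⟨w0, hw0W, hw00⟩).1, strictAnti_nat_of_succ_lt fun n => ?_⟩
  show span R {(f^[n + 1] ⟨w0, hw0W, hw00⟩).1} < span R {(f^[n] ⟨w0, hw0W, hw00⟩).1}
  rw [Function.iterate_succ_apply']
  exact hfspec _

end DCC

section QuotJ

variable {R : Type u} [Ring R]

/-- Right multiplication by (a representative) `a`, descended to `R ⧸ jrad R`. -/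
noncomputable def qrmul (a : R) : (R ⧸ jrad R) →ₗ[R] (R ⧸ jrad R) :=
  Submodule.liftQ (jrad R) ((jrad R).mkQ.comp (LinearMap.toSpanSingleton R R a))
    (by
      intro x hx
      simp only [LinearMap.mem_ker, LinearMap.comp_apply, LinearMap.toSpanSingleton_apply,
        Submodule.mkQ_apply, smul_eq_mul]
      rw [Submodule.Quotient.mk_eq_zero]
      exact jrad_mul_mem hx a)

theorem qrmul_mk (a x : R) :
    qrmul a ((jrad R).mkQ x) = (jrad R).mkQ (x * a) := by
  simp [qrmul, Submodule.mkQ_apply, Submodule.liftQ_apply, LinearMap.toSpanSingleton_apply,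
    smul_eq_mul]

theorem mkJ_eq_mkJ {x y : R} (h : x - y ∈ jrad R) :
    (jrad R).mkQ x = (jrad R).mkQ y := by
  simpa [Submodule.mkQ_apply] using (Submodule.Quotient.eq (jrad R)).mpr h

theorem mkJ_mul_congr_right {x y : R} (a : R) (h : (jrad R).mkQ x = (jrad R).mkQ y) :
    (jrad R).mkQ (x * a) = (jrad R).mkQ (a := (y * a)) := by
  have hxy : x - y ∈ jrad R := by
    simpa [Submodule.mkQ_apply] using (Submodule.Quotient.eq (jrad R)).mp (by simpa using h)
  apply mkJ_eq_mkJ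
  have : (x - y) * a ∈ jrad R := jrad_mul_mem hxy a
  simpa [sub_mul] using this

theorem mkJ_mul_congr_left {x y : R} (a : R) (h : (jrad R).mkQ x = (jrad R).mkQ y) :
    (jrad R).mkQ (a * x) = (jrad R).mkQ (a * y) := by
  have hxy : x - y ∈ jrad R := by
    simpa [Submodule.mkQ_apply] using (Submodule.Quotient.eq (jrad R)).mp (by simpa using h)
  apply mkJ_eq_mkJ
  have : a • (x - y) ∈ jrad R := Submodule.smul_mem _ a hxy
  simpa [smul_eq_mul, mul_sub] using this

/-- If `1 - r*x` is invertible modulo `jrad R` for all `r`, then `x ∈ jrad R`. -/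
theorem mem_jrad_of_unit_mod {x : R}
    (h : ∀ r : R, ∃ c : R, (jrad R).mkQ (c * (1 - r * x)) = (jrad R).mkQ 1 ∧
      (jrad R).mkQ ((1 - r * x) * c) = (jrad R).mkQ 1) :
    x ∈ jrad R := by
  intro r
  obtain ⟨c, hc1, hc2⟩ := h r
  have hJ1 : c * (1 - r * x) - 1 ∈ jrad R := by
    simpa [Submodule.mkQ_apply] using (Submodule.Quotient.eq (jrad R)).mp (by simpa using hc1)
  have hJ2 : (1 - r * x) * c - 1 ∈ jrad R := by
    simpa [Submodule.mkQ_apply] using (Submodule.Quotient.eq (jrad R)).mp (by simpa using hc2)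
  -- c * (1 - r*x) = 1 + j₁ is a unit
  have hu1 : IsUnit (c * (1 - r * x)) := by
    have := hJ1 (-1)
    simpa [neg_mul, sub_neg_eq_add] using this
  have hu2 : IsUnit ((1 - r * x) * c) := by
    have := hJ2 (-1)
    simpa [neg_mul, sub_neg_eq_add] using this
  -- so 1 - r*x has a left and a right inverse
  obtain ⟨u1, hu1e⟩ := hu1
  obtain ⟨u2, hu2e⟩ := hu2
  have hleft : ((↑u1⁻¹ : R) * c) * (1 - r * x) = 1 := by
    rw [mul_assoc, show c * (1 - r * x) = (u1 : R) from hu1e.symm]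
    exact Units.inv_mul u1
  have hright : (1 - r * x) * (c * ↑u2⁻¹) = 1 := by
    rw [← mul_assoc, show (1 - r * x) * c = (u2 : R) from hu2e.symm]
    exact Units.mul_inv u2
  have heq : (↑u1⁻¹ : R) * c = c * ↑u2⁻¹ := by
    calc (↑u1⁻¹ : R) * c = ((↑u1⁻¹ : R) * c) * ((1 - r * x) * (c * ↑u2⁻¹)) := by
          rw [hright, mul_one]
      _ = (((↑u1⁻¹ : R) * c) * (1 - r * x)) * (c * ↑u2⁻¹) := by noncomm_ring
      _ = c * ↑u2⁻¹ := by rw [hleft, one_mul]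
  exact ⟨⟨1 - r * x, c * ↑u2⁻¹, hright, by rw [← heq]; exact hleft⟩, rfl⟩

end QuotJ

section IdemGen

variable {R : Type u} [Ring R]

theorem simple_gen_idem (L : Submodule R (R ⧸ jrad R)) (hL : IsSimpleModule R L) :
    ∃ e : R, (jrad R).mkQ e ∈ L ∧ (jrad R).mkQ (e * e) = (jrad R).mkQ e ∧
      (jrad R).mkQ e ≠ 0 ∧ span R {(jrad R).mkQ e} = L := by
  haveI := hL
  set π := (jrad R).mkQ with hπ
  have hLne : L ≠ ⊥ := Submodule.nontrivial_iff_ne_bot.mp (IsSimpleModule.nontrivial R L)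
  -- Step (a): there are a, x with π a, π x ∈ L and π (x * a) ≠ 0
  have hstepa : ∃ a x : R, π a ∈ L ∧ π x ∈ L ∧ π (x * a) ≠ 0 := by
    by_contra hprod
    push_neg at hprod
    apply hLne
    rw [eq_bot_iff]
    intro z hz
    obtain ⟨c, hc⟩ := (jrad R).mkQ_surjective z
    have hcJ : c ∈ jrad R := by
      apply mem_jrad_of_unit_mod
      intro r
      refine ⟨1 + r * c, ?_, ?_⟩
      · have hyL : π (r * c) ∈ L := by
          rw [← smul_eq_mul, map_smul, hc]
          exact Submodule.smul_mem _ _ hz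
        have hyy : π ((r * c) * (r * c)) = 0 := hprod (r * c) (r * c) hyL hyL
        have hyyJ : (r * c) * (r * c) ∈ jrad R := by
          rwa [hπ, Submodule.mkQ_apply, Submodule.Quotient.mk_eq_zero] at hyy
        have hexp : (1 + r * c) * (1 - r * c) - 1 = -((r * c) * (r * c)) := by noncomm_ring
        apply mkJ_eq_mkJ
        rw [hexp]
        exact neg_mem hyyJ
      · have hyL : π (r * c) ∈ L := by
          rw [← smul_eq_mul, map_smul, hc]
          exact Submodule.smul_mem _ _ hz
        have hyy : π ((r * c) * (r * c)) = 0 := hprod (r * c) (r * c) hyL hyL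
        have hyyJ : (r * c) * (r * c) ∈ jrad R := by
          rwa [hπ, Submodule.mkQ_apply, Submodule.Quotient.mk_eq_zero] at hyy
        have hexp : (1 - r * c) * (1 + r * c) - 1 = -((r * c) * (r * c)) := by noncomm_ring
        apply mkJ_eq_mkJ
        rw [hexp]
        exact neg_mem hyyJ
    rw [← hc, Submodule.mem_bot, Submodule.mkQ_apply, Submodule.Quotient.mk_eq_zero]
    exact hcJ
  obtain ⟨a, x, haL, hxL, hxa⟩ := hstepa
  -- Step (b): the map ψ : L → Q, l ↦ l * a
  set ψ : L →ₗ[R] (R ⧸ jrad R) := (qrmul a).comp L.subtype with hψdef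
  have hψx : ψ ⟨π x, hxL⟩ = π (x * a) := by
    simp only [hψdef, LinearMap.comp_apply, Submodule.subtype_apply]
    exact qrmul_mk a x
  have hker : LinearMap.ker ψ = ⊥ := by
    rcases eq_bot_or_eq_top (LinearMap.ker ψ) with h | h
    · exact h
    · exfalso
      apply hxa
      rw [← hψx]
      have : (⟨π x, hxL⟩ : L) ∈ LinearMap.ker ψ := by rw [h]; trivial
      exact this
  have hrle : LinearMap.range ψ ≤ L := by
    rintro _ ⟨l, rfl⟩
    obtain ⟨w, hw⟩ := (jrad R).mkQ_surjective (l : R ⧸ jrad R)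
    simp only [hψdef, LinearMap.comp_apply, Submodule.subtype_apply]
    rw [← hw, qrmul_mk, ← smul_eq_mul, map_smul]
    exact Submodule.smul_mem _ _ haL
  have hrne : LinearMap.range ψ ≠ ⊥ := by
    rw [Submodule.ne_bot_iff]
    exact ⟨ψ ⟨π x, hxL⟩, LinearMap.mem_range_self _ _, by rw [hψx]; exact hxa⟩
  have hatom : IsAtom L := isSimpleModule_iff_isAtom.mp hL
  have hrange : LinearMap.range ψ = L :=
    hrle.lt_or_eq.resolve_left fun hlt => hrne (hatom.2 _ hlt)
  have haR : π a ∈ LinearMap.range ψ := by rw [hrange]; exact haL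
  obtain ⟨e', he'⟩ := haR
  obtain ⟨e, he⟩ := (jrad R).mkQ_surjective (e' : R ⧸ jrad R)
  have hea : π (e * a) = π a := by
    rw [← he']
    simp only [hψdef, LinearMap.comp_apply, Submodule.subtype_apply]
    rw [← he, qrmul_mk]
  have heL : π e ∈ L := by rw [he]; exact e'.2
  have hz1 : π (e * e) = e • π e := by rw [← smul_eq_mul, map_smul]
  have hzL : π (e * e) - π e ∈ L := sub_mem (hz1 ▸ Submodule.smul_mem _ e heL) heL
  have hψz : ψ ⟨π (e * e) - π e, hzL⟩ = 0 := by
    simp only [hψdef, LinearMap.comp_apply, Submodule.subtype_apply, map_sub]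
    have h1 : qrmul a (π (e * e)) = π ((e * e) * a) := qrmul_mk a (e * e)
    have h2 : qrmul a (π e) = π (e * a) := qrmul_mk a e
    rw [h1, h2]
    have h3 : π ((e * e) * a) = π (e * a) := by
      rw [mul_assoc]
      exact mkJ_mul_congr_left e hea
    rw [h3, sub_self]
  have hidem : π (e * e) = π e := by
    have hmem : (⟨π (e * e) - π e, hzL⟩ : L) ∈ LinearMap.ker ψ := LinearMap.mem_ker.mpr hψz
    rw [hker, Submodule.mem_bot] at hmem
    have := congrArg Subtype.val hmem
    simpa [sub_eq_zero] using this
  have hne : π e ≠ 0 := by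
    intro h0
    have heJ : e ∈ jrad R := by
      rwa [hπ, Submodule.mkQ_apply, Submodule.Quotient.mk_eq_zero] at h0
    have haJ : a ∈ jrad R := by
      have : π (e * a) = 0 := by
        rw [hπ, Submodule.mkQ_apply, Submodule.Quotient.mk_eq_zero]
        exact jrad_mul_mem heJ a
      rw [hea] at this
      rwa [hπ, Submodule.mkQ_apply, Submodule.Quotient.mk_eq_zero] at this
    apply hxa
    rw [hπ, Submodule.mkQ_apply, Submodule.Quotient.mk_eq_zero, ← smul_eq_mul]
    exact Submodule.smul_mem _ _ haJ
  refine ⟨e, heL, hidem, hne, ?_⟩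
  have hsle : span R {π e} ≤ L := (span_singleton_le_iff_mem _ _).mpr heL
  have hsne : span R ({π e} : Set (R ⧸ jrad R)) ≠ ⊥ := by
    simpa [span_singleton_eq_bot] using hne
  exact hsle.lt_or_eq.resolve_left fun hlt => hsne (hatom.2 _ hlt)

end IdemGen

section SocTop

variable {R : Type u} [Ring R]

theorem soc_jrad_top (hm : ¬ ∃ a : ℕ → R, StrictAnti fun n => span R ({a n} : Set R)) :
    sSup {L : Submodule R (R ⧸ jrad R) | IsSimpleModule R L} = ⊤ := by
  set π := (jrad R).mkQ with hπ
  set Soc := sSup {L : Submodule R (R ⧸ jrad R) | IsSimpleModule R L} with hSoc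
  by_contra hne
  have hmk_smul : ∀ (s w : R), π (s * w) = s • π w := by
    intro s w
    rw [← smul_eq_mul, map_smul]
  have step : ∀ (g : R) (C : Submodule R (R ⧸ jrad R)),
      π (g * g) = π g → C ≤ Soc → C ⊔ span R {π g} = ⊤ →
      ∃ (g' : R) (C' : Submodule R (R ⧸ jrad R)), π (g' * g') = π g' ∧ C' ≤ Soc ∧
        C' ⊔ span R {π g'} = ⊤ ∧ span R {π g'} < span R {π g} := by
    intro g C hgg hCS hCtop
    have hgne : span R ({π g} : Set (R ⧸ jrad R)) ≠ ⊥ := by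
      intro hbot
      apply hne
      rw [hSoc]
      apply top_unique
      rw [← hCtop, hbot, sup_bot_eq]
      exact hCS
    obtain ⟨L, hLle, hLsimple⟩ := exists_simple_le_of_ne_bot hm (jrad R) _ hgne
    haveI := hLsimple
    have hLne : L ≠ ⊥ := Submodule.nontrivial_iff_ne_bot.mp (IsSimpleModule.nontrivial R L)
    obtain ⟨e, heL, hee, hene, hespan⟩ := simple_gen_idem L hLsimple
    have hegmem : π e ∈ span R {π g} := hLle heL
    obtain ⟨s, hs⟩ := mem_span_singleton.mp hegmem
    have hesg : π e = π (s * g) := by rw [hmk_smul, hs]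
    have hegg : π (e * g) = π e := by
      have h1 : π (e * g) = π ((s * g) * g) := mkJ_mul_congr_right g hesg
      have h2 : π ((s * g) * g) = π (s * g) := by
        rw [mul_assoc]
        exact mkJ_mul_congr_left s hgg
      rw [h1, h2, ← hesg]
    set g' := g - g * e with hg'def
    -- π (g' * g) = π g'
    have hgeg : π ((g * e) * g) = π (g * e) := by
      rw [mul_assoc]
      exact mkJ_mul_congr_left g hegg
    have hg'g : π (g' * g) = π g' := by
      have hexp : g' * g = g * g - (g * e) * g := by rw [hg'def]; noncomm_ring
      rw [hexp, map_sub, hgg, hgeg, ← map_sub]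
    -- idempotency of g'
    have hgee : π ((g * e) * e) = π (g * e) := by
      have h1 : (g * e) * e = g * (e * e) := by noncomm_ring
      rw [h1]
      exact mkJ_mul_congr_left g hee
    have hgegge : π ((g * e) * (g * e)) = π (g * e) := by
      have h1 : (g * e) * (g * e) = ((g * e) * g) * e := by noncomm_ring
      rw [h1]
      have h2 : π (((g * e) * g) * e) = π ((g * e) * e) := mkJ_mul_congr_right e hgeg
      rw [h2, hgee]
    have hggE : π (g * (g * e)) = π (g * e) := by
      have h1 : g * (g * e) = (g * g) * e := by noncomm_ring
      rw [h1]
      exact mkJ_mul_congr_right e hgg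
    have hg'g' : π (g' * g') = π g' := by
      have hexp : g' * g' = (g * g - g * (g * e)) - ((g * e) * g - (g * e) * (g * e)) := by
        rw [hg'def]; noncomm_ring
      rw [hexp, map_sub, map_sub, map_sub, hgg, hggE, hgeg, hgegge, sub_self, sub_zero,
        ← map_sub]
    -- span inclusion
    have hsple : span R ({π g'} : Set (R ⧸ jrad R)) ≤ span R {π g} := by
      rw [span_singleton_le_iff_mem, ← hg'g, hmk_smul]
      exact Submodule.smul_mem _ _ (mem_span_singleton_self _)
    -- decomposition span {π g} = L ⊔ span {π g'}
    have hgdec : g = g' + g * e := by rw [hg'def]; noncomm_ring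
    have hsum : span R ({π g} : Set (R ⧸ jrad R)) = L ⊔ span R {π g'} := by
      apply le_antisymm
      · rw [span_singleton_le_iff_mem]
        have hgeq : g = g * e + g' := by rw [hg'def]; noncomm_ring
        have : π g = π (g * e) + π g' := by
          conv_lhs => rw [hgeq]
          rw [map_add]
        rw [this]
        apply Submodule.add_mem
        · apply Submodule.mem_sup_left
          rw [hmk_smul]
          exact Submodule.smul_mem _ _ heL
        · exact Submodule.mem_sup_right (mem_span_singleton_self _)
      · exact sup_le hLle hsple
    -- disjointness L ⊓ span {π g'} = ⊥
    have hg'e : π (g' * e) = 0 := by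
      have hexp : g' * e = g * e - (g * e) * e := by rw [hg'def]; noncomm_ring
      rw [hexp, map_sub, hgee, sub_self]
    have hdisj : L ⊓ span R {π g'} = ⊥ := by
      rw [eq_bot_iff]
      rintro z ⟨hzL, hzg'⟩
      rw [← hespan] at hzL
      obtain ⟨t, ht⟩ := mem_span_singleton.mp hzL
      obtain ⟨t', ht'⟩ := mem_span_singleton.mp hzg'
      have hz1 : qrmul e z = z := by
        rw [← ht, map_smul, qrmul_mk, hee, ht]
      have hz2 : qrmul e z = 0 := by
        rw [← ht', map_smul, qrmul_mk, hg'e, smul_zero]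
      rw [Submodule.mem_bot, ← hz1, hz2]
    have hstrict : span R ({π g'} : Set (R ⧸ jrad R)) < span R {π g} := by
      refine lt_of_le_of_ne hsple fun heq => hLne ?_
      have h1 : L ≤ span R {π g} := by rw [hsum]; exact le_sup_left
      have h2 : L ≤ span R {π g'} := by rw [heq]; exact h1
      rw [← le_bot_iff, ← hdisj]
      exact le_inf le_rfl h2
    refine ⟨g', C ⊔ L, hg'g', sup_le hCS (le_sSup hLsimple), ?_, hstrict⟩
    rw [sup_assoc, ← hsum, hCtop]
  -- iterate the step to get an infinite strictly descending chain
  have hinit1 : π ((1 : R) * 1) = π 1 := by rw [one_mul]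
  have hinit2 : (⊥ : Submodule R (R ⧸ jrad R)) ≤ Soc := bot_le
  have hinit3 : (⊥ : Submodule R (R ⧸ jrad R)) ⊔ span R {π 1} = ⊤ := by
    rw [bot_sup_eq, eq_top_iff]
    intro z _
    obtain ⟨r, hr⟩ := (jrad R).mkQ_surjective z
    have : z = r • π 1 := by rw [← hr, ← hmk_smul, mul_one]
    rw [this]
    exact Submodule.smul_mem _ _ (mem_span_singleton_self _)
  set St := {p : R × Submodule R (R ⧸ jrad R) //
    π (p.1 * p.1) = π p.1 ∧ p.2 ≤ Soc ∧ p.2 ⊔ span R {π p.1} = ⊤} with hSt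
  have hstep' : ∀ t : St, ∃ t' : St, span R {π t'.1.1} < span R {π t.1.1} := by
    rintro ⟨⟨g, C⟩, h1, h2, h3⟩
    obtain ⟨g', C', k1, k2, k3, k4⟩ := step g C h1 h2 h3
    exact ⟨⟨⟨g', C'⟩, k1, k2, k3⟩, k4⟩
  choose f hf using hstep'
  let t0 : St := ⟨⟨1, ⊥⟩, hinit1, hinit2, hinit3⟩
  apply dcc_cyclic_quot hm (jrad R)
  refine ⟨fun n => π ((f^[n] t0).1.1), strictAnti_nat_of_succ_lt fun n => ?_⟩
  simp only [Function.iterate_succ_apply']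
  exact hf _

end SocTop

section FinSimples

variable {R : Type u} [Ring R]

theorem fin_simples (hm : ¬ ∃ a : ℕ → R, StrictAnti fun n => span R ({a n} : Set R)) :
    ∃ (k : ℕ) (V : Fin k → Submodule R (R ⧸ jrad R)),
      (∀ i, IsSimpleModule R (V i)) ∧
      ∀ (T : Type u) [AddCommGroup T] [Module R T], IsSimpleModule R T →
        ∃ i, Nonempty (T ≃ₗ[R] V i) := by
  set π := (jrad R).mkQ with hπ
  have htop := soc_jrad_top (R := R) hm
  have h1top : span R ({π 1} : Set (R ⧸ jrad R)) = ⊤ := by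
    rw [eq_top_iff]
    intro z _
    obtain ⟨r, hr⟩ := (jrad R).mkQ_surjective z
    have : z = r • π 1 := by rw [← hr, ← map_smul, smul_eq_mul, mul_one]
    rw [this]
    exact Submodule.smul_mem _ _ (mem_span_singleton_self _)
  have hcompact := Submodule.singleton_span_isCompactElement (R := R) (π 1)
  obtain ⟨t, hts, hle⟩ := (CompleteLattice.isCompactElement_iff_exists_le_sSup_of_le_sSup _ _).mp hcompact {L : Submodule R (R ⧸ jrad R) | IsSimpleModule R L}
    (by rw [htop, ← h1top])
  refine ⟨t.card, fun i => t.equivFin.symm i, fun i => hts (t.equivFin.symm i).2, ?_⟩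
  have htopt : ⨆ i : Fin t.card, ((t.equivFin.symm i : Submodule R (R ⧸ jrad R))) = ⊤ := by
    apply top_unique
    rw [← h1top]
    refine le_trans hle ?_
    rw [Finset.sup_id_eq_sSup, sSup_eq_iSup']
    exact le_of_eq (t.equivFin.symm.iSup_comp (g := fun x : ↥t => (x : Submodule R (R ⧸ jrad R)))).symm
  intro T _ _ hT
  haveI := hT
  haveI : Nontrivial T := IsSimpleModule.nontrivial R T
  obtain ⟨t0, ht0⟩ := exists_ne (0 : T)
  set φ := LinearMap.toSpanSingleton R T t0 with hφdef
  have hJker : jrad R ≤ LinearMap.ker φ := by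
    intro x hx
    rw [LinearMap.mem_ker, hφdef, LinearMap.toSpanSingleton_apply]
    exact jrad_smul_simple hT hx t0
  set φ' := (jrad R).liftQ φ hJker with hφ'def
  have hφ'mk : ∀ z : R, φ' (π z) = z • t0 := fun z => rfl
  have hsurj' : Function.Surjective φ' := by
    intro y
    obtain ⟨x, hx⟩ := IsSimpleModule.toSpanSingleton_surjective R ht0 y
    exact ⟨π x, by rw [hφ'mk]; exact hx⟩
  have hex : ∃ i, Submodule.map φ' ((t.equivFin.symm i : Submodule R (R ⧸ jrad R))) ≠ ⊥ := by
    by_contra hall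
    push_neg at hall
    have hmaptop : Submodule.map φ' ⊤ = ⊥ := by
      rw [← htopt, Submodule.map_iSup]
      simp [hall]
    rw [Submodule.map_top, LinearMap.range_eq_top.mpr hsurj'] at hmaptop
    exact ht0 (by simpa using (Submodule.eq_bot_iff _).mp hmaptop t0 trivial)
  obtain ⟨i, hi⟩ := hex
  set Vi := (t.equivFin.symm i : Submodule R (R ⧸ jrad R)) with hVi
  haveI : IsSimpleModule R Vi := hts (t.equivFin.symm i).2
  set ψ := φ'.comp Vi.subtype with hψ
  have hrangeψ : LinearMap.range ψ = Submodule.map φ' Vi := by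
    rw [hψ, LinearMap.range_comp, Submodule.range_subtype]
  have hrtop : LinearMap.range ψ = ⊤ := by
    rcases eq_bot_or_eq_top (LinearMap.range ψ) with h | h
    · exact absurd (hrangeψ ▸ h) hi
    · exact h
  have hkbot : LinearMap.ker ψ = ⊥ := by
    rcases eq_bot_or_eq_top (LinearMap.ker ψ) with h | h
    · exact h
    · exfalso
      apply hi
      rw [← hrangeψ, LinearMap.range_eq_bot.mpr (LinearMap.ker_eq_top.mp h)]
  exact ⟨i, ⟨(LinearEquiv.ofBijective ψ
    ⟨LinearMap.ker_eq_bot.mp hkbot, LinearMap.range_eq_top.mp hrtop⟩).symm⟩⟩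

end FinSimples

section SocArtinian

variable {R : Type u} [Ring R]

theorem isArtinian_of_isSimpleModule {M : Type u} [AddCommGroup M] [Module R M]
    (h : IsSimpleModule R M) : IsArtinian R M := by
  haveI := h
  rw [isArtinian_iff]
  constructor
  intro a
  have hb : Acc (· < ·) (⊥ : Submodule R M) :=
    Acc.intro _ fun y hy => absurd hy not_lt_bot
  rcases eq_bot_or_eq_top a with rfl | rfl
  · exact hb
  · exact Acc.intro _ fun y hy => by
      rcases eq_bot_or_eq_top y with rfl | rfl
      · exact hb
      · exact absurd hy (lt_irrefl _)

theorem soc_artinian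
    (hm : ¬ ∃ a : ℕ → R, StrictAnti fun n => span R ({a n} : Set R))
    (hd : ∀ (N : Submodule R R) (P : Submodule R N), ¬ BadFam R (N ⧸ P))
    (K : Submodule R R) :
    IsArtinian R ↥(sSup {L : Submodule R (R ⧸ K) | IsSimpleModule R L}) := by
  classical
  set Soc := sSup {L : Submodule R (R ⧸ K) | IsSimpleModule R L} with hSocDef
  set S := {L : Submodule R (R ⧸ K) | IsSimpleModule R L} with hSdef
  have hSle : ∀ L ∈ S, L ≤ Soc := fun L hL => le_sSup hL
  -- the family of simples of ↥Soc obtained by pulling back elements of S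
  have hpull_simple : ∀ (L : Submodule R (R ⧸ K)) (hL : L ∈ S) ,
      IsSimpleModule R (Submodule.comap Soc.subtype L) := by
    intro L hL
    haveI : IsSimpleModule R L := hL
    exact IsSimpleModule.congr (Submodule.comapSubtypeEquivOfLe (hSle L hL))
  have hpull_sup : ⨆ (L : ↥S), Submodule.comap Soc.subtype (L : Submodule R (R ⧸ K)) = ⊤ := by
    apply Submodule.map_injective_of_injective (Submodule.injective_subtype Soc)
    rw [Submodule.map_iSup, Submodule.map_subtype_top]
    have : ∀ L : ↥S, Submodule.map Soc.subtype (Submodule.comap Soc.subtype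
        (L : Submodule R (R ⧸ K))) = (L : Submodule R (R ⧸ K)) := by
      intro L
      rw [Submodule.map_comap_subtype]
      exact inf_eq_right.mpr (hSle L L.2)
    rw [iSup_congr this]
    rw [hSocDef, sSup_eq_iSup']
  have hsemis : sSup {m : Submodule R Soc | IsSimpleModule R m} = ⊤ := by
    apply top_unique
    rw [← hpull_sup]
    exact iSup_le fun L => le_sSup (hpull_simple L L.2)
  have hatoms : sSup {a : Submodule R Soc | IsAtom a} = ⊤ := by
    rw [← hsemis]
    congr 1
    ext m
    simp only [Set.mem_setOf_eq]
    exact isSimpleModule_iff_isAtom.symm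
  obtain ⟨s, hsind, hstop, hsatom⟩ :=
    exists_sSupIndep_of_sSup_atoms_eq_top hatoms
  by_cases hfin : s.Finite
  · -- finite: Soc is a finite sup of simple (hence Artinian) submodules
    haveI := hfin.to_subtype
    haveI : ∀ x : ↥s, IsArtinian R ↥(x : Submodule R Soc) := fun x =>
      isArtinian_of_isSimpleModule (isSimpleModule_iff_isAtom.mpr (hsatom x.2))
    have h2 : (⨆ x : ↥s, (x : Submodule R Soc)) = ⊤ := by
      rw [← sSup_eq_iSup', hstop]
    haveI h3 : IsArtinian R (⊤ : Submodule R Soc) :=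
      h2 ▸ (inferInstance : IsArtinian R ↥(⨆ x : ↥s, (x : Submodule R Soc)))
    exact isArtinian_of_linearEquiv (Submodule.topEquiv (R := R) (M := ↥Soc))
  · -- infinite: build a bad family, contradiction
    exfalso
    obtain ⟨k, V, hVsimple, hViso⟩ := fin_simples hm
    have hclass : ∀ L : ↥s, ∃ i, Nonempty (↥(L : Submodule R Soc) ≃ₗ[R] V i) := fun L =>
      hViso _ (isSimpleModule_iff_isAtom.mpr (hsatom L.2))
    choose c hc using hclass
    haveI : Infinite ↥s := Set.infinite_coe_iff.mpr hfin
    obtain ⟨i0, hfib⟩ := Finite.exists_infinite_fiber c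
    set s' : Set (Submodule R Soc) := Subtype.val '' (c ⁻¹' {i0}) with hs'def
    have hs'inf : s'.Infinite :=
      Set.Infinite.image (Set.injOn_of_injective Subtype.val_injective)
        (Set.infinite_coe_iff.mp hfib)
    have hs'sub : s' ⊆ s := by
      rintro _ ⟨L, _, rfl⟩
      exact L.2
    have hs'ind : sSupIndep s' := hsind.mono hs'sub
    have hs'iso : ∀ L ∈ s', Nonempty (↥L ≃ₗ[R] V i0) := by
      rintro _ ⟨L0, hL0, rfl⟩
      have : c L0 = i0 := hL0
      exact this ▸ hc L0
    set W : Submodule R Soc := sSup s' with hWdef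
    have hleW : ∀ L ∈ s', L ≤ W := fun L hL => le_sSup hL
    -- build the bad family on ↥W
    have hbadW : BadFam R ↥W := by
      refine ⟨↥s', hs'inf.to_subtype, fun L => Submodule.comap W.subtype (L : Submodule R Soc),
        ?_, ?_, ?_, ?_⟩
      · -- independence
        intro L
        rw [disjoint_iff]
        apply Submodule.map_injective_of_injective (Submodule.injective_subtype W)
        rw [Submodule.map_inf _ (Submodule.injective_subtype W), Submodule.map_bot]
        simp only [Submodule.map_iSup]
        have hmapc : ∀ L' : ↥s', Submodule.map W.subtype (Submodule.comap W.subtype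
            (L' : Submodule R Soc)) = (L' : Submodule R Soc) := by
          intro L'
          rw [Submodule.map_comap_subtype]
          exact inf_eq_right.mpr (hleW _ L'.2)
        rw [hmapc L]
        have hle2 : (⨆ (L' : ↥s') (_ : L' ≠ L), Submodule.map W.subtype
            (Submodule.comap W.subtype (L' : Submodule R Soc))) ≤ sSup (s' \ {(L : Submodule R Soc)}) := by
          refine iSup_le fun L' => iSup_le fun hne => ?_
          rw [hmapc L']
          refine le_sSup ⟨L'.2, ?_⟩
          simp only [Set.mem_singleton_iff]
          exact fun h => hne (Subtype.ext h)
        exact le_bot_iff.mp (le_trans (inf_le_inf_left _ hle2) (le_of_eq (hs'ind L.2).eq_bot))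
      · -- iSup = ⊤
        apply Submodule.map_injective_of_injective (Submodule.injective_subtype W)
        rw [Submodule.map_iSup, Submodule.map_subtype_top]
        have hmapc : ∀ L' : ↥s', Submodule.map W.subtype (Submodule.comap W.subtype
            (L' : Submodule R Soc)) = (L' : Submodule R Soc) := by
          intro L'
          rw [Submodule.map_comap_subtype]
          exact inf_eq_right.mpr (hleW _ L'.2)
        rw [iSup_congr hmapc, hWdef, sSup_eq_iSup']
      · -- simple
        intro L
        have h1 : IsSimpleModule R ↥(L : Submodule R Soc) :=
          isSimpleModule_iff_isAtom.mpr (hsatom (hs'sub L.2))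
        exact @IsSimpleModule.congr _ _ _ (_) (_) _ (_) (_) (Submodule.comapSubtypeEquivOfLe (hleW _ L.2)) h1
      · -- pairwise isomorphic
        intro L L'
        obtain ⟨f⟩ := hs'iso _ L.2
        obtain ⟨f'⟩ := hs'iso _ L'.2
        exact ⟨((Submodule.comapSubtypeEquivOfLe (hleW _ L.2)).trans f).trans
          (f'.symm.trans (Submodule.comapSubtypeEquivOfLe (hleW _ L'.2)).symm)⟩
    -- transport to a subfactor of R
    have hbadW2 : BadFam R ↥(Submodule.map Soc.subtype W) :=
      hbadW.congr (Submodule.equivMapOfInjective Soc.subtype (Submodule.injective_subtype Soc) W)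
    obtain ⟨N, P, ⟨e2⟩⟩ := exists_subfactor_of_quot_submodule K (Submodule.map Soc.subtype W)
    exact hd N P (hbadW2.congr e2.symm)

end SocArtinian

section MainThm

variable {R : Type u} [Ring R]

theorem artinian_of_dcc_of_dist
    (hm : ¬ ∃ a : ℕ → R, StrictAnti fun n => span R ({a n} : Set R))
    (hd : ∀ (N : Submodule R R) (P : Submodule R N), ¬ BadFam R (N ⧸ P)) :
    IsArtinian R R := by
  rw [← monotone_stabilizes_iff_artinian]
  intro f
  set N : ℕ → Submodule R R := fun n => OrderDual.ofDual (f n) with hN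
  have hNanti : ∀ {i j}, i ≤ j → N j ≤ N i := fun hij => f.monotone hij
  set K := ⨅ i, N i with hK
  have hKle : ∀ i, K ≤ N i := fun i => iInf_le _ i
  set Soc := sSup {L : Submodule R (R ⧸ K) | IsSimpleModule R L} with hSoc
  haveI hart : IsArtinian R ↥Soc := soc_artinian hm hd K
  set N' : ℕ → Submodule R (R ⧸ K) := fun n => (N n).map K.mkQ with hN'
  have hN'anti : ∀ {i j}, i ≤ j → N' j ≤ N' i := fun hij => Submodule.map_mono (hNanti hij)
  have hgmono : Monotone fun n => OrderDual.toDual ((N' n).comap Soc.subtype) := by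
    intro i j hij
    exact Submodule.comap_mono (hN'anti hij)
  obtain ⟨n, hn⟩ := IsArtinian.monotone_stabilizes
    (⟨fun n => OrderDual.toDual ((N' n).comap Soc.subtype), hgmono⟩ : ℕ →o (Submodule R ↥Soc)ᵒᵈ)
  have hstab : ∀ m, n ≤ m → Soc ⊓ N' n = Soc ⊓ N' m := by
    intro m hm'
    have := hn m hm'
    have h2 : (N' n).comap Soc.subtype = (N' m).comap Soc.subtype := congrArg OrderDual.ofDual this
    have := congrArg (Submodule.map Soc.subtype) h2
    rwa [Submodule.map_comap_subtype, Submodule.map_comap_subtype] at this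
  have hinf_bot : (⨅ i, N' i) = ⊥ := by
    rw [eq_bot_iff]
    intro x hx
    obtain ⟨y, hy⟩ := K.mkQ_surjective x
    have hyN : ∀ i, y ∈ N i := by
      intro i
      have h1 : y ∈ (N' i).comap K.mkQ := by
        rw [Submodule.mem_comap, hy]
        exact (Submodule.mem_iInf _).mp hx i
      rw [hN'] at h1
      rw [Submodule.comap_map_eq, Submodule.ker_mkQ, sup_eq_left.mpr (hKle i)] at h1
      exact h1
    have hyK : y ∈ K := (Submodule.mem_iInf _).mpr hyN
    rw [Submodule.mem_bot, ← hy, Submodule.mkQ_apply, Submodule.Quotient.mk_eq_zero]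
    exact hyK
  have hVbot : Soc ⊓ N' n = ⊥ := by
    rw [eq_bot_iff, ← hinf_bot]
    refine le_iInf fun i => ?_
    rcases le_total i n with h | h
    · exact inf_le_right.trans (hN'anti h)
    · rw [hstab i h]
      exact inf_le_right
  have hN'bot : ∀ m, n ≤ m → N' m = ⊥ := by
    intro m hm'
    by_contra hne
    obtain ⟨L, hLle, hLsimple⟩ := exists_simple_le_of_ne_bot hm K (N' m) hne
    haveI := hLsimple
    have hLne : L ≠ ⊥ := Submodule.nontrivial_iff_ne_bot.mp (IsSimpleModule.nontrivial R L)
    apply hLne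
    rw [← le_bot_iff, ← hVbot, hstab m hm']
    exact le_inf (le_sSup hLsimple) hLle
  have hNK : ∀ m, n ≤ m → N m = K := by
    intro m hm'
    refine le_antisymm ?_ (hKle m)
    intro x hx
    have : K.mkQ x ∈ N' m := Submodule.mem_map_of_mem hx
    rw [hN'bot m hm', Submodule.mem_bot, Submodule.mkQ_apply,
      Submodule.Quotient.mk_eq_zero] at this
    exact this
  refine ⟨n, fun m hm' => ?_⟩
  have h1 : N n = K := hNK n le_rfl
  have h2 : N m = K := hNK m hm'
  have : N n = N m := h1.trans h2.symm
  exact OrderDual.ofDual_inj.mp this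

end MainThm

section OpEquiv

variable (A : Type u) [Ring A]

/-- `A` with its right-module structure over `Aᵐᵒᵖ` is isomorphic to the left regular
module `Aᵐᵒᵖ` over `Aᵐᵒᵖ`. -/
def opEquiv : A ≃ₗ[Aᵐᵒᵖ] Aᵐᵒᵖ :=
  { MulOpposite.opAddEquiv with
    map_smul' := fun r a => by
      show MulOpposite.op (r • a) = r * MulOpposite.op a
      rcases r with ⟨r⟩
      rfl }

end OpEquiv


theorem stmt5 (A : Type u) [Ring A] :
    (IsAleph0Distributive Aᵐᵒᵖ A ∧ MinPrincipalRight A) ↔ IsArtinian Aᵐᵒᵖ A := by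
  constructor
  · rintro ⟨hdist, hmin⟩
    set e := opEquiv A with he
    have hm : ¬ ∃ a : ℕ → Aᵐᵒᵖ, StrictAnti fun n => span Aᵐᵒᵖ ({a n} : Set Aᵐᵒᵖ) := by
      rintro ⟨a, ha⟩
      apply hmin
      refine ⟨fun n => e.symm (a n), fun i j hij => ?_⟩
      have h1 : ∀ n, span Aᵐᵒᵖ ({e.symm (a n)} : Set A)
          = (span Aᵐᵒᵖ ({a n} : Set Aᵐᵒᵖ)).map (e.symm : Aᵐᵒᵖ →ₗ[Aᵐᵒᵖ] A) := by
        intro n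
        rw [Submodule.map_span, Set.image_singleton]
        rfl
      simp only [h1]
      refine lt_of_le_of_ne (Submodule.map_mono (ha hij).le) fun hcontra => (ha hij).ne ?_
      exact Submodule.map_injective_of_injective e.symm.injective hcontra
    have hd : ∀ (N : Submodule Aᵐᵒᵖ Aᵐᵒᵖ) (P : Submodule Aᵐᵒᵖ N), ¬ BadFam Aᵐᵒᵖ (N ⧸ P) := by
      intro N P hbad
      obtain ⟨N', P', ⟨e2⟩⟩ := exists_subfactor_congr e.symm N P
      obtain ⟨ι, hι, T, h1, h2, h3, h4⟩ := hbad.congr e2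
      exact hdist ⟨N', P', ι, hι, T, h1, h2, h3, h4⟩
    have hart : IsArtinian Aᵐᵒᵖ Aᵐᵒᵖ := artinian_of_dcc_of_dist hm hd
    exact isArtinian_of_linearEquiv e.symm
  · intro hart
    constructor
    · rintro ⟨N, P, ι, hι, T, hind, htop, hsimp, -⟩
      haveI := hι
      haveI : IsArtinian Aᵐᵒᵖ (N ⧸ P) := inferInstance
      have hne : ∀ i, T i ≠ ⊥ := by
        intro i h
        haveI := hsimp i
        have hnt := IsSimpleModule.nontrivial Aᵐᵒᵖ (T i)
        rw [h] at hnt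
        rcases hnt.exists_pair_ne with ⟨⟨x, hx⟩, ⟨y, hy⟩, hxy⟩
        rw [Submodule.mem_bot] at hx hy
        exact hxy (Subtype.ext (hx.trans hy.symm))
      haveI : Finite ι := WellFoundedLT.finite_of_iSupIndep hind hne
      exact not_finite ι
    · rintro ⟨a, ha⟩
      exact (RelEmbedding.natGT (fun n => span Aᵐᵒᵖ ({a n} : Set A)) fun n =>
        ha (Nat.lt_succ_self n)).not_wellFounded wellFounded_lt
end

section
/- Let M be an ℵ₀-distributive right module over a ring A such that the set of isomorphism classes of simple subfactors of M is finite (for example, this holds when A is semilocal). Then M is quotient finite-dimensional, i.e., no quotient of M contains an infinite direct sum of nonzero submodules. -/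
universe u

open Submodule

section Aux

variable {R M : Type u} [Ring R] [AddCommGroup M] [Module R M]

/-- The canonical generator of `span R {x}` spans it. -/
private lemma span_singleton_gen (x : M) :
    span R {(⟨x, Submodule.mem_span_singleton_self x⟩ : ↥(span R ({x} : Set M)))} = ⊤ := by
  rw [eq_top_iff]
  rintro ⟨y, hy⟩ -
  obtain ⟨c, hc⟩ := Submodule.mem_span_singleton.mp hy
  exact Submodule.mem_span_singleton.mpr ⟨c, Subtype.ext hc⟩

/-- A nonzero cyclic module has a maximal submodule. -/
private lemma exists_coatom_of_gen {N : Type u} [AddCommGroup N] [Module R N]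
    (g : N) (hg : g ≠ 0) (hgen : span R {g} = ⊤) :
    ∃ W : Submodule R N, IsCoatom W := by
  obtain ⟨m, -, hm⟩ := zorn_le_nonempty₀ {W : Submodule R N | g ∉ W}
    (fun c hcs hchain y hy => by
      refine ⟨sSup c, fun hgc => ?_, fun z hz => le_sSup hz⟩
      obtain ⟨W, hWc, hgW⟩ := (Submodule.mem_sSup_of_directed ⟨y, hy⟩
        hchain.directedOn).mp hgc
      exact hcs hWc hgW) ⊥ (by simpa using hg)
  refine ⟨m, fun hmt => hm.prop (hmt ▸ Submodule.mem_top), fun b hb => ?_⟩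
  by_cases hgb : g ∈ b
  · rw [eq_top_iff, ← hgen, Submodule.span_singleton_le_iff_mem]; exact hgb
  · exact absurd (hm.le_of_ge hgb hb.1) hb.2

/-- Any surjective image of a submodule of `M ⧸ Q` is a subfactor of `M`. -/
private lemma subfactor_equiv (Q : Submodule R M) (D : Submodule R (M ⧸ Q))
    {Z : Type u} [AddCommGroup Z] [Module R Z] (f : ↥D →ₗ[R] Z)
    (hf : Function.Surjective f) :
    ∃ (N' : Submodule R M) (P' : Submodule R ↥N'), Nonempty ((↥N' ⧸ P') ≃ₗ[R] Z) := by
  set N' := D.comap Q.mkQ with hN'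
  have hmap : ∀ x : ↥N', Q.mkQ x.1 ∈ D := fun x => x.2
  let h : ↥N' →ₗ[R] ↥D := (Q.mkQ.domRestrict N').codRestrict D hmap
  have hh : Function.Surjective h := by
    rintro ⟨d, hd⟩
    obtain ⟨m, rfl⟩ := Q.mkQ_surjective d
    exact ⟨⟨m, hd⟩, rfl⟩
  exact ⟨N', LinearMap.ker (f ∘ₗ h),
    ⟨LinearMap.quotKerEquivOfSurjective _ (hf.comp hh)⟩⟩

/-- Key lemma: an `ℵ₀`-distributive module with finitely many simple subfactors is q.f.d. -/
private theorem key (h0 : IsAleph0Distributive R M)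
    (hfin : FinitelyManySimpleSubfactors R M) :
    ∀ Q : Submodule R M,
      ¬ ∃ (ι : Type u) (_ : Infinite ι) (T : ι → Submodule R (M ⧸ Q)),
        iSupIndep T ∧ ∀ i, T i ≠ ⊥ := by
  classical
  rintro Q ⟨ι, hι, T, hTind, hTne⟩
  -- choose a nonzero element of each `T i`
  have hx : ∀ i, ∃ x : M ⧸ Q, x ∈ T i ∧ x ≠ 0 := by
    intro i
    obtain ⟨x, hx1, hx2⟩ := Submodule.exists_mem_ne_zero_of_ne_bot (hTne i)
    exact ⟨x, hx1, hx2⟩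
  choose x hx1 hx2 using hx
  set C : ι → Submodule R (M ⧸ Q) := fun i => span R {x i} with hC
  have hCle : ∀ i, C i ≤ T i := fun i =>
    (Submodule.span_singleton_le_iff_mem _ _).mpr (hx1 i)
  have hCind : iSupIndep C := hTind.mono hCle
  -- a maximal submodule of each `C i`
  have hW : ∀ i, ∃ W : Submodule R ↥(C i), IsCoatom W := by
    intro i
    refine exists_coatom_of_gen (⟨x i, Submodule.mem_span_singleton_self (x i)⟩ : ↥(C i))
      (fun h => hx2 i (congrArg Subtype.val h)) (span_singleton_gen (x i))
  choose W hWcoatom using hW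
  have hSsimple : ∀ i, IsSimpleModule R (↥(C i) ⧸ W i) := fun i =>
    isSimpleModule_iff_isCoatom.mpr (hWcoatom i)
  -- classify the simple subfactors `C i ⧸ W i`
  obtain ⟨n, Nf, Pf, hclass⟩ := hfin
  have hiso : ∀ i : ι, ∃ j : Fin n,
      Nonempty ((↥(C i) ⧸ W i) ≃ₗ[R] (↥(Nf j) ⧸ Pf j)) := by
    intro i
    obtain ⟨N', P', ⟨e⟩⟩ := subfactor_equiv Q (C i) (W i).mkQ (Submodule.mkQ_surjective _)
    haveI := hSsimple i
    obtain ⟨j, ⟨u⟩⟩ := hclass N' P' (IsSimpleModule.congr e)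
    exact ⟨j, ⟨e.symm.trans u⟩⟩
  choose φ hφ using hiso
  obtain ⟨j0, hj0⟩ := Finite.exists_infinite_fiber φ
  haveI : Infinite ↥(φ ⁻¹' {j0}) := hj0
  set ι' : Type u := ↥(φ ⁻¹' {j0}) with hι'
  have hF : ∀ i : ι', Nonempty ((↥(C i.1) ⧸ W i.1) ≃ₗ[R] (↥(Nf j0) ⧸ Pf j0)) := by
    rintro ⟨i, hi⟩
    have h2 : φ i = j0 := hi
    exact h2 ▸ hφ i
  -- the direct sum of the simple quotients
  set C' : ι' → Submodule R (M ⧸ Q) := fun i => C i.1 with hC'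
  set S' : ι' → Type u := fun i => ↥(C' i) ⧸ W i.1 with hS'
  letI : ∀ i, AddCommGroup (S' i) := fun i => Submodule.Quotient.addCommGroup (W i.1)
  letI : ∀ i, Module R (S' i) := fun i => Submodule.Quotient.module (W i.1)
  set L : (Π₀ i : ι', ↥(C' i)) →ₗ[R] M ⧸ Q :=
    DFinsupp.lsum ℕ (M := fun i : ι' => ↥(C' i)) (fun i => (C' i).subtype) with hL
  have hLinj : Function.Injective L :=
    (hCind.comp Subtype.val_injective).dfinsupp_lsum_injective
  set e : (Π₀ i : ι', ↥(C' i)) ≃ₗ[R] ↥(LinearMap.range L) :=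
    LinearEquiv.ofInjective L hLinj with he
  set g : (Π₀ i : ι', ↥(C' i)) →ₗ[R] (Π₀ i : ι', S' i) :=
    DFinsupp.mapRange.linearMap (fun i : ι' => (W i.1).mkQ) with hg
  have hgsing : ∀ (i : ι') (c : ↥(C' i)),
      g (DFinsupp.single i c) = DFinsupp.single i ((W i.1).mkQ c) := by
    intro i c
    simp only [hg, DFinsupp.mapRange.linearMap_apply, DFinsupp.mapRange_single]
  have hgsurj : Function.Surjective g := by
    intro z
    induction z using DFinsupp.induction with
    | h0 => exact ⟨0, map_zero _⟩
    | ha i b f _ _ ih =>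
      obtain ⟨y, rfl⟩ := ih
      obtain ⟨c, rfl⟩ := Submodule.mkQ_surjective _ b
      exact ⟨DFinsupp.single i c + y, by rw [map_add, hgsing]⟩
  have hfsurj : Function.Surjective (g ∘ₗ (e.symm : ↥(LinearMap.range L) →ₗ[R] _)) :=
    hgsurj.comp e.symm.surjective
  obtain ⟨N', P', ⟨e3⟩⟩ := subfactor_equiv Q (LinearMap.range L) _ hfsurj
  -- the component submodules of the direct sum
  set A : ι' → Submodule R (Π₀ i : ι', S' i) := fun j =>
    LinearMap.range (DFinsupp.lsingle (R := R) j) with hA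
  have hsingle_mem : ∀ (j : ι') (b : S' j), DFinsupp.single j b ∈ A j := fun j b =>
    LinearMap.mem_range.mpr ⟨b, DFinsupp.lsingle_apply j b⟩
  have hAsup : ⨆ j, A j = ⊤ := by
    rw [eq_top_iff]
    intro z _
    induction z using DFinsupp.induction with
    | h0 => exact zero_mem _
    | ha i b f _ _ ih => exact add_mem (le_iSup A i (hsingle_mem i b)) (ih Submodule.mem_top)
  have hAind : iSupIndep A := by
    intro i
    rw [disjoint_iff_inf_le]
    rintro z ⟨hz1, hz2⟩
    obtain ⟨b, rfl⟩ := LinearMap.mem_range.mp hz1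
    have hker : (⨆ j, ⨆ _ : j ≠ i, A j) ≤ LinearMap.ker (DFinsupp.lapply (R := R) i) := by
      refine iSup_le fun j => iSup_le fun hj => ?_
      rintro _ ⟨c, rfl⟩
      simp only [LinearMap.mem_ker, DFinsupp.lsingle_apply, DFinsupp.lapply_apply]
      exact DFinsupp.single_eq_of_ne hj.symm
    have hz0 : DFinsupp.lsingle (R := R) i b i = 0 := hker hz2
    have hb : b = 0 := by
      simpa only [DFinsupp.lsingle_apply, DFinsupp.single_eq_same] using hz0
    simp [hb]
  have hsing_inj : ∀ j : ι', Function.Injective (DFinsupp.lsingle (R := R) (M := S') j) := by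
    intro j a b hab
    exact DFinsupp.single_injective (by simpa only [DFinsupp.lsingle_apply] using hab)
  -- transfer everything along `e3.symm`
  set oi : Submodule R (Π₀ i : ι', S' i) ≃o Submodule R (↥N' ⧸ P') :=
    Submodule.orderIsoMapComap (e3.symm : (Π₀ i : ι', S' i) ≃ₗ[R] (↥N' ⧸ P')) with hoi
  set T'' : ι' → Submodule R (↥N' ⧸ P') := fun j => oi (A j) with hT''
  have hT''eq : ∀ j, T'' j = Submodule.map
      (e3.symm : (Π₀ i : ι', S' i) →ₗ[R] (↥N' ⧸ P')) (A j) := fun j => rfl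
  have Φ : ∀ j : ι', ↥(T'' j) ≃ₗ[R] (↥(C' j) ⧸ W j.1) := fun j =>
    ((LinearEquiv.ofEq _ _ (hT''eq j)).trans
      (e3.symm.submoduleMap (A j)).symm).trans
      (LinearEquiv.ofInjective _ (hsing_inj j)).symm
  refine h0 ⟨N', P', ι', inferInstance, T'', ?_, ?_, ?_, ?_⟩
  · exact hAind.map_orderIso oi
  · rw [hT'', ← OrderIso.map_iSup, hAsup, OrderIso.map_top]
  · intro j
    haveI := hSsimple j.1
    exact IsSimpleModule.congr (Φ j)
  · intro i j
    exact ⟨(Φ i).trans ((Classical.choice (hF i)).trans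
      ((Classical.choice (hF j)).symm.trans (Φ j).symm))⟩

end Aux

theorem stmt10 (A M : Type u) [Ring A] [AddCommGroup M] [Module Aᵐᵒᵖ M]
    (h0 : IsAleph0Distributive Aᵐᵒᵖ M) (hfin : FinitelyManySimpleSubfactors Aᵐᵒᵖ M) :
    ∀ Q : Submodule Aᵐᵒᵖ M,
      ¬ ∃ (ι : Type u) (_ : Infinite ι) (T : ι → Submodule Aᵐᵒᵖ (M ⧸ Q)),
        iSupIndep T ∧ ∀ i, T i ≠ ⊥ :=
  key h0 hfin
end

section
/- Let M be an ℵ₀-distributive semi-Artinian right module over a ring A such that the set of isomorphism classes of simple subfactors of M is finite (for example, this holds when A is semilocal). Then M is an Artinian module. -/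
universe u

open Submodule

-- Auxiliary development
section Aux
variable {R M : Type*} [Ring R] [AddCommGroup M] [Module R M]

/-- The canonical equivalence exhibiting a submodule `U` of a quotient `M ⧸ K` as a
subfactor of `M`. -/
noncomputable def subfactorEquiv (K : Submodule R M) (U : Submodule R (M ⧸ K)) :
    ((U.comap K.mkQ) ⧸ (K.comap (U.comap K.mkQ).subtype)) ≃ₗ[R] U :=
  let f : ↥(U.comap K.mkQ) →ₗ[R] M ⧸ K := K.mkQ.comp (U.comap K.mkQ).subtype
  have hker : K.comap (U.comap K.mkQ).subtype = LinearMap.ker f := by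
    rw [LinearMap.ker_comp, Submodule.ker_mkQ]
  have hrange : LinearMap.range f = U := by
    rw [LinearMap.range_comp, Submodule.range_subtype,
      Submodule.map_comap_eq_of_surjective K.mkQ_surjective]
  (Submodule.quotEquivOfEq _ _ hker).trans
    ((f.quotKerEquivRange).trans (LinearEquiv.ofEq _ _ hrange))

/-- In a module whose quotients all contain simple submodules, every nonzero submodule of a
quotient contains a simple submodule. -/
theorem exists_simple_le_of_semiArtinian
    (hsa : ∀ N : Submodule R M, N ≠ ⊤ → ∃ S : Submodule R (M ⧸ N), IsSimpleModule R S)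
    (K : Submodule R M) (X : Submodule R (M ⧸ K)) (hX : X ≠ ⊥) :
    ∃ S : Submodule R (M ⧸ K), S ≤ X ∧ IsSimpleModule R S := by
  -- Zorn: a maximal submodule `Y` with `Y ⊓ X = ⊥`
  obtain ⟨Y, hYmem, hYmax⟩ := zorn_le₀
      {Y : Submodule R (M ⧸ K) | Y ⊓ X = ⊥}
      (fun c hc hchain => by
        rcases c.eq_empty_or_nonempty with rfl | ⟨y, hy⟩
        · exact ⟨⊥, by simp, fun z hz => absurd hz (Set.notMem_empty z)⟩
        · refine ⟨sSup c, ?_, fun z hz => le_sSup hz⟩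
          have hdir : DirectedOn (· ≤ ·) c := hchain.directedOn
          rw [Set.mem_setOf_eq, eq_bot_iff]
          intro z hz
          obtain ⟨W, hWc, hzW⟩ := (Submodule.mem_sSup_of_directed ⟨y, hy⟩ hdir).1 hz.1
          have : z ∈ W ⊓ X := ⟨hzW, hz.2⟩
          rw [hc hWc] at this
          exact this)
  rw [Set.mem_setOf_eq] at hYmem
  -- the corresponding quotient of `M`
  set T : Submodule R M := Y.comap K.mkQ with hT
  have hmapT : T.map K.mkQ = Y := Submodule.map_comap_eq_of_surjective K.mkQ_surjective Y
  have hKT : K ≤ T := fun x hx => by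
    simp only [hT, Submodule.mem_comap]
    have : K.mkQ x = 0 := (Submodule.Quotient.mk_eq_zero K).2 hx
    rw [Submodule.mkQ_apply] at this ⊢
    rw [this]; exact Y.zero_mem
  have hTne : T ≠ ⊤ := by
    intro h
    apply hX
    have : Y = ⊤ := by
      rw [← hmapT, h, Submodule.map_top, Submodule.range_mkQ]
    rw [this, top_inf_eq] at hYmem
    exact hYmem
  obtain ⟨S₀, hS₀⟩ := hsa T hTne
  -- transport `S₀` to a simple submodule `S₁` of `(M ⧸ K) ⧸ Y`
  let e : ((M ⧸ K) ⧸ Y) ≃ₗ[R] M ⧸ T :=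
    (Submodule.quotEquivOfEq _ _ hmapT.symm).trans (Submodule.quotientQuotientEquivQuotient K T hKT)
  let S₁ : Submodule R ((M ⧸ K) ⧸ Y) := S₀.map (e.symm : (M ⧸ T) →ₗ[R] (M ⧸ K) ⧸ Y)
  have hS₁ : IsSimpleModule R S₁ := IsSimpleModule.congr (e.symm.submoduleMap S₀).symm
  have hS₁atom : IsAtom S₁ := (isSimpleModule_iff_isAtom).1 hS₁
  -- `S₁` lies in the image of `X`
  have hW : Y < S₁.comap Y.mkQ := by
    refine lt_of_le_of_ne (fun y hy => ?_) (fun h => ?_)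
    · have : Y.mkQ y = 0 := (Submodule.Quotient.mk_eq_zero Y).2 hy
      rw [Submodule.mem_comap, this]; exact S₁.zero_mem
    · have : S₁ = ⊥ := by
        rw [← Submodule.map_comap_eq_of_surjective Y.mkQ_surjective S₁, ← h]
        rw [eq_bot_iff]
        intro z hz
        obtain ⟨y, hy, rfl⟩ := hz
        have : Y.mkQ y = 0 := (Submodule.Quotient.mk_eq_zero Y).2 hy
        simp [this]
      exact hS₁atom.1 this
  have hWX : (S₁.comap Y.mkQ) ⊓ X ≠ ⊥ := by
    intro h
    exact hW.ne' (le_antisymm (hYmax h hW.le) hW.le)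
  have hS₁le : S₁ ≤ X.map Y.mkQ := by
    obtain ⟨w, hw, hw0⟩ := Submodule.exists_mem_ne_zero_of_ne_bot hWX
    have hwY : w ∉ Y := fun hwy => hw0 (by
      have : w ∈ Y ⊓ X := ⟨hwy, hw.2⟩
      rwa [hYmem, Submodule.mem_bot] at this)
    have hz0 : Y.mkQ w ≠ 0 := fun h => hwY ((Submodule.Quotient.mk_eq_zero Y).1 h)
    have hzmem : Y.mkQ w ∈ S₁ ⊓ X.map Y.mkQ := ⟨hw.1, ⟨w, hw.2, rfl⟩⟩
    by_contra hle
    have hlt : S₁ ⊓ X.map Y.mkQ < S₁ := lt_of_le_of_ne inf_le_left (fun h => hle (h ▸ inf_le_right))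
    have := hS₁atom.2 _ hlt
    rw [this] at hzmem
    exact hz0 hzmem
  -- pull back `S₁` inside `X`
  let g : ↥X →ₗ[R] (M ⧸ K) ⧸ Y := Y.mkQ.comp X.subtype
  have hginj : Function.Injective g := by
    rw [← LinearMap.ker_eq_bot, LinearMap.ker_comp, Submodule.ker_mkQ]
    rw [eq_bot_iff]
    intro x hx
    have : (x : M ⧸ K) ∈ Y ⊓ X := ⟨hx, x.2⟩
    rw [hYmem, Submodule.mem_bot] at this
    simpa [Submodule.mem_bot] using Subtype.ext this
  have hgrange : LinearMap.range g = X.map Y.mkQ := by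
    rw [LinearMap.range_comp, Submodule.range_subtype]
  let S₂ : Submodule R ↥X := S₁.comap g
  have hmapS₂ : S₂.map g = S₁ := by
    rw [Submodule.map_comap_eq, hgrange, inf_eq_right.2 hS₁le]
  have hS₂ : IsSimpleModule R S₂ := by
    have h1 : IsSimpleModule R (S₂.map g) := hmapS₂ ▸ hS₁
    exact IsSimpleModule.congr (Submodule.equivMapOfInjective g hginj S₂)
  refine ⟨S₂.map X.subtype, Submodule.map_subtype_le X S₂, ?_⟩
  exact IsSimpleModule.congr (N := S₂) (Submodule.equivMapOfInjective X.subtype X.injective_subtype S₂).symm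

end Aux

open Submodule

section Aux2
variable {α : Type*} [CompleteLattice α] [IsModularLattice α] [IsCompactlyGenerated α]

omit [IsCompactlyGenerated α] in
theorem supIndep_of_disjoint_prev (f : ℕ → α)
    (h : ∀ n, Disjoint (f n) ((Finset.range n).sup f)) :
    ∀ (n : ℕ) (s : Finset ℕ), s ⊆ Finset.range n → s.SupIndep f := by
  intro n
  induction n with
  | zero => intro s hs; rw [Finset.range_zero, Finset.subset_empty] at hs; subst hs
            exact Finset.supIndep_empty f
  | succ n ih =>
    intro s hs
    by_cases hn : n ∈ s
    · rw [Finset.supIndep_iff_disjoint_erase]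
      intro i hi
      by_cases hin : i = n
      · rw [hin]
        refine (h n).mono_right (Finset.sup_mono fun x hx => ?_)
        have h1x := Finset.mem_of_subset hs (Finset.mem_of_mem_erase hx)
        have h2x : x ≠ n := Finset.ne_of_mem_erase hx
        rw [Finset.mem_range] at h1x ⊢
        omega
      · have hirange : i ∈ Finset.range n := by
          have := Finset.mem_of_subset hs hi
          rw [Finset.mem_range] at this ⊢
          omega
        have herase : (s.erase n) ⊆ Finset.range n := by
          intro x hx
          have := Finset.mem_of_subset hs (Finset.mem_of_mem_erase hx)
          rw [Finset.mem_range] at this ⊢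
          exact lt_of_le_of_ne (Nat.lt_succ_iff.1 this) (Finset.ne_of_mem_erase hx)
        have hsi : ((s.erase n).erase i).sup f ≤ (Finset.range n).sup f :=
          Finset.sup_mono fun x hx => herase (Finset.mem_of_mem_erase hx)
        have h1 : Disjoint (f i) (((s.erase n).erase i).sup f) :=
          (Finset.supIndep_iff_disjoint_erase.1 (ih _ herase)) i (Finset.mem_erase.2 ⟨hin, hi⟩)
        have h2 : Disjoint (f i ⊔ ((s.erase n).erase i).sup f) (f n) :=
          ((h n).mono_right (sup_le (Finset.le_sup hirange) hsi)).symm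
        have h3 : Disjoint (f i) ((((s.erase n).erase i).sup f) ⊔ f n) :=
          h1.disjoint_sup_right_of_disjoint_sup_left h2
        refine h3.mono_right ?_
        have : s.erase i ⊆ insert n ((s.erase n).erase i) := by
          intro x hx
          rcases eq_or_ne x n with rfl | hxn
          · exact Finset.mem_insert_self _ _
          · exact Finset.mem_insert_of_mem (Finset.mem_erase.2 ⟨Finset.ne_of_mem_erase hx,
              Finset.mem_erase.2 ⟨hxn, Finset.mem_of_mem_erase hx⟩⟩)
        refine (Finset.sup_mono this).trans ?_
        rw [Finset.sup_insert, sup_comm]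
    · exact ih s (fun x hx => by
        have := Finset.mem_of_subset hs hx
        rw [Finset.mem_range] at this ⊢
        exact lt_of_le_of_ne (Nat.lt_succ_iff.1 this) (fun hxe => hn (hxe ▸ hx)))

theorem iSupIndep_of_disjoint_prev (f : ℕ → α) (hb : ∀ n, f n ≠ ⊥)
    (h : ∀ n, Disjoint (f n) ((Finset.range n).sup f)) : iSupIndep f := by
  have hsup : ∀ s : Finset ℕ, s.SupIndep f := fun s => by
    obtain ⟨n, hn⟩ := s.exists_nat_subset_range
    exact supIndep_of_disjoint_prev f h n s hn
  have hpd : ∀ i j, i ≠ j → Disjoint (f i) (f j) := fun i j hij =>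
    (hsup {i, j}).pairwiseDisjoint (by simp) (by simp) hij
  have hinj : Set.InjOn f {i | f i ≠ ⊥} := fun i _ j _ hij => by
    by_contra hne
    exact hb i (disjoint_self.1 (hij ▸ hpd i j hne))
  exact (iSupIndep_iff_supIndep_of_injOn hinj).2 hsup

end Aux2

section Aux3
variable {R M : Type*} [Ring R] [AddCommGroup M] [Module R M]

theorem exists_inf_eq_bot_of_artinian (T : Submodule R M) (hT : IsArtinian R T)
    (N : ℕ → Submodule R M) (hAnti : Antitone N) (hInf : (⨅ i, N i) = ⊥) :
    ∃ n, T ⊓ N n = ⊥ := by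
  haveI := hT
  let f : ℕ →o (Submodule R T)ᵒᵈ :=
    ⟨fun n => OrderDual.toDual ((N n).comap T.subtype),
     fun a b hab => Submodule.comap_mono (hAnti hab)⟩
  obtain ⟨n, hn⟩ := IsArtinian.monotone_stabilizes f
  refine ⟨n, eq_bot_iff.2 fun x hx => ?_⟩
  have hxmem : ∀ m, x ∈ N m := by
    intro m
    rcases le_total m n with hmn | hnm
    · exact hAnti hmn hx.2
    · have : (⟨x, hx.1⟩ : T) ∈ (N n).comap T.subtype := hx.2
      rw [show ((N n).comap T.subtype) = ((N m).comap T.subtype) from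
        congrArg OrderDual.ofDual (hn m hnm)] at this
      exact this
  have : x ∈ (⨅ i, N i) := (Submodule.mem_iInf _).2 hxmem
  rwa [hInf] at this

end Aux3

theorem stmt11' (A M : Type u) [Ring A] [AddCommGroup M] [Module Aᵐᵒᵖ M]
    (h0 : ¬ ∃ (N : Submodule Aᵐᵒᵖ M) (P : Submodule Aᵐᵒᵖ N) (ι : Type u) (_ : Infinite ι)
      (T : ι → Submodule Aᵐᵒᵖ (N ⧸ P)),
      iSupIndep T ∧ iSup T = ⊤ ∧ (∀ i, IsSimpleModule Aᵐᵒᵖ (T i)) ∧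
        ∀ i j, Nonempty ((T i) ≃ₗ[Aᵐᵒᵖ] (T j)))
    (hsa : ∀ N : Submodule Aᵐᵒᵖ M, N ≠ ⊤ → ∃ S : Submodule Aᵐᵒᵖ (M ⧸ N), IsSimpleModule Aᵐᵒᵖ S)
    (hfin : ∃ (n : ℕ) (N : Fin n → Submodule Aᵐᵒᵖ M) (P : ∀ i, Submodule Aᵐᵒᵖ (N i)),
      ∀ (N' : Submodule Aᵐᵒᵖ M) (P' : Submodule Aᵐᵒᵖ N'), IsSimpleModule Aᵐᵒᵖ (N' ⧸ P') →
        ∃ i, Nonempty ((N' ⧸ P') ≃ₗ[Aᵐᵒᵖ] (N i ⧸ P i))) :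
    IsArtinian Aᵐᵒᵖ M := by
  by_contra hart
  rw [isArtinian_iff, RelEmbedding.wellFounded_iff_isEmpty, not_isEmpty_iff] at hart
  obtain ⟨femb⟩ := hart
  set N : ℕ → Submodule Aᵐᵒᵖ M := fun n => femb n with hNdef
  have hanti : StrictAnti N := fun a b hab => femb.map_rel_iff.2 hab
  set K : Submodule Aᵐᵒᵖ M := ⨅ i, N i with hKdef
  have hKle : ∀ i, K ≤ N i := fun i => iInf_le N i
  set N' : ℕ → Submodule Aᵐᵒᵖ (M ⧸ K) := fun i => (N i).map K.mkQ with hN'def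
  have hanti' : Antitone N' := fun a b hab => Submodule.map_mono (hanti.antitone hab)
  have hInf' : (⨅ i, N' i) = ⊥ := by
    rw [eq_bot_iff]
    intro x hx
    rw [Submodule.mem_iInf] at hx
    obtain ⟨y, hy0, hyx⟩ := hx 0
    have hyK : y ∈ K := by
      rw [hKdef, Submodule.mem_iInf]
      intro i
      obtain ⟨z, hz, hzx⟩ := hx i
      have : y - z ∈ K := by
        rw [← Submodule.Quotient.mk_eq_zero K]
        have : K.mkQ (y - z) = K.mkQ y - K.mkQ z := map_sub _ _ _
        rw [Submodule.mkQ_apply] at this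
        simp only [Submodule.mkQ_apply] at hyx hzx
        rw [this, Submodule.mkQ_apply, Submodule.mkQ_apply, hyx, hzx, sub_self]
      have : y - z ∈ N i := hKle i this
      simpa using add_mem this hz
    rw [Submodule.mem_bot, ← hyx, Submodule.mkQ_apply, Submodule.Quotient.mk_eq_zero]
    exact hyK
  have hbot' : ∀ i, N' i ≠ ⊥ := by
    intro i h
    obtain ⟨x, hx, hx'⟩ := SetLike.exists_of_lt (hanti (Nat.lt_succ_self i))
    have : K.mkQ x ∈ N' i := ⟨x, hx, rfl⟩
    rw [h, Submodule.mem_bot, Submodule.mkQ_apply, Submodule.Quotient.mk_eq_zero] at this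
    exact hx' (hKle (i + 1) this)
  have hsimple : ∀ X : Submodule Aᵐᵒᵖ (M ⧸ K), X ≠ ⊥ →
      ∃ S, S ≤ X ∧ IsSimpleModule Aᵐᵒᵖ S :=
    exists_simple_le_of_semiArtinian hsa K
  -- the state type for the recursive construction
  -- a state is (S, T, n) : current simple, accumulated sum, next index with T ⊓ N' n = ⊥
  have step_ex : ∀ st : {p : Submodule Aᵐᵒᵖ (M ⧸ K) × Submodule Aᵐᵒᵖ (M ⧸ K) × ℕ //
      IsAtom p.1 ∧ IsArtinian Aᵐᵒᵖ p.2.1 ∧ p.2.1 ⊓ N' p.2.2 = ⊥},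
      ∃ st' : {p : Submodule Aᵐᵒᵖ (M ⧸ K) × Submodule Aᵐᵒᵖ (M ⧸ K) × ℕ //
      IsAtom p.1 ∧ IsArtinian Aᵐᵒᵖ p.2.1 ∧ p.2.1 ⊓ N' p.2.2 = ⊥},
      st'.1.2.1 = st.1.2.1 ⊔ st'.1.1 ∧ st'.1.1 ≤ N' st.1.2.2 := by
    rintro ⟨⟨S, T, n⟩, hatom, hart, hdisj⟩
    obtain ⟨S', hS'le, hS'simp⟩ := hsimple (N' n) (hbot' n)
    haveI := hS'simp
    haveI : IsArtinian Aᵐᵒᵖ T := hart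
    haveI : IsArtinian Aᵐᵒᵖ S' := inferInstance
    haveI hart' : IsArtinian Aᵐᵒᵖ ↥(T ⊔ S') := inferInstance
    obtain ⟨n', hn'⟩ := exists_inf_eq_bot_of_artinian (T ⊔ S') hart' N' hanti' hInf'
    exact ⟨⟨(S', T ⊔ S', n'), isSimpleModule_iff_isAtom.1 hS'simp, hart', hn'⟩, rfl, hS'le⟩
  choose step hstep1 hstep2 using step_ex
  -- initial state
  have init_ex : ∃ st : {p : Submodule Aᵐᵒᵖ (M ⧸ K) × Submodule Aᵐᵒᵖ (M ⧸ K) × ℕ //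
      IsAtom p.1 ∧ IsArtinian Aᵐᵒᵖ p.2.1 ∧ p.2.1 ⊓ N' p.2.2 = ⊥}, st.1.1 = st.1.2.1 := by
    obtain ⟨S₀, hS₀le, hS₀simp⟩ := hsimple (N' 0) (hbot' 0)
    haveI := hS₀simp
    haveI hart0 : IsArtinian Aᵐᵒᵖ S₀ := inferInstance
    obtain ⟨n₀, hn₀⟩ := exists_inf_eq_bot_of_artinian S₀ hart0 N' hanti' hInf'
    exact ⟨⟨(S₀, S₀, n₀), isSimpleModule_iff_isAtom.1 hS₀simp, hart0, hn₀⟩, rfl⟩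
  obtain ⟨init, hinit⟩ := init_ex
  set F : ℕ → {p : Submodule Aᵐᵒᵖ (M ⧸ K) × Submodule Aᵐᵒᵖ (M ⧸ K) × ℕ //
      IsAtom p.1 ∧ IsArtinian Aᵐᵒᵖ p.2.1 ∧ p.2.1 ⊓ N' p.2.2 = ⊥} :=
    fun k => Nat.rec init (fun _ st => step st) k with hFdef
  have hFsucc : ∀ k, F (k + 1) = step (F k) := fun k => rfl
  set S : ℕ → Submodule Aᵐᵒᵖ (M ⧸ K) := fun k => (F k).1.1 with hSdef
  set Tt : ℕ → Submodule Aᵐᵒᵖ (M ⧸ K) := fun k => (F k).1.2.1 with hTtdef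
  have hatoms : ∀ k, IsAtom (S k) := fun k => (F k).2.1
  have hTsup : ∀ k, Tt k = (Finset.range (k + 1)).sup S := by
    intro k
    induction k with
    | zero =>
      rw [Finset.range_one, Finset.sup_singleton]
      exact hinit.symm
    | succ k ih =>
      have h1 : Tt (k + 1) = Tt k ⊔ S (k + 1) := by
        have := hstep1 (F k)
        rw [← hFsucc k] at this
        exact this
      rw [h1, ih,
        show Finset.range (k + 1 + 1) = insert (k + 1) (Finset.range (k + 1)) from
          Finset.range_add_one,
        Finset.sup_insert, sup_comm]
  have hdisjprev : ∀ m, Disjoint (S m) ((Finset.range m).sup S) := by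
    intro m
    cases m with
    | zero => simp
    | succ k =>
      have hle : S (k + 1) ≤ N' ((F k).1.2.2) := by
        have := hstep2 (F k); rw [← hFsucc k] at this; exact this
      have hdisj : Tt k ⊓ N' ((F k).1.2.2) = ⊥ := (F k).2.2.2
      rw [← hTsup k, disjoint_iff, eq_bot_iff]
      intro x hx
      have : x ∈ Tt k ⊓ N' ((F k).1.2.2) := ⟨hx.2, hle hx.1⟩
      rwa [hdisj] at this
  have hIndep : iSupIndep S :=
    iSupIndep_of_disjoint_prev S (fun k => (hatoms k).1) hdisjprev
  -- classification of the simple modules S k into finitely many classes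
  obtain ⟨nn0, Nf, Pf, hcl⟩ := hfin
  have hex : ∀ k, ∃ i : Fin nn0, Nonempty ((S k) ≃ₗ[Aᵐᵒᵖ] (Nf i ⧸ Pf i)) := by
    intro k
    haveI : IsSimpleModule Aᵐᵒᵖ (S k) := isSimpleModule_iff_isAtom.2 (hatoms k)
    have hsf : IsSimpleModule Aᵐᵒᵖ
        (((S k).comap K.mkQ) ⧸ (K.comap ((S k).comap K.mkQ).subtype)) :=
      IsSimpleModule.congr (subfactorEquiv K (S k))
    obtain ⟨i, ⟨g⟩⟩ := hcl ((S k).comap K.mkQ) (K.comap ((S k).comap K.mkQ).subtype) hsf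
    exact ⟨i, ⟨(subfactorEquiv K (S k)).symm.trans g⟩⟩
  choose c hc using hex
  obtain ⟨i₀, hinf⟩ := Finite.exists_infinite_fiber c
  haveI := hinf
  -- the infinite subfamily of pairwise isomorphic simple submodules
  let ι : Type u := ULift.{u} ↥(c ⁻¹' {i₀})
  haveI : Infinite ι := inferInstance
  let g : ι → ℕ := fun j => (j.down : ℕ)
  have hginj : Function.Injective g := fun a b hab => by
    apply ULift.down_injective
    exact Subtype.ext hab
  let S' : ι → Submodule Aᵐᵒᵖ (M ⧸ K) := S ∘ g
  have hIndep' : iSupIndep S' := hIndep.comp hginj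
  set U : Submodule Aᵐᵒᵖ (M ⧸ K) := ⨆ j, S' j with hUdef
  have hle' : ∀ j, S' j ≤ U := fun j => le_iSup S' j
  let c' : ι → Submodule Aᵐᵒᵖ U := fun j => (S' j).comap U.subtype
  have hinj_sub : Function.Injective U.subtype := U.injective_subtype
  have hmapc' : ∀ j, (c' j).map U.subtype = S' j := fun j => by
    rw [Submodule.map_comap_subtype]
    exact inf_eq_right.2 (hle' j)
  have hindc' : iSupIndep c' := by
    intro j
    rw [disjoint_iff, ← (Submodule.map_injective_of_injective hinj_sub).eq_iff,
      Submodule.map_inf _ hinj_sub, Submodule.map_bot, hmapc']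
    simp only [Submodule.map_iSup, hmapc']
    exact disjoint_iff.1 (hIndep' j)
  have hsupc' : ⨆ j, c' j = ⊤ := by
    rw [← (Submodule.map_injective_of_injective hinj_sub).eq_iff, Submodule.map_iSup]
    simp only [hmapc']
    rw [Submodule.map_top, Submodule.range_subtype]
  have hequivc' : ∀ j, Nonempty (c' j ≃ₗ[Aᵐᵒᵖ] S' j) := fun j =>
    ⟨(Submodule.equivMapOfInjective U.subtype hinj_sub (c' j)).trans
      (LinearEquiv.ofEq _ _ (hmapc' j))⟩
  -- transport to a subfactor of M
  let NN : Submodule Aᵐᵒᵖ M := U.comap K.mkQ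
  let PP : Submodule Aᵐᵒᵖ NN := K.comap NN.subtype
  let e : (NN ⧸ PP) ≃ₗ[Aᵐᵒᵖ] U := subfactorEquiv K U
  let T : ι → Submodule Aᵐᵒᵖ (NN ⧸ PP) := fun j => (Submodule.orderIsoMapComap e.symm) (c' j)
  have hTdef : ∀ j, T j = (c' j).map (e.symm : U →ₗ[Aᵐᵒᵖ] (NN ⧸ PP)) := fun j => rfl
  refine h0 ⟨NN, PP, ι, ‹Infinite ι›, T, ?_, ?_, ?_, ?_⟩
  · exact hindc'.map_orderIso (Submodule.orderIsoMapComap e.symm)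
  · have h1 : (⨆ j, T j) = ⨆ j, (c' j).map (e.symm : U →ₗ[Aᵐᵒᵖ] (NN ⧸ PP)) :=
      iSup_congr hTdef
    show (⨆ j, T j) = ⊤
    rw [h1, ← Submodule.map_iSup, hsupc', Submodule.map_top]
    exact LinearEquiv.range e.symm
  · intro j
    haveI : IsSimpleModule Aᵐᵒᵖ (S' j) := isSimpleModule_iff_isAtom.2 (hatoms (g j))
    haveI : IsSimpleModule Aᵐᵒᵖ (c' j) := IsSimpleModule.congr (hequivc' j).some
    exact IsSimpleModule.congr (N := c' j) ((e.symm.submoduleMap (c' j)).symm.trans (LinearEquiv.refl Aᵐᵒᵖ (c' j)))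
  · intro i j
    have hclass : ∀ l : ι, Nonempty ((T l) ≃ₗ[Aᵐᵒᵖ] (Nf i₀ ⧸ Pf i₀)) := by
      intro l
      have h1 : (T l) ≃ₗ[Aᵐᵒᵖ] (c' l) := (e.symm.submoduleMap (c' l)).symm
      have h2 : (c' l) ≃ₗ[Aᵐᵒᵖ] (S' l) := (hequivc' l).some
      have hcg : c (g l) = i₀ := l.down.2
      have h3 : Nonempty ((S (g l)) ≃ₗ[Aᵐᵒᵖ] (Nf i₀ ⧸ Pf i₀)) := hcg ▸ hc (g l)
      exact ⟨h1.trans (h2.trans h3.some)⟩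
    exact ⟨(hclass i).some.trans (hclass j).some.symm⟩

theorem stmt11 (A M : Type u) [Ring A] [AddCommGroup M] [Module Aᵐᵒᵖ M]
    (h0 : IsAleph0Distributive Aᵐᵒᵖ M) (hsa : IsSemiArtinianModule Aᵐᵒᵖ M)
    (hfin : FinitelyManySimpleSubfactors Aᵐᵒᵖ M) :
    IsArtinian Aᵐᵒᵖ M := by
  exact stmt11' A M h0 hsa hfin
end

section
/- If A is a semilocal ring, then every finitely generated distributive right A-module is cyclic; consequently, every distributive right A-module is a Bezout module. -/
universe u

open Submodule

section AuxAll
open MulOpposite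
section JacAux

variable {R : Type*} [Ring R]

theorem mem_jacobson_bot_iff' {x : R} :
    x ∈ Ideal.jacobson (⊥ : Ideal R) ↔ ∀ y, IsUnit (y * x + 1) := by
  rw [Ideal.mem_jacobson_iff]
  constructor
  · intro h y
    obtain ⟨z, hz⟩ := h y
    rw [Ideal.mem_bot, sub_eq_zero] at hz
    have hz1 : z * (y * x + 1) = 1 := by rw [mul_add, mul_one, ← mul_assoc, hz]
    obtain ⟨w, hw⟩ := h (-(z * y))
    rw [Ideal.mem_bot, sub_eq_zero] at hw
    have hzz : -(z * y) * x + 1 = z := by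
      have : z * y * x + z = 1 := hz
      rw [neg_mul, ← this]
      abel
    have hwz : w * z = 1 := by rw [← hzz, mul_add, mul_one, ← mul_assoc, hw]
    have heq : y * x + 1 = w := by
      have := congrArg (w * ·) hz1
      simpa [← mul_assoc, hwz] using this
    exact ⟨⟨y * x + 1, z, by rw [heq, hwz], hz1⟩, rfl⟩
  · intro h y
    obtain ⟨u, hu⟩ := h y
    refine ⟨↑u⁻¹, ?_⟩
    rw [Ideal.mem_bot, sub_eq_zero]
    calc ↑u⁻¹ * y * x + ↑u⁻¹ = ↑u⁻¹ * (y * x + 1) := by rw [mul_add, mul_one, mul_assoc]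
    _ = 1 := by rw [← hu, u.inv_mul]

theorem isUnit_one_add_mul_swap {a b : R} (h : IsUnit (a * b + 1)) : IsUnit (b * a + 1) := by
  obtain ⟨u, hu⟩ := h
  have h1 : (a * b + 1) * ↑u⁻¹ = 1 := by rw [← hu]; exact u.mul_inv
  have h2 : (↑u⁻¹ : R) * (a * b + 1) = 1 := by rw [← hu]; exact u.inv_mul
  set c : R := ↑u⁻¹ with hc
  refine isUnit_iff_exists.mpr ⟨1 - b * c * a, ?_, ?_⟩
  · have key : (b * a + 1) * (1 - b * c * a) = 1 + b * a - b * ((a * b + 1) * c) * a := by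
      noncomm_ring
    rw [key, h1]; noncomm_ring
  · have key : (1 - b * c * a) * (b * a + 1) = 1 + b * a - b * (c * (a * b + 1)) * a := by
      noncomm_ring
    rw [key, h2]; noncomm_ring

theorem unop_mem_jacobson_bot_iff {x : Rᵐᵒᵖ} :
    x ∈ Ideal.jacobson (⊥ : Ideal Rᵐᵒᵖ) ↔ x.unop ∈ Ideal.jacobson (⊥ : Ideal R) := by
  rw [mem_jacobson_bot_iff', mem_jacobson_bot_iff']
  constructor
  · intro h y
    have := h (MulOpposite.op y)
    rw [show MulOpposite.op y * x + 1 = MulOpposite.op (x.unop * y + 1) by simp] at this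
    exact isUnit_one_add_mul_swap (isUnit_op.mp this)
  · intro h y
    have := isUnit_one_add_mul_swap (h y.unop)
    rw [show y * x + 1 = MulOpposite.op (x.unop * y.unop + 1) by simp] at *
    exact isUnit_op.mpr (isUnit_one_add_mul_swap (h y.unop))

end JacAux

section ModAux

variable {R M : Type u} [Ring R] [AddCommGroup M] [Module R M]

theorem dist_submodule (h : IsDistributiveModule R M) (N : Submodule R M) :
    IsDistributiveModule R ↥N := by
  intro X Y Z
  apply Submodule.map_injective_of_injective N.injective_subtype
  rw [Submodule.map_sup, Submodule.map_inf _ N.injective_subtype,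
    Submodule.map_inf _ N.injective_subtype, Submodule.map_inf _ N.injective_subtype,
    Submodule.map_sup, h]

theorem dist_quotient (h : IsDistributiveModule R M) (K : Submodule R M) :
    IsDistributiveModule R (M ⧸ K) := by
  have hker : ∀ W : Submodule R (M ⧸ K), K ≤ comap K.mkQ W := by
    intro W k hk
    simp only [Submodule.mem_comap, Submodule.mkQ_apply]
    rw [(Submodule.Quotient.mk_eq_zero K).mpr hk]
    exact W.zero_mem
  have hmc : ∀ W : Submodule R (M ⧸ K), map K.mkQ (comap K.mkQ W) = W :=
    fun W => Submodule.map_comap_eq_of_surjective (Submodule.mkQ_surjective K) W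
  have hinf : ∀ p q : Submodule R M, K ≤ p → K ≤ q →
      map K.mkQ (p ⊓ q) = map K.mkQ p ⊓ map K.mkQ q := by
    intro p q hp hq
    refine le_antisymm (le_inf (Submodule.map_mono inf_le_left)
      (Submodule.map_mono inf_le_right)) ?_
    rintro x ⟨⟨a, ha, rfl⟩, ⟨b, hb, hab⟩⟩
    refine ⟨a, ⟨ha, ?_⟩, rfl⟩
    have : a - b ∈ K := by
      rw [← Submodule.ker_mkQ K, LinearMap.mem_ker, map_sub, hab, sub_self]
    have := q.add_mem hb (hq this)
    simpa using this
  intro X Y Z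
  set x' := comap K.mkQ X
  set y' := comap K.mkQ Y
  set z' := comap K.mkQ Z
  have hxyz : X ⊓ (Y ⊔ Z) = map K.mkQ (x' ⊓ (y' ⊔ z')) := by
    rw [hinf _ _ (hker X) (le_trans (hker Y) le_sup_left), hmc, Submodule.map_sup, hmc, hmc]
  rw [hxyz, h x' y' z', Submodule.map_sup, hinf _ _ (hker X) (hker Y),
    hinf _ _ (hker X) (hker Z), hmc, hmc, hmc]

theorem jac_sup_eq_top {N : Submodule R M} [Module.Finite R M]
    (h : N ⊔ (Ideal.jacobson (⊥ : Ideal R)) • (⊤ : Submodule R M) = ⊤) : N = ⊤ := by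
  by_contra hN
  haveI : IsCoatomic (Submodule R M) :=
    CompleteLattice.coatomic_of_top_compact
      ((Submodule.fg_iff_compact _).mp (Module.finite_def.mp ‹_›))
  obtain ⟨m, hm, hNm⟩ := (eq_top_or_exists_le_coatom N).resolve_left hN
  haveI hsimple : IsSimpleModule R (M ⧸ m) := isSimpleModule_iff_isCoatom.mpr hm
  have hJ : (Ideal.jacobson (⊥ : Ideal R)) • (⊤ : Submodule R M) ≤ m := by
    rw [Submodule.smul_le]
    intro r hr x _
    by_cases hx : m.mkQ x = 0
    · have hxm : x ∈ m := by rwa [Submodule.mkQ_apply, Submodule.Quotient.mk_eq_zero] at hx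
      exact m.smul_mem r hxm
    · have hmax := IsSimpleModule.ker_toSpanSingleton_isMaximal R (m := m.mkQ x) hx
      have hrk : r ∈ LinearMap.ker (LinearMap.toSpanSingleton R (M ⧸ m) (m.mkQ x)) :=
        Ideal.mem_sInf.mp hr ⟨bot_le, hmax⟩
      have : r • (m.mkQ x) = 0 := hrk
      rw [← map_smul, Submodule.mkQ_apply, Submodule.Quotient.mk_eq_zero] at this
      exact this
  have : (⊤ : Submodule R M) ≤ m := h ▸ sup_le hNm hJ
  exact hm.1 (top_le_iff.mp this)

theorem cyclic_of_ss [IsSemisimpleModule R M] [Module.Finite R M]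
    (hd : IsDistributiveModule R M) : ∃ m : M, Submodule.span R {m} = ⊤ := by
  classical
  obtain ⟨s, hind, hsup, hsimple⟩ := IsSemisimpleModule.exists_sSupIndep_sSup_simples_eq_top R M
  have hfin : s.Finite := WellFoundedGT.finite_of_sSupIndep hind
  have hchoice : ∀ T, T ∈ s → ∃ x : M, x ∈ T ∧ x ≠ 0 ∧ Submodule.span R {x} = T := by
    intro T hT
    haveI := hsimple T hT
    haveI : Nontrivial ↥T := IsSimpleModule.nontrivial (R := R) (M := ↥T)
    obtain ⟨y, hy⟩ := exists_ne (0 : ↥T)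
    refine ⟨↑y, y.2, fun h => hy (ZeroMemClass.coe_eq_zero.mp h), ?_⟩
    have h1 : Submodule.span R {y} = (⊤ : Submodule R ↥T) :=
      IsSimpleModule.span_singleton_eq_top R hy
    calc Submodule.span R {(y : M)} = map T.subtype (Submodule.span R {y}) := by
          rw [Submodule.map_span]; simp
    _ = T := by rw [h1, Submodule.map_subtype_top]
  choose! f hf1 hf2 hf3 using hchoice
  set t := hfin.toFinset with ht
  refine ⟨∑ T ∈ t, f T, ?_⟩
  set m := ∑ T ∈ t, f T with hmdef
  have key : ∀ T ∈ s, T ≤ Submodule.span R {m} := by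
    intro T hT
    have hTt : T ∈ t := hfin.mem_toFinset.mpr hT
    set C := sSup (s \ {T}) with hC
    have hdisj : Disjoint T C := hind hT
    have hmem : f T ∈ Submodule.span R {m} ⊔ C := by
      have hft : f T = m - ∑ T' ∈ t.erase T, f T' := by
        rw [hmdef, ← Finset.add_sum_erase t f hTt]; abel
      rw [hft]
      refine Submodule.sub_mem _ (Submodule.mem_sup_left (Submodule.mem_span_singleton_self m))
        (Submodule.mem_sup_right (Submodule.sum_mem _ ?_))
      intro T' hT'
      have h1 : T' ∈ s := hfin.mem_toFinset.mp (Finset.mem_of_mem_erase hT')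
      have h2 : T' ≠ T := Finset.ne_of_mem_erase hT'
      exact le_sSup (show T' ∈ s \ {T} from ⟨h1, h2⟩) (hf1 T' h1)
    have hle : T ≤ Submodule.span R {m} ⊔ C := by
      rw [← hf3 T hT]
      exact Submodule.span_le.mpr (by simpa using hmem)
    calc T = T ⊓ (Submodule.span R {m} ⊔ C) := (inf_eq_left.mpr hle).symm
    _ = (T ⊓ Submodule.span R {m}) ⊔ (T ⊓ C) := hd _ _ _
    _ = T ⊓ Submodule.span R {m} := by rw [disjoint_iff.mp hdisj, sup_bot_eq]
    _ ≤ Submodule.span R {m} := inf_le_right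
  rw [eq_top_iff, ← hsup]
  exact sSup_le key

theorem ss_quotient (J : Ideal R) (hss : IsSemisimpleModule R (R ⧸ J))
    [Module.Finite R M] :
    IsSemisimpleModule R (M ⧸ (J • ⊤ : Submodule R M)) := by
  classical
  haveI := hss
  set K : Submodule R M := J • ⊤ with hK
  have hJtop : ∀ a ∈ J, ∀ x : M ⧸ K, a • x = 0 := by
    intro a ha x
    obtain ⟨y, rfl⟩ := K.mkQ_surjective x
    rw [← map_smul]
    have : a • y ∈ K := Submodule.smul_mem_smul ha trivial
    rwa [Submodule.mkQ_apply, Submodule.Quotient.mk_eq_zero]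
  haveI : Module.Finite R (M ⧸ K) := Module.Finite.of_surjective K.mkQ (K.mkQ_surjective)
  obtain ⟨S, hS⟩ := Module.finite_def.mp ‹Module.Finite R (M ⧸ K)›
  apply isSemisimpleModule_of_isSemisimpleModule_submodule
    (s := (S : Set (M ⧸ K))) (p := fun x : M ⧸ K => Submodule.span R {x})
  · intro x _
    set φ : R →ₗ[R] (M ⧸ K) := LinearMap.toSpanSingleton R _ (x : M ⧸ K) with hφ
    have hker : J ≤ LinearMap.ker φ := by
      intro a ha
      rw [LinearMap.mem_ker, hφ, LinearMap.toSpanSingleton_apply]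
      exact hJtop a ha _
    have hrange : Submodule.span R {(x : M ⧸ K)} = LinearMap.range (J.liftQ φ hker) := by
      rw [Submodule.range_liftQ, ← LinearMap.span_singleton_eq_range]
    rw [hrange]
    exact IsSemisimpleModule.range _
  · rw [← Submodule.span_eq_iSup_of_singleton_spans, hS]

theorem main_fg (hss : IsSemisimpleModule R (R ⧸ Ideal.jacobson (⊥ : Ideal R)))
    [Module.Finite R M]
    (hd : IsDistributiveModule R M) : ∃ m : M, (⊤ : Submodule R M) = Submodule.span R {m} := by
  set J := Ideal.jacobson (⊥ : Ideal R) with hJ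
  set K : Submodule R M := J • ⊤ with hK
  haveI : IsSemisimpleModule R (M ⧸ K) := ss_quotient J hss
  haveI : Module.Finite R (M ⧸ K) := Module.Finite.of_surjective K.mkQ (K.mkQ_surjective)
  obtain ⟨mb, hmb⟩ := cyclic_of_ss (dist_quotient hd K)
  obtain ⟨m, rfl⟩ := K.mkQ_surjective mb
  have h1 : Submodule.span R {m} ⊔ K = ⊤ := by
    have hmap : Submodule.map K.mkQ (Submodule.span R {m}) = ⊤ := by
      rw [Submodule.map_span]; simpa using hmb
    have h2 := congrArg (Submodule.comap K.mkQ) hmap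
    rwa [Submodule.comap_map_eq, Submodule.ker_mkQ, Submodule.comap_top] at h2
  exact ⟨m, (jac_sup_eq_top h1).symm⟩

end ModAux

section Mop

variable (S : Type*) [Ring S]

theorem semiprime_of_ss [IsSemisimpleRing S] :
    ∀ c : S, (∀ r : S, c * r * c = 0) → c = 0 := by
  intro c hc
  obtain ⟨C, hC⟩ := exists_isCompl (Ideal.span {c} : Ideal S)
  have h1 : (1 : S) ∈ (Ideal.span {c} : Ideal S) ⊔ C := by
    rw [hC.sup_eq_top]; trivial
  obtain ⟨p, hp, q, hq, hpq⟩ := Submodule.mem_sup.mp h1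
  obtain ⟨sc, rfl⟩ := Ideal.mem_span_singleton'.mp hp
  have hcq : c = c * q := by
    have := congrArg (c * ·) hpq
    simp only [mul_add, mul_one] at this
    calc c = c * (sc * c) + c * q := this.symm
    _ = (c * sc * c) + c * q := by rw [mul_assoc]
    _ = c * q := by rw [hc sc, zero_add]
  have hcC : c ∈ C := by
    rw [hcq]
    exact C.smul_mem c hq
  have hcT : c ∈ (Ideal.span {c} : Ideal S) := Submodule.mem_span_singleton_self c
  have : c ∈ (⊥ : Ideal S) := hC.inf_eq_bot ▸ (Submodule.mem_inf.mpr ⟨hcT, hcC⟩)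
  exact (Submodule.mem_bot S).mp this

variable {S}

/-- A right ideal generated by a nonzero idempotent whose left ideal is simple is simple
(atomic), given semiprimeness. -/
theorem right_ideal_atom (hsp : ∀ c : S, (∀ r : S, c * r * c = 0) → c = 0)
    {e : S} (he : e ≠ 0) (hee : e * e = e)
    (hsim : IsAtom (Ideal.span {e} : Ideal S)) :
    IsAtom (Submodule.span Sᵐᵒᵖ {op e} : Submodule Sᵐᵒᵖ Sᵐᵒᵖ) := by
  have hstep : ∀ z : S, z ∈ (Ideal.span {e} : Ideal S) → z ≠ 0 → ∃ w : S, w * z = e := by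
    intro z hz hz0
    have hle : Ideal.span {z} ≤ Ideal.span {e} := Submodule.span_le.mpr (by simpa using hz)
    have hspan : Ideal.span {z} = Ideal.span {e} := by
      rcases hle.lt_or_eq with h | h
      · exact absurd (hsim.2 _ h) (by simp [Ideal.span_singleton_eq_bot, hz0])
      · exact h
    have : e ∈ Ideal.span {z} := hspan ▸ Submodule.mem_span_singleton_self e
    exact Ideal.mem_span_singleton'.mp this
  constructor
  · simp only [ne_eq, Submodule.span_singleton_eq_bot, op_eq_zero_iff]
    exact he
  · intro V hV
    by_contra hVne
    obtain ⟨α, hαV, hα0⟩ := Submodule.exists_mem_ne_zero_of_ne_bot hVne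
    have hαU : α ∈ Submodule.span Sᵐᵒᵖ {op e} := hV.le hαV
    obtain ⟨β, hβ⟩ := Submodule.mem_span_singleton.mp hαU
    set a : S := unop α with ha
    have haeq : a = e * unop β := by
      have : α = op (e * unop β) := by
        rw [← hβ]; rfl
      rw [ha, this, unop_op]
    have hea : e * a = a := by rw [haeq, ← mul_assoc, hee]
    have ha0 : a ≠ 0 := fun h => hα0 (by rw [← op_unop α, ← ha, h, op_zero])
    by_cases hcase : ∀ r : S, a * r * e = 0
    · refine absurd (hsp a fun r => ?_) ha0
      calc a * r * a = a * r * (e * a) := by rw [hea]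
      _ = (a * r * e) * a := by noncomm_ring
      _ = 0 := by rw [hcase r, zero_mul]
    · push_neg at hcase
      obtain ⟨r, hr⟩ := hcase
      set u := a * r * e with hu
      have huT : u ∈ (Ideal.span {e} : Ideal S) := Ideal.mem_span_singleton'.mpr ⟨a * r, rfl⟩
      obtain ⟨w, hw⟩ := hstep u huT hr
      have heu : e * u = u := by
        rw [hu, ← mul_assoc, ← mul_assoc, hea]
      have hue : u * e = u := by rw [hu, mul_assoc, hee]
      set w1 := e * w * e with hw1
      have hw1u : w1 * u = e := by
        calc w1 * u = e * w * (e * u) := by rw [hw1, mul_assoc]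
        _ = e * (w * u) := by rw [heu, mul_assoc]
        _ = e := by rw [hw, hee]
      have hw1T : w1 ∈ (Ideal.span {e} : Ideal S) :=
        Ideal.mem_span_singleton'.mpr ⟨e * w, rfl⟩
      have hw10 : w1 ≠ 0 := fun h => he (by rw [← hw1u, h, zero_mul])
      obtain ⟨z, hz⟩ := hstep w1 hw1T hw10
      set z1 := e * z * e with hz1
      have hew1 : e * w1 = w1 := by rw [hw1, ← mul_assoc, ← mul_assoc, hee]
      have hz1w1 : z1 * w1 = e := by
        calc z1 * w1 = e * z * (e * w1) := by rw [hz1, mul_assoc]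
        _ = e * (z * w1) := by rw [hew1, mul_assoc]
        _ = e := by rw [hz, hee]
      have hz1e : z1 * e = z1 := by rw [hz1, mul_assoc, hee]
      have huz : u = z1 := by
        calc u = e * u := heu.symm
        _ = (z1 * w1) * u := by rw [hz1w1]
        _ = z1 * (w1 * u) := by rw [mul_assoc]
        _ = z1 * e := by rw [hw1u]
        _ = z1 := hz1e
      have huw1 : u * w1 = e := by rw [huz, hz1w1]
      have hfin : a * (r * e * w1) = e := by
        have h9 : a * (r * e * w1) = u * w1 := by rw [hu]; noncomm_ring
        rw [h9, huw1]
      have hmem : op e ∈ Submodule.span Sᵐᵒᵖ {α} := by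
        apply Submodule.mem_span_singleton.mpr
        refine ⟨op (r * e * w1), ?_⟩
        show op (r * e * w1) * α = op e
        rw [← op_unop α, ← ha, ← op_mul, hfin]
      have hle2 : Submodule.span Sᵐᵒᵖ {op e} ≤ V :=
        Submodule.span_le.mpr (by
          simp only [Set.singleton_subset_iff, SetLike.mem_coe]
          exact (Submodule.span_le.mpr (by simpa using hαV)) hmem)
      exact hV.2 hle2

theorem isSemisimpleRing_mop [IsSemisimpleRing S] : IsSemisimpleRing Sᵐᵒᵖ := by
  classical
  have hsp := semiprime_of_ss S
  obtain ⟨s, hind, hsup, hsimple⟩ := IsSemisimpleModule.exists_sSupIndep_sSup_simples_eq_top S S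
  have hfin : s.Finite := WellFoundedGT.finite_of_sSupIndep hind
  set t := hfin.toFinset with ht
  have hT_s : ∀ T ∈ t, T ∈ s := fun T hT => hfin.mem_toFinset.mp hT
  have h1 : (1 : S) ∈ ⨆ T ∈ t, (T : Ideal S) := by
    have : ⨆ T ∈ t, (T : Ideal S) = sSup s := by
      rw [sSup_eq_iSup]
      apply le_antisymm <;> refine iSup₂_le fun T hT => ?_
      · exact le_iSup₂ (f := fun (T : Ideal S) (_ : T ∈ s) => T) T (hT_s T hT)
      · exact le_iSup₂ (f := fun (T : Ideal S) (_ : T ∈ t) => T) T (hfin.mem_toFinset.mpr hT)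
    rw [this, hsup]; trivial
  obtain ⟨μ, hμ⟩ := (Submodule.mem_iSup_finset_iff_exists_sum (fun T : Ideal S => T) 1).mp h1
  have hkey : ∀ T ∈ t, ∀ x ∈ T, x * (μ T : S) = x := by
    intro T hT x hx
    have hd := hind (hT_s T hT)
    have hin1 : x * (μ T : S) - x ∈ T := T.sub_mem (T.smul_mem x (μ T).2) hx
    have hin2 : x * (μ T : S) - x ∈ sSup (s \ {T}) := by
      have hsum : (μ T : S) + ∑ V ∈ t.erase T, (μ V : S) = 1 := by
        rw [Finset.add_sum_erase t (fun V => ((μ V : S))) hT, hμ]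
      have hx1 : x * (μ T : S) + ∑ V ∈ t.erase T, x * (μ V : S) = x := by
        rw [← Finset.mul_sum, ← mul_add, hsum, mul_one]
      have : x * (μ T : S) - x = -(∑ V ∈ t.erase T, x * (μ V : S)) := by
        apply eq_neg_of_add_eq_zero_left
        rw [sub_add_eq_add_sub, hx1, sub_self]
      rw [this]
      refine neg_mem (Submodule.sum_mem _ fun V hV => ?_)
      exact le_sSup (show V ∈ s \ {T} from
          ⟨hT_s V (Finset.mem_of_mem_erase hV), Finset.ne_of_mem_erase hV⟩)
        ((V : Ideal S).smul_mem x (μ V).2)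
    have := Submodule.disjoint_def.mp hd _ hin1 hin2
    rwa [sub_eq_zero] at this
  have hidem : ∀ T ∈ t, (μ T : S) * (μ T : S) = (μ T : S) := fun T hT => hkey T hT _ (μ T).2
  have hspan : ∀ T ∈ t, (μ T : S) ≠ 0 → Ideal.span {(μ T : S)} = T := by
    intro T hT h0
    have hatom : IsAtom (T : Ideal S) := isSimpleModule_iff_isAtom.mp (hsimple T (hT_s T hT))
    have hle : Ideal.span {(μ T : S)} ≤ T := Submodule.span_le.mpr (by simpa using (μ T).2)
    rcases hle.lt_or_eq with h | h
    · exact absurd (hatom.2 _ h) (by simp [Ideal.span_singleton_eq_bot, h0])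
    · exact h
  apply IsSemisimpleModule.of_sSup_simples_eq_top
  rw [eq_top_iff]
  intro x _
  have hx : x = ∑ T ∈ t, op ((μ T : S) * x.unop) := by
    calc x = op ((1 : S) * x.unop) := by rw [one_mul, op_unop]
    _ = op ((∑ T ∈ t, (μ T : S)) * x.unop) := by rw [hμ]
    _ = ∑ T ∈ t, op ((μ T : S) * x.unop) := by
          rw [Finset.sum_mul]
          exact map_sum (opAddEquiv (α := S)).toAddMonoidHom _ t
  rw [hx]
  refine Submodule.sum_mem _ fun T hT => ?_
  by_cases h0 : (μ T : S) = 0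
  · simp [h0]
  · have hmem : op ((μ T : S) * x.unop) ∈ Submodule.span Sᵐᵒᵖ {op (μ T : S)} :=
      Submodule.mem_span_singleton.mpr ⟨op x.unop, by rw [smul_eq_mul, ← op_mul]⟩
    have hatom : IsAtom (Submodule.span Sᵐᵒᵖ {op (μ T : S)} : Submodule Sᵐᵒᵖ Sᵐᵒᵖ) := by
      refine right_ideal_atom hsp h0 (hidem T hT) ?_
      rw [hspan T hT h0]
      exact isSimpleModule_iff_isAtom.mp (hsimple T (hT_s T hT))
    exact le_sSup (show _ ∈ {m : Submodule Sᵐᵒᵖ Sᵐᵒᵖ | IsSimpleModule Sᵐᵒᵖ m} from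
      isSimpleModule_iff_isAtom.mpr hatom) hmem

end Mop

section Glue
variable {A : Type u} [Ring A]

theorem semilocal_op (hA : IsSemilocalRing A) :
    IsSemisimpleModule Aᵐᵒᵖ (Aᵐᵒᵖ ⧸ Ideal.jacobson (⊥ : Ideal Aᵐᵒᵖ)) := by
  set J := Ideal.jacobson (⊥ : Ideal A) with hJdef
  haveI : J.IsTwoSided := by rw [hJdef]; infer_instance
  set c : RingCon A := J.toTwoSided.ringCon with hcdef
  have hc : ∀ a : A, c a 0 ↔ a ∈ J := fun a => by
    rw [show c = J.toTwoSided.ringCon from rfl, TwoSidedIdeal.rel_iff, sub_zero,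
      Ideal.mem_toTwoSided]
  have hsurj : Function.Surjective (c.mk') := fun q => Quotient.inductionOn q fun a => ⟨a, rfl⟩
  letI : Module A c.Quotient := Module.compHom _ c.mk'
  let f : A →ₗ[A] c.Quotient :=
    { toFun := c.mk', map_add' := fun a b => map_add c.mk' a b,
      map_smul' := fun r x => map_mul c.mk' r x }
  have hker : LinearMap.ker f = J := by
    ext a
    rw [LinearMap.mem_ker]
    have : f a = c.mk' a := rfl
    rw [this, show (0 : c.Quotient) = c.mk' 0 from (map_zero c.mk').symm]
    rw [show (c.mk' a = c.mk' 0) ↔ c a 0 from RingCon.eq c]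
    exact hc a
  haveI hssA : IsSemisimpleModule A c.Quotient := by
    haveI : IsSemisimpleModule A (A ⧸ J) := hA
    have e : c.Quotient ≃ₗ[A] (A ⧸ J) :=
      ((Submodule.quotEquivOfEq J (LinearMap.ker f) hker.symm).trans
        (f.quotKerEquivOfSurjective hsurj)).symm
    exact IsSemisimpleModule.congr e
  haveI : RingHomSurjective c.mk' := ⟨hsurj⟩
  haveI : IsSemisimpleRing c.Quotient := by
    let l : c.Quotient →ₛₗ[c.mk'] c.Quotient :=
      { toFun := id, map_add' := fun a b => rfl, map_smul' := fun r x => rfl }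
    exact (l.isSemisimpleModule_iff_of_bijective Function.bijective_id).mp hssA
  haveI : IsSemisimpleRing (c.Quotient)ᵐᵒᵖ := isSemisimpleRing_mop (S := c.Quotient)
  set ψ : Aᵐᵒᵖ →+* (c.Quotient)ᵐᵒᵖ := RingHom.op c.mk' with hψ
  have hψval : ∀ x : Aᵐᵒᵖ, ψ x = op (c.mk' x.unop) := fun x => rfl
  have hψsurj : Function.Surjective ψ := fun q => by
    obtain ⟨a, ha⟩ := hsurj q.unop
    exact ⟨op a, by rw [hψval, unop_op, ha, op_unop]⟩
  haveI : RingHomSurjective ψ := ⟨hψsurj⟩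
  letI : Module Aᵐᵒᵖ (c.Quotient)ᵐᵒᵖ := Module.compHom _ ψ
  let g : Aᵐᵒᵖ →ₗ[Aᵐᵒᵖ] (c.Quotient)ᵐᵒᵖ :=
    { toFun := ψ, map_add' := fun a b => map_add ψ a b,
      map_smul' := fun r x => map_mul ψ r x }
  have hgker : LinearMap.ker g = Ideal.jacobson (⊥ : Ideal Aᵐᵒᵖ) := by
    ext x
    rw [LinearMap.mem_ker, unop_mem_jacobson_bot_iff]
    have : g x = op (c.mk' x.unop) := rfl
    rw [this, op_eq_zero_iff, show (0 : c.Quotient) = c.mk' 0 from (map_zero c.mk').symm,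
      show (c.mk' x.unop = c.mk' 0) ↔ c x.unop 0 from RingCon.eq c]
    exact hc x.unop
  haveI : IsSemisimpleModule Aᵐᵒᵖ ((c.Quotient)ᵐᵒᵖ) := by
    let l : (c.Quotient)ᵐᵒᵖ →ₛₗ[ψ] (c.Quotient)ᵐᵒᵖ :=
      { toFun := id, map_add' := fun a b => rfl, map_smul' := fun r x => rfl }
    exact (l.isSemisimpleModule_iff_of_bijective Function.bijective_id).mpr inferInstance
  exact IsSemisimpleModule.congr
    ((Submodule.quotEquivOfEq _ _ hgker.symm).trans (g.quotKerEquivOfSurjective hψsurj))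

end Glue


end AuxAll

theorem stmt12 (A : Type u) [Ring A] (hA : IsSemilocalRing A) :
    (∀ (M : Type u) [AddCommGroup M] [Module Aᵐᵒᵖ M],
        Module.Finite Aᵐᵒᵖ M → IsDistributiveModule Aᵐᵒᵖ M →
          ∃ m : M, (⊤ : Submodule Aᵐᵒᵖ M) = span Aᵐᵒᵖ {m}) ∧
      ∀ (M : Type u) [AddCommGroup M] [Module Aᵐᵒᵖ M],
        IsDistributiveModule Aᵐᵒᵖ M → IsBezoutModule Aᵐᵒᵖ M := by
  have hss : IsSemisimpleModule Aᵐᵒᵖ (Aᵐᵒᵖ ⧸ Ideal.jacobson (⊥ : Ideal Aᵐᵒᵖ)) :=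
    semilocal_op hA
  constructor
  · intro M _ _ hfin hdist
    haveI := hfin
    exact main_fg hss hdist
  · intro M _ _ hdist N hN
    haveI : Module.Finite Aᵐᵒᵖ ↥N := Module.Finite.iff_fg.mpr hN
    obtain ⟨n, hn⟩ := main_fg hss (dist_submodule hdist N)
    refine ⟨(n : M), ?_⟩
    calc N = Submodule.map N.subtype ⊤ := (Submodule.map_subtype_top N).symm
    _ = Submodule.map N.subtype (span Aᵐᵒᵖ {n}) := by rw [← hn]
    _ = span Aᵐᵒᵖ {(n : M)} := by rw [Submodule.map_span]; simp
end

section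
/- If A is a semiprimary ring, then every ℵ₀-distributive right A-module is both Artinian and Noetherian. -/
universe u

open Submodule

section AuxUnits

variable {C : Type*} [Ring C]

theorem auxSwapUnit {x y : C} (h : IsUnit (1 + x * y)) : IsUnit (1 + y * x) := by
  obtain ⟨u, hu⟩ := h
  have h1 : (1 + x * y) * ↑u⁻¹ = 1 := by rw [← hu]; exact u.mul_inv
  have h2 : (↑u⁻¹ : C) * (1 + x * y) = 1 := by rw [← hu]; exact u.inv_mul
  refine isUnit_iff_exists.mpr ⟨1 - y * ↑u⁻¹ * x, ?_, ?_⟩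
  · have e : (1 + y * x) * (1 - y * ↑u⁻¹ * x)
        = 1 + y * x - y * ((1 + x * y) * ↑u⁻¹) * x := by noncomm_ring
    rw [e, h1]; noncomm_ring
  · have e : (1 - y * ↑u⁻¹ * x) * (1 + y * x)
        = 1 + y * x - y * (↑u⁻¹ * (1 + x * y)) * x := by noncomm_ring
    rw [e, h2]; noncomm_ring

theorem auxMemJacobson {x : C} :
    x ∈ Ideal.jacobson (⊥ : Ideal C) ↔ ∀ y, IsUnit (1 + y * x) := by
  constructor
  · intro hx
    have key : ∀ y : C, ∃ z, z * (1 + y * x) = 1 := by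
      intro y
      obtain ⟨z, hz⟩ := Ideal.mem_jacobson_iff.mp hx y
      rw [Submodule.mem_bot] at hz
      refine ⟨z, ?_⟩
      have h4 : z * (1 + y * x) - 1 = z * y * x + z - 1 := by noncomm_ring
      rw [← sub_eq_zero, h4]; exact hz
    intro y
    obtain ⟨z, hz⟩ := key y
    have hz' : z = 1 + -(z * y) * x := by
      have h5 : z * (1 + y * x) = z + z * y * x := by noncomm_ring
      rw [h5] at hz
      have h6 : (1 : C) + -(z * y) * x = 1 - z * y * x := by noncomm_ring
      rw [h6]
      have := eq_sub_of_add_eq hz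
      rw [eq_sub_iff_add_eq, add_comm] at this ⊢
      exact this
    obtain ⟨v, hv⟩ := key (-(z * y))
    rw [← hz'] at hv
    have hvw : v = 1 + y * x := by
      calc v = v * (z * (1 + y * x)) := by rw [hz, mul_one]
        _ = v * z * (1 + y * x) := by rw [mul_assoc]
        _ = 1 + y * x := by rw [hv, one_mul]
    exact isUnit_iff_exists.mpr ⟨z, by rw [← hvw]; exact hv, hz⟩
  · intro h
    rw [Ideal.mem_jacobson_iff]
    intro y
    obtain ⟨u, hu⟩ := h y
    refine ⟨↑u⁻¹, ?_⟩
    rw [Submodule.mem_bot]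
    have h2 : (↑u⁻¹ : C) * (1 + y * x) = 1 := by rw [← hu]; exact u.inv_mul
    have h4 : (↑u⁻¹ : C) * y * x + ↑u⁻¹ - 1 = ↑u⁻¹ * (1 + y * x) - 1 := by noncomm_ring
    rw [h4, h2, sub_self]

open MulOpposite in
theorem auxOpJacobson {x : C} :
    op x ∈ Ideal.jacobson (⊥ : Ideal Cᵐᵒᵖ) ↔ x ∈ Ideal.jacobson (⊥ : Ideal C) := by
  rw [auxMemJacobson, auxMemJacobson]
  constructor
  · intro h y
    have h1 := h (op y)
    have h2 : (1 : Cᵐᵒᵖ) + op y * op x = op (1 + x * y) := by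
      rw [op_add, op_mul, op_one]
    rw [h2, isUnit_op] at h1
    exact auxSwapUnit h1
  · intro h η
    have h1 := auxSwapUnit (h (unop η))
    have h2 : (1 : Cᵐᵒᵖ) + η * op x = op (1 + x * unop η) := by
      rw [op_add, op_mul, op_one, op_unop]
    rw [h2, isUnit_op]
    exact h1

theorem auxJacobsonTwoSided {x : C} (hx : x ∈ Ideal.jacobson (⊥ : Ideal C)) (y : C) :
    x * y ∈ Ideal.jacobson (⊥ : Ideal C) := by
  rw [auxMemJacobson] at hx ⊢
  intro z
  have h1 := hx (y * z)
  have h2 : (1 : C) + y * z * x = 1 + y * (z * x) := by rw [mul_assoc]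
  rw [h2] at h1
  have h3 := auxSwapUnit h1
  have h4 : (1 : C) + z * x * y = 1 + z * (x * y) := by rw [mul_assoc]
  rw [h4] at h3
  exact h3

end AuxUnits


section AuxIdem

variable {D : Type*} [Ring D]

theorem auxLeSpanIdem {e f : D} (hf : f * f = f) :
    span D {e} ≤ span D {f} ↔ e * f = e := by
  rw [span_singleton_le_iff_mem, mem_span_singleton]
  constructor
  · rintro ⟨t, ht⟩
    rw [smul_eq_mul] at ht
    rw [← ht, mul_assoc, hf]
  · intro h
    exact ⟨e, by rw [smul_eq_mul, h]⟩

theorem auxSpanIdemOfVnr (hv : ∀ a : D, ∃ x, a * x * a = a) (a : D) :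
    ∃ e, e * e = e ∧ span D {a} = span D {e} ∧ ∃ x, e = x * a := by
  obtain ⟨x, hx⟩ := hv a
  have he : (x * a) * (x * a) = x * a := by
    have h1 : (x * a) * (x * a) = x * (a * x * a) := by noncomm_ring
    rw [h1, hx]
  refine ⟨x * a, he, le_antisymm ?_ ?_, x, rfl⟩
  · rw [span_singleton_le_iff_mem, mem_span_singleton]
    refine ⟨a, ?_⟩
    rw [smul_eq_mul, ← mul_assoc, hx]
  · rw [span_singleton_le_iff_mem, mem_span_singleton]
    exact ⟨x, by rw [smul_eq_mul]⟩

theorem auxSpanSupIdem (hv : ∀ a : D, ∃ x, a * x * a = a) {e : D} (he : e * e = e) (b : D) :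
    ∃ g, g * g = g ∧ span D {g} = span D {e} ⊔ span D {b} := by
  obtain ⟨f, hf, hcf, x, hxf⟩ := auxSpanIdemOfVnr hv (b - b * e)
  have hce : (b - b * e) * e = 0 := by
    have h1 : (b - b * e) * e = b * e - b * (e * e) := by noncomm_ring
    rw [h1, he, sub_self]
  have hfe : f * e = 0 := by rw [hxf, mul_assoc, hce, mul_zero]
  have heg : e * (e + f - e * f) = e := by
    have h1 : e * (e + f - e * f) = e * e + e * f - e * e * f := by noncomm_ring
    rw [h1, he]; abel
  have hfg : f * (e + f - e * f) = f := by
    have h1 : f * (e + f - e * f) = f * e + f * f - f * e * f := by noncomm_ring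
    rw [h1, hfe, hf, zero_mul]; abel
  have hg : (e + f - e * f) * (e + f - e * f) = e + f - e * f := by
    have h1 : (e + f - e * f) * (e + f - e * f)
        = e * (e + f - e * f) + f * (e + f - e * f) - e * (f * (e + f - e * f)) := by
      noncomm_ring
    rw [h1, heg, hfg]
  refine ⟨e + f - e * f, hg, ?_⟩
  have hef : span D {e + f - e * f} = span D {e} ⊔ span D {f} := by
    apply le_antisymm
    · rw [span_singleton_le_iff_mem]
      refine sub_mem (add_mem ?_ ?_) ?_
      · exact mem_sup_left (mem_span_singleton_self e)
      · exact mem_sup_right (mem_span_singleton_self f)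
      · exact mem_sup_right (mem_span_singleton.mpr ⟨e, by rw [smul_eq_mul]⟩)
    · refine sup_le ?_ ?_
      · exact (auxLeSpanIdem hg).mpr heg
      · exact (auxLeSpanIdem hg).mpr hfg
  rw [hef, ← hcf]
  apply le_antisymm
  · refine sup_le le_sup_left ?_
    rw [span_singleton_le_iff_mem]
    refine sub_mem (mem_sup_right (mem_span_singleton_self b)) ?_
    exact mem_sup_left (mem_span_singleton.mpr ⟨b, by rw [smul_eq_mul]⟩)
  · refine sup_le le_sup_left ?_
    rw [span_singleton_le_iff_mem]
    have m1 : b - b * e ∈ span D {e} ⊔ span D {b - b * e} :=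
      mem_sup_right (mem_span_singleton_self (b - b * e))
    have m2 : b * e ∈ span D {e} ⊔ span D {b - b * e} :=
      mem_sup_left (mem_span_singleton.mpr ⟨b, by rw [smul_eq_mul]⟩)
    simpa using add_mem m1 m2

theorem auxIsComplIdem {e : D} (he : e * e = e) :
    IsCompl (span D {e}) (span D {1 - e}) := by
  constructor
  · rw [disjoint_iff, eq_bot_iff]
    intro z hz
    obtain ⟨hz1, hz2⟩ := Submodule.mem_inf.mp hz
    obtain ⟨s, hs⟩ := mem_span_singleton.mp hz1
    obtain ⟨t, ht⟩ := mem_span_singleton.mp hz2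
    rw [smul_eq_mul] at hs ht
    have h1 : z * e = z := by rw [← hs, mul_assoc, he]
    have h2 : z * e = 0 := by
      rw [← ht, mul_assoc]
      have h3 : (1 - e) * e = 0 := by
        have : (1 - e) * e = e - e * e := by noncomm_ring
        rw [this, he, sub_self]
      rw [h3, mul_zero]
    rw [Submodule.mem_bot, ← h1, h2]
  · rw [codisjoint_iff, eq_top_iff]
    intro z _
    rw [Submodule.mem_sup]
    refine ⟨z * e, mem_span_singleton.mpr ⟨z, by rw [smul_eq_mul]⟩,
      z * (1 - e), mem_span_singleton.mpr ⟨z, by rw [smul_eq_mul]⟩, by noncomm_ring⟩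

end AuxIdem

section AuxOp

open MulOpposite

variable {C : Type*} [Ring C]

theorem auxAnti {ε φ : Cᵐᵒᵖ} (hε : ε * ε = ε) (hφ : φ * φ = φ) :
    span Cᵐᵒᵖ {ε} ≤ span Cᵐᵒᵖ {φ} ↔
      span C {1 - unop φ} ≤ span C {1 - unop ε} := by
  rw [auxLeSpanIdem hφ]
  have hε' : unop ε * unop ε = unop ε := by rw [← unop_mul, hε]
  have h1e : (1 - unop ε) * (1 - unop ε) = 1 - unop ε := by
    have h : (1 - unop ε) * (1 - unop ε)
        = 1 - unop ε - unop ε + unop ε * unop ε := by noncomm_ring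
    rw [h, hε']; abel
  rw [auxLeSpanIdem h1e]
  have hexp : (1 - unop φ) * (1 - unop ε)
      = 1 - unop φ - unop ε + unop φ * unop ε := by noncomm_ring
  constructor
  · intro h
    have h' : unop φ * unop ε = unop ε := by rw [← unop_mul, h]
    rw [hexp, h']; abel
  · intro h
    rw [hexp] at h
    have h3 : unop φ * unop ε = unop ε := by
      have h4 : unop φ * unop ε - unop ε
          = (1 - unop φ - unop ε + unop φ * unop ε) - (1 - unop φ) := by abel
      rw [h, sub_self] at h4
      exact sub_eq_zero.mp h4
    apply unop_injective
    rw [unop_mul, h3]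

theorem auxVnrOfSS [IsSemisimpleRing C] (a : C) : ∃ x, a * x * a = a := by
  obtain ⟨K, hK⟩ := ComplementedLattice.exists_isCompl (span C {a})
  have h1 : (1 : C) ∈ span C {a} ⊔ K := by rw [hK.sup_eq_top]; trivial
  obtain ⟨c, hc, k, hk, hck⟩ := Submodule.mem_sup.mp h1
  obtain ⟨x, hx⟩ := mem_span_singleton.mp hc
  rw [smul_eq_mul] at hx
  refine ⟨x, ?_⟩
  have hak : a * k = a - a * x * a := by
    have h2 : a * (c + k) = a := by rw [hck, mul_one]
    rw [mul_add] at h2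
    have h3 : a * k = a - a * c := eq_sub_of_add_eq (by rw [add_comm]; exact h2)
    rw [h3, ← hx, ← mul_assoc]
  have hmem : a * k ∈ span C {a} ⊓ K := by
    refine Submodule.mem_inf.mpr ⟨?_, ?_⟩
    · rw [hak]
      exact sub_mem (mem_span_singleton_self a)
        (mem_span_singleton.mpr ⟨a * x, by rw [smul_eq_mul]⟩)
    · have := K.smul_mem a hk
      rwa [smul_eq_mul] at this
  rw [disjoint_iff.mp hK.disjoint, Submodule.mem_bot] at hmem
  rw [hmem] at hak
  exact (sub_eq_zero.mp hak.symm).symm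

theorem auxOpSemisimple [IsSemisimpleRing C] : IsSemisimpleRing Cᵐᵒᵖ := by
  have hv : ∀ α : Cᵐᵒᵖ, ∃ ξ, α * ξ * α = α := by
    intro α
    obtain ⟨x, hx⟩ := auxVnrOfSS (unop α)
    refine ⟨op x, unop_injective ?_⟩
    rw [unop_mul, unop_mul, unop_op, ← mul_assoc, hx]
  refine { exists_isCompl := fun I => ?_ }
  suffices h : ∃ ε : Cᵐᵒᵖ, ε * ε = ε ∧ I = span Cᵐᵒᵖ {ε} by
    obtain ⟨ε, hε, rfl⟩ := h
    exact ⟨span Cᵐᵒᵖ {1 - ε}, auxIsComplIdem hε⟩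
  set S : Set (Submodule C C) :=
    {L | ∃ ε : Cᵐᵒᵖ, ε * ε = ε ∧ span Cᵐᵒᵖ {ε} ≤ I ∧ L = span C {1 - unop ε}} with hS
  have hne : S.Nonempty := by
    refine ⟨span C {1 - unop (0 : Cᵐᵒᵖ)}, 0, by rw [mul_zero], ?_, rfl⟩
    rw [span_zero_singleton]; exact bot_le
  obtain ⟨L₀, hL₀S, hmin⟩ := WellFounded.has_min
    (IsWellFounded.wf (r := ((· < ·) : Submodule C C → Submodule C C → Prop))) S hne
  obtain ⟨ε₀, hε₀, hε₀I, hL₀⟩ := hL₀S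
  refine ⟨ε₀, hε₀, le_antisymm ?_ hε₀I⟩
  intro ι hι
  obtain ⟨γ, hγ, hγsp⟩ := auxSpanSupIdem hv hε₀ ι
  have hγI : span Cᵐᵒᵖ {γ} ≤ I := by
    rw [hγsp]; exact sup_le hε₀I ((span_singleton_le_iff_mem ι I).mpr hι)
  have hεγ : span Cᵐᵒᵖ {ε₀} ≤ span Cᵐᵒᵖ {γ} := by rw [hγsp]; exact le_sup_left
  have hle : span C {1 - unop γ} ≤ span C {1 - unop ε₀} := (auxAnti hε₀ hγ).mp hεγ
  have hmem : span C {1 - unop γ} ∈ S := ⟨γ, hγ, hγI, rfl⟩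
  have heq : span C {1 - unop γ} = span C {1 - unop ε₀} := by
    by_contra hne'
    exact hmin _ hmem (by rw [hL₀]; exact lt_of_le_of_ne hle hne')
  have hback : span Cᵐᵒᵖ {γ} ≤ span Cᵐᵒᵖ {ε₀} := by
    refine (auxAnti hγ hε₀).mpr ?_
    rw [heq]
  refine hback ?_
  rw [hγsp]
  exact mem_sup_right (mem_span_singleton_self ι)


section AuxFam

variable {R : Type u} [Ring R]

/-- A "good family": independent, spanning, simple, pairwise isomorphic. -/
def AuxGood (R : Type u) (X : Type u) [Ring R] [AddCommGroup X] [Module R X]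
    (ι : Type u) : Prop :=
  ∃ T : ι → Submodule R X, iSupIndep T ∧ iSup T = ⊤ ∧ (∀ i, IsSimpleModule R (T i)) ∧
    ∀ i j, Nonempty ((T i) ≃ₗ[R] (T j))

variable {X Y : Type u} [AddCommGroup X] [Module R X] [AddCommGroup Y] [Module R Y]

theorem auxFamPull (f : X →ₗ[R] Y) (hf : Function.Injective f) {ι : Type u}
    (T : ι → Submodule R Y) (hle : ∀ i, T i ≤ LinearMap.range f)
    (hind : iSupIndep T) :
    iSupIndep (fun i => comap f (T i)) ∧
    (∀ i, Nonempty ((comap f (T i)) ≃ₗ[R] T i)) ∧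
    (iSup T = LinearMap.range f → iSup (fun i => comap f (T i)) = ⊤) := by
  have hmap : ∀ i, map f (comap f (T i)) = T i := fun i => map_comap_eq_self (hle i)
  have hker : LinearMap.ker f = ⊥ := LinearMap.ker_eq_bot.mpr hf
  refine ⟨?_, ?_, ?_⟩
  · intro i
    rw [disjoint_iff, eq_bot_iff]
    have h1 : map f (comap f (T i) ⊓ ⨆ j, ⨆ _ : j ≠ i, comap f (T j))
        ≤ T i ⊓ ⨆ j, ⨆ _ : j ≠ i, T j := by
      refine le_inf ?_ ?_
      · exact le_trans (Submodule.map_mono inf_le_left) (le_of_eq (hmap i))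
      · refine le_trans (Submodule.map_mono inf_le_right) ?_
        rw [Submodule.map_iSup]
        refine iSup_mono fun j => ?_
        rw [Submodule.map_iSup]
        exact iSup_mono fun hj => le_of_eq (hmap j)
    have h2 : T i ⊓ (⨆ j, ⨆ _ : j ≠ i, T j) = ⊥ := disjoint_iff.mp (hind i)
    rw [h2] at h1
    intro z hz
    have : f z ∈ (⊥ : Submodule R Y) := h1 ⟨z, hz, rfl⟩
    rw [Submodule.mem_bot] at this ⊢
    exact hf (by rw [this, map_zero])
  · intro i
    exact ⟨(Submodule.equivMapOfInjective f hf (comap f (T i))).trans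
      (LinearEquiv.ofEq _ _ (hmap i))⟩
  · intro h
    apply map_injective_of_injective hf
    rw [Submodule.map_iSup, Submodule.map_top]
    simp_rw [hmap]
    exact h

theorem auxGoodPull (e : X ≃ₗ[R] Y) {ι : Type u} (h : AuxGood R Y ι) : AuxGood R X ι := by
  obtain ⟨T, hind, hsup, hsimp, hiso⟩ := h
  have hrange : LinearMap.range (e : X →ₗ[R] Y) = ⊤ := LinearEquiv.range e
  obtain ⟨h1, h2, h3⟩ := auxFamPull (e : X →ₗ[R] Y) e.injective T
    (fun i => hrange ▸ le_top) hind
  refine ⟨fun i => comap (e : X →ₗ[R] Y) (T i), h1, h3 (by rw [hrange, hsup]), ?_, ?_⟩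
  · intro i
    obtain ⟨g⟩ := h2 i
    exact IsSimpleModule.congr g
  · intro i j
    obtain ⟨gi⟩ := h2 i
    obtain ⟨gj⟩ := h2 j
    obtain ⟨gij⟩ := hiso i j
    exact ⟨gi.trans (gij.trans gj.symm)⟩

theorem auxGoodToSup {ι : Type u} (T : ι → Submodule R X) (hind : iSupIndep T)
    (hsimp : ∀ i, IsSimpleModule R (T i))
    (hiso : ∀ i j, Nonempty ((T i) ≃ₗ[R] (T j))) :
    AuxGood R (↥(⨆ i, T i)) ι := by
  set Q := ⨆ i, T i with hQ
  have hrange : LinearMap.range Q.subtype = Q := Submodule.range_subtype Q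
  obtain ⟨h1, h2, h3⟩ := auxFamPull Q.subtype Q.injective_subtype T
    (fun i => by rw [hrange]; exact le_iSup T i) hind
  refine ⟨fun i => comap Q.subtype (T i), h1, h3 hrange.symm, ?_, ?_⟩
  · intro i
    obtain ⟨g⟩ := h2 i
    exact IsSimpleModule.congr g
  · intro i j
    obtain ⟨gi⟩ := h2 i
    obtain ⟨gj⟩ := h2 j
    obtain ⟨gij⟩ := hiso i j
    exact ⟨gi.trans (gij.trans gj.symm)⟩

theorem auxNoBad (hd : IsAleph0Distributive R X) {ι : Type u} [hι : Infinite ι]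
    (T : ι → Submodule R X) (hind : iSupIndep T)
    (hsimp : ∀ i, IsSimpleModule R (T i))
    (hiso : ∀ i j, Nonempty ((T i) ≃ₗ[R] (T j))) : False := by
  apply hd
  have hg : AuxGood R (↥(⨆ i, T i)) ι := auxGoodToSup T hind hsimp hiso
  have hg2 : AuxGood R (↥(⨆ i, T i) ⧸ (⊥ : Submodule R ↥(⨆ i, T i))) ι :=
    auxGoodPull (Submodule.quotEquivOfEqBot ⊥ rfl) hg
  obtain ⟨T', a, b, c, d⟩ := hg2
  exact ⟨⨆ i, T i, ⊥, ι, hι, T', a, b, c, d⟩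

theorem auxSubfactor {M : Type u} [AddCommGroup M] [Module R M]
    (N : Submodule R M) (P : Submodule R N)
    (N₁ : Submodule R (N ⧸ P)) (P₁ : Submodule R N₁) :
    ∃ (N₂ : Submodule R M) (P₂ : Submodule R N₂),
      Nonempty ((N₂ ⧸ P₂) ≃ₗ[R] (N₁ ⧸ P₁)) := by
  set q := P.mkQ with hq
  set N₁' : Submodule R N := comap q N₁ with hN₁'
  let r : ↥N₁' →ₗ[R] ↥N₁ := q.restrict (fun x hx => hx)
  let g : ↥N₁' →ₗ[R] (↥N₁ ⧸ P₁) := P₁.mkQ.comp r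
  have hr : Function.Surjective r := by
    rintro ⟨y, hy⟩
    obtain ⟨x, rfl⟩ := Submodule.Quotient.mk_surjective P y
    exact ⟨⟨x, by rwa [Submodule.mem_comap]⟩, rfl⟩
  have hg : Function.Surjective g := by
    have hco : ⇑g = ⇑P₁.mkQ ∘ ⇑r := rfl
    rw [hco]
    exact (Submodule.mkQ_surjective P₁).comp hr
  let e₂ : (↥N₁' ⧸ LinearMap.ker g) ≃ₗ[R] (↥N₁ ⧸ P₁) := g.quotKerEquivOfSurjective hg
  let u : ↥N₁' ≃ₗ[R] ↥(map N.subtype N₁') :=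
    Submodule.equivMapOfInjective N.subtype N.injective_subtype N₁'
  let w := Submodule.Quotient.equiv (LinearMap.ker g)
    (Submodule.map (u : ↥N₁' →ₗ[R] ↥(map N.subtype N₁')) (LinearMap.ker g)) u rfl
  exact ⟨map N.subtype N₁', Submodule.map (u : ↥N₁' →ₗ[R] ↥(map N.subtype N₁')) (LinearMap.ker g), ⟨w.symm.trans e₂⟩⟩

variable {M M' : Type u} [AddCommGroup M] [Module R M] [AddCommGroup M'] [Module R M']

theorem auxDistSubfactor (h : IsAleph0Distributive R M) (N : Submodule R M)
    (P : Submodule R N) : IsAleph0Distributive R (N ⧸ P) := by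
  rintro ⟨N₁, P₁, ι, hι, T, h1, h2, h3, h4⟩
  obtain ⟨N₂, P₂, ⟨e⟩⟩ := auxSubfactor N P N₁ P₁
  obtain ⟨T', g1, g2, g3, g4⟩ := auxGoodPull e ⟨T, h1, h2, h3, h4⟩
  exact h ⟨N₂, P₂, ι, hι, T', g1, g2, g3, g4⟩

theorem auxDistCongr (e : M ≃ₗ[R] M') (h : IsAleph0Distributive R M) :
    IsAleph0Distributive R M' := by
  rintro ⟨N₁, P₁, ι, hι, T, h1, h2, h3, h4⟩
  let v : ↥N₁ ≃ₗ[R] ↥(map (e.symm : M' →ₗ[R] M) N₁) := e.symm.submoduleMap N₁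
  have hquot : Nonempty ((↥(map (e.symm : M' →ₗ[R] M) N₁) ⧸ map (v : ↥N₁ →ₗ[R] ↥(map (e.symm : M' →ₗ[R] M) N₁)) P₁) ≃ₗ[R] (↥N₁ ⧸ P₁)) :=
    ⟨(Submodule.Quotient.equiv P₁ (map (v : ↥N₁ →ₗ[R] ↥(map (e.symm : M' →ₗ[R] M) N₁)) P₁) v rfl).symm⟩
  obtain ⟨w⟩ := hquot
  obtain ⟨T', g1, g2, g3, g4⟩ := auxGoodPull w ⟨T, h1, h2, h3, h4⟩
  exact h ⟨map (e.symm : M' →ₗ[R] M) N₁, map (v : ↥N₁ →ₗ[R] ↥(map (e.symm : M' →ₗ[R] M) N₁)) P₁, ι, hι, T', g1, g2, g3, g4⟩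

theorem auxDistSub (h : IsAleph0Distributive R M) (N : Submodule R M) :
    IsAleph0Distributive R ↥N :=
  auxDistCongr (Submodule.quotEquivOfEqBot ⊥ rfl) (auxDistSubfactor h N ⊥)

theorem auxDistQuot (h : IsAleph0Distributive R M) (P₀ : Submodule R M) :
    IsAleph0Distributive R (M ⧸ P₀) := by
  have h1 := auxDistSubfactor h ⊤ (comap (⊤ : Submodule R M).subtype P₀)
  refine auxDistCongr (Submodule.Quotient.equiv _ P₀ Submodule.topEquiv ?_) h1
  ext x
  simp [Submodule.mem_map, Submodule.mem_comap]

end AuxFam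

section AuxLayer

variable {B : Type u} [Ring B]

theorem auxSimpleClass {Y : Type u} [AddCommGroup Y] [Module B Y]
    {t : Set (Submodule B Y)} (htsup : sSup t = ⊤)
    (htsimp : ∀ W ∈ t, IsSimpleModule B ↥W)
    {V : Type u} [AddCommGroup V] [Module B V] [IsSimpleModule B V]
    (ψ : Y →ₗ[B] V) (hψ : Function.Surjective ψ) :
    ∃ W ∈ t, Nonempty ((↥W) ≃ₗ[B] V) := by
  by_contra hno
  push_neg at hno
  have hker : ∀ W ∈ t, W ≤ LinearMap.ker ψ := by
    intro W hW
    by_contra hWk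
    haveI : IsSimpleModule B ↥W := htsimp W hW
    have hne : ψ.comp W.subtype ≠ 0 := by
      intro h0
      apply hWk
      intro w hw
      have := LinearMap.congr_fun h0 ⟨w, hw⟩
      simpa using this
    have hbij := LinearMap.bijective_of_ne_zero hne
    exact (hno W hW).false (LinearEquiv.ofBijective _ hbij)
  have htop : (⊤ : Submodule B Y) ≤ LinearMap.ker ψ := htsup ▸ sSup_le hker
  have hψ0 : ψ = 0 := by
    rw [← LinearMap.ker_eq_top]
    exact top_unique htop
  haveI := IsSimpleModule.nontrivial B V
  obtain ⟨v, hv⟩ := exists_ne (0 : V)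
  obtain ⟨y, hy⟩ := hψ v
  rw [hψ0] at hy
  simp only [LinearMap.zero_apply] at hy
  exact hv hy.symm

theorem auxLayer (I : Ideal B) (hBI : IsSemisimpleModule B (B ⧸ I))
    (X : Type u) [AddCommGroup X] [Module B X]
    (htor : ∀ b ∈ I, ∀ x : X, b • x = 0)
    (hdist : IsAleph0Distributive B X) :
    IsNoetherian B X ∧ IsArtinian B X := by
  haveI := hBI
  haveI : IsSemisimpleModule B X := by
    have hsub : ∀ m : X,
        IsSemisimpleModule B ↥(LinearMap.range (Finsupp.lsingle (M := B ⧸ I) (R := B) m)) :=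
      fun m => IsSemisimpleModule.congr (LinearMap.quotKerEquivRange _).symm
    have hFin : IsSemisimpleModule B (X →₀ (B ⧸ I)) :=
      isSemisimpleModule_of_isSemisimpleModule_submodule' hsub Finsupp.iSup_lsingle_range
    let f : X → (B ⧸ I) →ₗ[B] X := fun m =>
      Submodule.liftQ I (LinearMap.toSpanSingleton B X m) (fun b hb => by
        rw [LinearMap.mem_ker, LinearMap.toSpanSingleton_apply]
        exact htor b hb m)
    let φ : (X →₀ (B ⧸ I)) →ₗ[B] X := Finsupp.lsum ℕ f
    have hφ : Function.Surjective φ := by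
      intro m
      refine ⟨Finsupp.single m (Submodule.Quotient.mk 1), ?_⟩
      have h1 : φ (Finsupp.single m (Submodule.Quotient.mk 1))
          = f m (Submodule.Quotient.mk 1) := Finsupp.lsum_single _ _ _ _
      rw [h1]
      have h2 : f m (Submodule.Quotient.mk 1)
          = LinearMap.toSpanSingleton B X m 1 := Submodule.liftQ_apply _ _ _
      rw [h2, LinearMap.toSpanSingleton_apply, one_smul]
    exact IsSemisimpleModule.congr (φ.quotKerEquivOfSurjective hφ).symm
  obtain ⟨s, hs_ind, hs_sup, hs_simp⟩ :=
    IsSemisimpleModule.exists_sSupIndep_sSup_simples_eq_top B X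
  by_cases hfin : s.Finite
  · have h5 : ∃ s' : Set (Submodule B X), s'.Finite ∧ sSupIndep s' ∧
        sSup s' = ⊤ ∧ ∀ m ∈ s', IsSimpleModule B ↥m := ⟨s, hfin, hs_ind, hs_sup, hs_simp⟩
    exact ⟨(IsSemisimpleModule.finite_tfae (R := B) (M := X)).out 4 1 |>.mp h5,
           (IsSemisimpleModule.finite_tfae (R := B) (M := X)).out 4 2 |>.mp h5⟩
  · exfalso
    haveI : Module.Finite B (B ⧸ I) :=
      Module.Finite.of_surjective I.mkQ (Submodule.mkQ_surjective I)
    haveI : IsNoetherian B (B ⧸ I) :=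
      ((IsSemisimpleModule.finite_tfae (R := B) (M := B ⧸ I)).out 0 1).mp ‹_›
    obtain ⟨t, ht_ind, ht_sup, ht_simp⟩ :=
      IsSemisimpleModule.exists_sSupIndep_sSup_simples_eq_top B (B ⧸ I)
    have ht_fin : t.Finite := WellFoundedGT.finite_of_sSupIndep ht_ind
    have hcl : ∀ V : ↥s, ∃ W : ↥t,
        Nonempty ((↥(W : Submodule B (B ⧸ I))) ≃ₗ[B] ↥(V : Submodule B X)) := by
      rintro ⟨V, hV⟩
      haveI : IsSimpleModule B ↥V := hs_simp V hV
      haveI : Nontrivial ↥V := IsSimpleModule.nontrivial B ↥V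
      obtain ⟨v, hv⟩ := exists_ne (0 : ↥V)
      let ψ : (B ⧸ I) →ₗ[B] ↥V := Submodule.liftQ I (LinearMap.toSpanSingleton B ↥V v)
        (fun b hb => by
          rw [LinearMap.mem_ker, LinearMap.toSpanSingleton_apply]
          refine Subtype.ext ?_
          have : (↑(b • v) : X) = b • (v : X) := rfl
          rw [this, htor b hb]
          rfl)
      have hψs : Function.Surjective ψ := by
        rw [← LinearMap.range_eq_top, Submodule.range_liftQ,
          ← LinearMap.span_singleton_eq_range]
        rcases eq_bot_or_eq_top (span B {v}) with hsp | hsp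
        · exact absurd (span_singleton_eq_bot.mp hsp) hv
        · exact hsp
      obtain ⟨W, hW, hiso⟩ := auxSimpleClass ht_sup ht_simp ψ hψs
      exact ⟨⟨W, hW⟩, hiso⟩
    choose c hc using hcl
    haveI : Infinite ↥s := Set.Infinite.to_subtype hfin
    haveI : Finite ↥t := Set.Finite.to_subtype ht_fin
    obtain ⟨W₀, hW₀⟩ := Finite.exists_infinite_fiber c
    haveI := hW₀
    let T : ↥(c ⁻¹' {W₀}) → Submodule B X := fun i => ((i : ↥s) : Submodule B X)
    have hTind : iSupIndep T :=
      iSupIndep.comp ((sSupIndep_iff s).mp hs_ind) Subtype.val_injective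
    have hTsimp : ∀ i, IsSimpleModule B ↥(T i) := fun i => hs_simp _ (i : ↥s).2
    have hTiso : ∀ i j, Nonempty ((↥(T i)) ≃ₗ[B] ↥(T j)) := by
      intro i j
      obtain ⟨f1⟩ := hc i.1
      obtain ⟨f2⟩ := hc j.1
      have hcc : c i.1 = c j.1 := by
        have hi : c i.1 = W₀ := i.2
        have hj : c j.1 = W₀ := j.2
        rw [hi, hj]
      have hccv : ((c i.1 : Submodule B (B ⧸ I))) = ((c j.1 : Submodule B (B ⧸ I))) := by
        rw [hcc]
      exact ⟨f1.symm.trans ((LinearEquiv.ofEq _ _ hccv).trans f2)⟩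
    exact auxNoBad hdist T hTind hTsimp hTiso

end AuxLayer


section AuxQRing

variable {C : Type u} [Ring C] (I : Ideal C)

def auxQMul (hI : ∀ x ∈ I, ∀ y, x * y ∈ I) : Mul (C ⧸ I) :=
  ⟨fun a b => Quotient.liftOn₂' a b (fun x y => Submodule.Quotient.mk (x * y)) (by
    intro a₁ b₁ a₂ b₂ h₁ h₂
    have h₁' : a₁ - a₂ ∈ I := (Submodule.quotientRel_def I).mp h₁
    have h₂' : b₁ - b₂ ∈ I := (Submodule.quotientRel_def I).mp h₂
    refine (Submodule.Quotient.eq I).mpr ?_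
    have hsplit : a₁ * b₁ - a₂ * b₂ = a₁ * (b₁ - b₂) + (a₁ - a₂) * b₂ := by noncomm_ring
    rw [hsplit]
    refine add_mem ?_ (hI _ h₁' b₂)
    have := I.smul_mem a₁ h₂'
    rwa [smul_eq_mul] at this)⟩

def auxQRing (hI : ∀ x ∈ I, ∀ y, x * y ∈ I) : Ring (C ⧸ I) := by
  letI : Mul (C ⧸ I) := auxQMul I hI
  letI : One (C ⧸ I) := ⟨Submodule.Quotient.mk 1⟩
  letI : Pow (C ⧸ I) ℕ := ⟨fun x n => npowRec n x⟩
  letI : NatCast (C ⧸ I) := ⟨fun n => Submodule.Quotient.mk (n : C)⟩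
  letI : IntCast (C ⧸ I) := ⟨fun n => Submodule.Quotient.mk (n : C)⟩
  refine Function.Surjective.ring (Submodule.Quotient.mk (p := I))
    (Submodule.Quotient.mk_surjective I) rfl rfl (fun _ _ => rfl) (fun _ _ => rfl)
    (fun _ => rfl) (fun _ _ => rfl) (fun n x => Submodule.Quotient.mk_smul I n x)
    (fun n x => Submodule.Quotient.mk_smul I n x) (fun x n => ?_) (fun _ => rfl) (fun _ => rfl)
  have hmul : ∀ a b : C, (Submodule.Quotient.mk (a * b) : C ⧸ I)
      = Submodule.Quotient.mk a * Submodule.Quotient.mk b := fun _ _ => rfl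
  induction n with
  | zero => rw [pow_zero]; rfl
  | succ n ih =>
    have hnp : (Submodule.Quotient.mk x : C ⧸ I) ^ (n + 1)
        = Submodule.Quotient.mk x ^ n * Submodule.Quotient.mk x := rfl
    rw [pow_succ, hmul, ih, hnp]

end AuxQRing

section AuxTrans

variable {C : Type u} [Ring C] (I : Ideal C)

theorem auxQuotSS (hI : ∀ x ∈ I, ∀ y, x * y ∈ I) :
    IsSemisimpleModule C (C ⧸ I) ↔ @IsSemisimpleRing (C ⧸ I) (auxQRing I hI) := by
  letI := auxQRing I hI
  let σ : C →+* (C ⧸ I) :=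
    { toFun := Submodule.Quotient.mk
      map_one' := rfl
      map_mul' := fun _ _ => rfl
      map_zero' := rfl
      map_add' := fun _ _ => rfl }
  haveI : RingHomSurjective σ := ⟨Submodule.Quotient.mk_surjective I⟩
  letI : Module (C ⧸ I) (C ⧸ I) := Semiring.toModule
  let e : (C ⧸ I) →ₛₗ[σ] (C ⧸ I) :=
    { toFun := id
      map_add' := fun _ _ => rfl
      map_smul' := fun r x => by
        obtain ⟨y, rfl⟩ := Submodule.Quotient.mk_surjective I x
        rw [← Submodule.Quotient.mk_smul I r y]
        show Submodule.Quotient.mk (r • y) = σ r • Submodule.Quotient.mk y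
        rw [smul_eq_mul]
        rfl }
  exact e.isSemisimpleModule_iff_of_bijective Function.bijective_id

end AuxTrans

theorem auxOfFnCast {α : Type*} (l : List α) (n : ℕ) (h : n = l.length) :
    List.ofFn (fun i : Fin n => l.get (Fin.cast h i)) = l := by
  subst h
  simp

theorem auxMain {B : Type u} [Ring B] (I : Ideal B) (hBI : IsSemisimpleModule B (B ⧸ I)) :
    ∀ (k : ℕ) (M : Type u) [AddCommGroup M] [Module B M],
      IsAleph0Distributive B M →
      (∀ g : Fin k → B, (∀ i, g i ∈ I) → ∀ m : M, (List.ofFn g).prod • m = 0) →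
      IsNoetherian B M ∧ IsArtinian B M := by
  intro k
  induction k with
  | zero =>
    intro M _ _ _ hP
    have hzero : ∀ m : M, m = 0 := by
      intro m
      have := hP (fun i => i.elim0) (fun i => i.elim0) m
      simpa using this
    haveI : Subsingleton M := ⟨fun a b => by rw [hzero a, hzero b]⟩
    exact ⟨inferInstance, inferInstance⟩
  | succ k ih =>
    intro M _ _ hdist hP
    set N := I • (⊤ : Submodule B M) with hN
    have htorQ : ∀ b ∈ I, ∀ x : M ⧸ N, b • x = 0 := by
      intro b hb x
      obtain ⟨m, rfl⟩ := Submodule.Quotient.mk_surjective N x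
      rw [← Submodule.Quotient.mk_smul, Submodule.Quotient.mk_eq_zero]
      exact Submodule.smul_mem_smul hb trivial
    have hQ := auxLayer I hBI (M ⧸ N) htorQ (auxDistQuot hdist N)
    have hPN : ∀ g : Fin k → B, (∀ i, g i ∈ I) → ∀ m : ↥N, (List.ofFn g).prod • m = 0 := by
      intro g hg m
      have hm : (m : M) ∈ I • (⊤ : Submodule B M) := m.2
      have key : (List.ofFn g).prod • (m : M) = 0 := by
        refine Submodule.smul_induction_on hm ?_ ?_
        · intro r hr n _
          rw [smul_smul]
          have hprodr : (List.ofFn g).prod * r = (List.ofFn (Fin.snoc g r)).prod := by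
            rw [List.ofFn_succ', List.prod_concat, Fin.snoc_last]
            have h7 : (fun i : Fin k => (Fin.snoc g r : Fin (k+1) → B) i.castSucc) = g := by
              funext i
              simp [Fin.snoc_castSucc]
            rw [h7]
          rw [hprodr]
          refine hP _ (fun i => ?_) n
          refine Fin.lastCases ?_ ?_ i
          · simpa [Fin.snoc_last] using hr
          · intro j
            simpa [Fin.snoc_castSucc] using hg j
        · intro x y hx hy
          rw [smul_add, hx, hy, add_zero]
      refine Subtype.ext ?_
      show (List.ofFn g).prod • (m : M) = 0
      exact key
    have hNgood := ih ↥N (auxDistSub hdist N) hPN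
    exact ⟨(isNoetherian_iff_submodule_quotient N).mpr ⟨hNgood.1, hQ.1⟩,
           (isArtinian_iff_submodule_quotient N).mpr ⟨hNgood.2, hQ.2⟩⟩

theorem stmt15 (A : Type u) [Ring A] (hA : IsSemiprimaryRing' A)
    (M : Type u) [AddCommGroup M] [Module Aᵐᵒᵖ M] (hM : IsAleph0Distributive Aᵐᵒᵖ M) :
    IsArtinian Aᵐᵒᵖ M ∧ IsNoetherian Aᵐᵒᵖ M := by
  obtain ⟨hsl, n, hn, hnil⟩ := hA
  classical
  set J : Ideal A := Ideal.jacobson ⊥ with hJ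
  set J' : Ideal Aᵐᵒᵖ := Ideal.jacobson ⊥ with hJ'
  have hJ2 : ∀ x ∈ J, ∀ y, x * y ∈ J := fun x hx y => auxJacobsonTwoSided hx y
  have hJ'2 : ∀ x ∈ J', ∀ y, x * y ∈ J' := fun x hx y => auxJacobsonTwoSided hx y
  letI RA : Ring (A ⧸ J) := auxQRing J hJ2
  letI RB : Ring (Aᵐᵒᵖ ⧸ J') := auxQRing J' hJ'2
  haveI hSSA : IsSemisimpleRing (A ⧸ J) := (auxQuotSS J hJ2).mp hsl
  haveI hSSAop : IsSemisimpleRing (A ⧸ J)ᵐᵒᵖ := auxOpSemisimple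
  -- the ring hom (A⧸J)ᵐᵒᵖ →+* Aᵐᵒᵖ⧸J'
  let ψfun : (A ⧸ J) → (Aᵐᵒᵖ ⧸ J') := fun q =>
    Quotient.liftOn' q (fun a => Submodule.Quotient.mk (MulOpposite.op a)) (by
      intro a b hab
      have h1 : a - b ∈ J := (Submodule.quotientRel_def J).mp hab
      refine (Submodule.Quotient.eq J').mpr ?_
      have h2 : MulOpposite.op a - MulOpposite.op b = MulOpposite.op (a - b) := by simp
      rw [h2]
      exact auxOpJacobson.mpr h1)
  have hψmk : ∀ a : A, ψfun (Submodule.Quotient.mk a)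
      = Submodule.Quotient.mk (MulOpposite.op a) := fun _ => rfl
  let ψ : (A ⧸ J)ᵐᵒᵖ →+* (Aᵐᵒᵖ ⧸ J') :=
    { toFun := fun x => ψfun x.unop
      map_one' := rfl
      map_mul' := by
        intro x y
        obtain ⟨a, ha⟩ := Submodule.Quotient.mk_surjective J x.unop
        obtain ⟨b, hb⟩ := Submodule.Quotient.mk_surjective J y.unop
        rw [show x = MulOpposite.op (Submodule.Quotient.mk a) from by
          rw [ha, MulOpposite.op_unop]]
        rw [show y = MulOpposite.op (Submodule.Quotient.mk b) from by
          rw [hb, MulOpposite.op_unop]]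
        rfl
      map_zero' := rfl
      map_add' := by
        intro x y
        obtain ⟨a, ha⟩ := Submodule.Quotient.mk_surjective J x.unop
        obtain ⟨b, hb⟩ := Submodule.Quotient.mk_surjective J y.unop
        rw [show x = MulOpposite.op (Submodule.Quotient.mk a) from by
          rw [ha, MulOpposite.op_unop]]
        rw [show y = MulOpposite.op (Submodule.Quotient.mk b) from by
          rw [hb, MulOpposite.op_unop]]
        rfl }
  have hψsurj : Function.Surjective ψ := by
    intro z
    obtain ⟨w, hw⟩ := Submodule.Quotient.mk_surjective J' z
    refine ⟨MulOpposite.op (Submodule.Quotient.mk (MulOpposite.unop w)), ?_⟩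
    show ψfun (Submodule.Quotient.mk (MulOpposite.unop w)) = z
    rw [hψmk, MulOpposite.op_unop, hw]
  haveI hSSB : IsSemisimpleRing (Aᵐᵒᵖ ⧸ J') :=
    RingHom.isSemisimpleRing_of_surjective ψ hψsurj
  have hBI : IsSemisimpleModule Aᵐᵒᵖ (Aᵐᵒᵖ ⧸ J') := (auxQuotSS J' hJ'2).mpr hSSB
  have hP : ∀ g : Fin n → Aᵐᵒᵖ, (∀ i, g i ∈ J') → ∀ m : M, (List.ofFn g).prod • m = 0 := by
    intro g hg m
    have hprod : (List.ofFn g).prod = 0 := by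
      set l : List A := ((List.ofFn g).map MulOpposite.unop).reverse with hl
      have hlen : n = l.length := by simp [hl]
      have hall : ∀ z ∈ l, z ∈ J := by
        intro z hz
        rw [hl, List.mem_reverse, List.mem_map] at hz
        obtain ⟨x, hx1, hx2⟩ := hz
        rw [List.mem_ofFn] at hx1
        obtain ⟨j, rfl⟩ := hx1
        rw [← hx2]
        exact auxOpJacobson.mp (by rw [MulOpposite.op_unop]; exact hg j)
      have hmem : ∀ i : Fin n, l.get (Fin.cast hlen i) ∈ J :=
        fun i => hall _ (by apply List.get_mem)
      have h0 := hnil _ hmem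
      rw [auxOfFnCast l n hlen] at h0
      apply MulOpposite.unop_injective
      rw [MulOpposite.unop_list_prod, MulOpposite.unop_zero, ← hl]
      exact h0
    rw [hprod, zero_smul]
  have hfinal := auxMain J' hBI n M hM hP
  exact ⟨hfinal.2, hfinal.1⟩
end AuxOp
end

section
/- For any ring A, there exists a cardinal number ℵ such that the cardinality of every ℵ₀-distributive right A-module is at most ℵ. -/
universe u

open Submodule

section Stmt16Aux

variable {R M : Type u} [Ring R] [AddCommGroup M] [Module R M]

/-- For a nonzero element `x`, there is a submodule of `span R {x}` maximal with respect to
not containing `x`. -/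
theorem stmt16_aux_max_avoid (x : M) (hx : x ≠ 0) :
    ∃ m : Submodule R M, m ≤ span R {x} ∧ x ∉ m ∧
      ∀ q : Submodule R M, q ≤ span R {x} → x ∉ q → m ≤ q → q = m := by
  have hzorn : ∀ c ⊆ {q : Submodule R M | q ≤ span R {x} ∧ x ∉ q},
      IsChain (· ≤ ·) c → ∀ y ∈ c,
        ∃ ub ∈ {q : Submodule R M | q ≤ span R {x} ∧ x ∉ q}, ∀ z ∈ c, z ≤ ub := by
    intro c hcs hchain y hy
    refine ⟨sSup c, ⟨sSup_le fun z hz => (hcs hz).1, fun hmem => ?_⟩,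
      fun z hz => le_sSup hz⟩
    obtain ⟨p, hp, hxp⟩ := (Submodule.mem_sSup_of_directed ⟨y, hy⟩ hchain.directedOn).mp hmem
    exact (hcs hp).2 hxp
  obtain ⟨m, -, hm⟩ := zorn_le_nonempty₀
    {q : Submodule R M | q ≤ span R {x} ∧ x ∉ q} hzorn ⊥ ⟨bot_le, by simp [hx]⟩
  exact ⟨m, hm.prop.1, hm.prop.2, fun q h1 h2 h3 => le_antisymm (hm.2 ⟨h1, h2⟩ h3) h3⟩

/-- The annihilator-type right ideal attached to a maximal-avoiding submodule is a coatom. -/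
theorem stmt16_aux_coatom (x : M) (m : Submodule R M) (hle : m ≤ span R {x}) (hxm : x ∉ m)
    (hmax : ∀ q : Submodule R M, q ≤ span R {x} → x ∉ q → m ≤ q → q = m) :
    IsCoatom (m.comap (LinearMap.toSpanSingleton R M x)) := by
  constructor
  · intro h
    apply hxm
    have h1 : (1 : R) ∈ m.comap (LinearMap.toSpanSingleton R M x) := h ▸ Submodule.mem_top
    simpa using h1
  · intro J hJ
    obtain ⟨j, hjJ, hjμ⟩ := SetLike.exists_of_lt hJ
    by_contra hJtop
    set q := m ⊔ Submodule.map (LinearMap.toSpanSingleton R M x) J with hq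
    have hq1 : q ≤ span R {x} := by
      refine sup_le hle ?_
      rintro z hz
      rcases Submodule.mem_map.mp hz with ⟨r, -, rfl⟩
      exact Submodule.smul_mem _ r (Submodule.mem_span_singleton_self x)
    have hxq : x ∈ q := by
      by_contra hxq
      have hqm := hmax q hq1 hxq le_sup_left
      have : j • x ∈ m := by
        have : j • x ∈ q := (le_sup_right : _ ≤ q)
          (Submodule.mem_map_of_mem (f := LinearMap.toSpanSingleton R M x) hjJ)
        rwa [hqm] at this
      exact hjμ (by simpa [Submodule.mem_comap] using this)
    rcases Submodule.mem_sup.mp hxq with ⟨a, ha, b, hb, hab⟩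
    rcases Submodule.mem_map.mp hb with ⟨r, hrJ, rfl⟩
    have h1r : (1 - r) • x ∈ m := by
      have hax : a + r • x = x := by simpa using hab
      have hval : (1 - r) • x = a := by
        rw [sub_smul, one_smul]
        exact (eq_sub_of_add_eq hax).symm
      rwa [hval]
    have h1μ : (1 - r) ∈ m.comap (LinearMap.toSpanSingleton R M x) := by
      simpa [Submodule.mem_comap] using h1r
    have h1J : (1 : R) ∈ J := by
      have := J.add_mem (hJ.le h1μ) hrJ
      simpa using this
    exact hJtop (eq_top_iff.2 fun z _ => by
      have := J.smul_mem z h1J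
      simpa using this)

/-- Core construction: from an infinite independent family of cyclic submodules whose
attached simple quotients share the common coatomic right ideal `μ₀`, one constructs a
subfactor of `M` which is an infinite direct sum of pairwise isomorphic simple modules,
contradicting `ℵ₀`-distributivity. -/
theorem stmt16_aux_bad (hM : IsAleph0Distributive R M) {ι₀ : Type u} [Infinite ι₀]
    (x : ι₀ → M) (m : ι₀ → Submodule R M)
    (hind : iSupIndep fun i => span R {x i})
    (hm : ∀ i, m i ≤ span R {x i})
    (μ₀ : Submodule R R) (hco : IsCoatom μ₀)
    (hμ : ∀ i (r : R), r • x i ∈ m i ↔ r ∈ μ₀) : False := by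
  classical
  set t : ι₀ → Submodule R M := fun i => span R {x i} with ht
  set N : Submodule R M := ⨆ i, t i with hNdef
  have hxN : ∀ i, x i ∈ N := fun i => (le_iSup t i) (mem_span_singleton_self (x i))
  set PM : Submodule R M := ⨆ i, m i with hPMdef
  have hPMN : PM ≤ N := iSup_mono hm
  set P : Submodule R N := PM.comap N.subtype with hP
  set n : ι₀ → N := fun i => ⟨x i, hxN i⟩ with hn
  set T : ι₀ → Submodule R (N ⧸ P) := fun i => span R {P.mkQ (n i)} with hT
  have hTmap : ∀ i, T i = Submodule.map P.mkQ (span R {n i}) := by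
    intro i
    rw [hT, Submodule.map_span, Set.image_singleton]
  have hsplit : ∀ i z, z ∈ t i → z ∈ (⨆ j, ⨆ _ : j ≠ i, t j) ⊔ PM → z ∈ m i := by
    intro i z hz hz2
    rcases Submodule.mem_sup.mp hz2 with ⟨u, hu, p, hp, hupz⟩
    have hPMle : PM ≤ m i ⊔ ⨆ j, ⨆ _ : j ≠ i, m j := by
      refine iSup_le fun j => ?_
      by_cases hji : j = i
      · subst hji; exact le_sup_left
      · exact le_trans (le_iSup₂ (f := fun j (_ : j ≠ i) => m j) j hji) le_sup_right
    have hp' : p ∈ m i ⊔ ⨆ j, ⨆ _ : j ≠ i, m j := hPMle hp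
    rcases Submodule.mem_sup.mp hp' with ⟨p₁, hp₁, p₂, hp₂, hp12⟩
    have hzt : z - p₁ ∈ t i := sub_mem hz (hm i hp₁)
    have hz2' : z - p₁ ∈ ⨆ j, ⨆ _ : j ≠ i, t j := by
      have hzz : z - p₁ = u + p₂ := by rw [← hupz, ← hp12]; abel
      rw [hzz]
      exact add_mem hu ((iSup_mono fun j => iSup_mono' fun hj => ⟨hj, hm j⟩) hp₂)
    have hz0 : z - p₁ = 0 := Submodule.disjoint_def.mp (hind i) _ hzt hz2'
    have : z = p₁ := by rwa [sub_eq_zero] at hz0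
    rwa [this]
  have hPMm : ∀ i (r : R), r • x i ∈ PM → r • x i ∈ m i := fun i r h =>
    hsplit i _ (Submodule.smul_mem _ r (mem_span_singleton_self (x i)))
      ((le_sup_right : PM ≤ _) h)
  set f : ∀ _ : ι₀, R →ₗ[R] (N ⧸ P) :=
    fun i => P.mkQ ∘ₗ LinearMap.toSpanSingleton R N (n i) with hf
  have hcoe : ∀ i (r : R), ((r • n i : N) : M) = r • x i := fun i r => rfl
  have hmemP : ∀ i (r : R), r • n i ∈ P ↔ r • x i ∈ PM := by
    intro i r
    rw [hP, Submodule.mem_comap]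
    exact Iff.rfl
  have hker : ∀ i, LinearMap.ker (f i) = μ₀ := by
    intro i
    ext r
    rw [LinearMap.mem_ker, hf]
    simp only [LinearMap.comp_apply, LinearMap.toSpanSingleton_apply, Submodule.mkQ_apply,
      Submodule.Quotient.mk_eq_zero]
    rw [hmemP i r]
    exact ⟨fun h => (hμ i r).mp (hPMm i r h), fun h => (le_iSup m i) ((hμ i r).mpr h)⟩
  have hrange : ∀ i, LinearMap.range (f i) = T i := by
    intro i
    rw [hf]
    rw [LinearMap.range_comp, ← LinearMap.span_singleton_eq_range, ← hTmap i]
  haveI hsimpleQ : IsSimpleModule R (R ⧸ μ₀) := isSimpleModule_iff_isCoatom.mpr hco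
  have e : ∀ i, (R ⧸ μ₀) ≃ₗ[R] T i := fun i =>
    (Submodule.quotEquivOfEq μ₀ (LinearMap.ker (f i)) (hker i).symm).trans
      ((f i).quotKerEquivRange.trans (LinearEquiv.ofEq _ _ (hrange i)))
  have hsubtype_span : ∀ i, Submodule.map N.subtype (span R {n i}) = t i := by
    intro i
    rw [Submodule.map_span, Set.image_singleton, ht]
    rfl
  have hNsup : (⨆ i, span R {n i} : Submodule R N) = ⊤ := by
    apply Submodule.map_injective_of_injective N.injective_subtype
    rw [Submodule.map_iSup, Submodule.map_subtype_top]
    calc (⨆ i, Submodule.map N.subtype (span R {n i})) = ⨆ i, t i :=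
          iSup_congr hsubtype_span
    _ = N := hNdef.symm
  have hTsup : (⨆ i, T i) = ⊤ := by
    have h1 : (⨆ i, T i) = Submodule.map P.mkQ (⨆ i, span R {n i}) := by
      rw [Submodule.map_iSup]
      exact iSup_congr hTmap
    rw [h1, hNsup, Submodule.map_top, Submodule.range_mkQ]
  have hTind : iSupIndep T := by
    intro i
    rw [Submodule.disjoint_def]
    intro q hq1 hq2
    rcases mem_span_singleton.mp hq1 with ⟨r, rfl⟩
    have hmapiSup : (⨆ j, ⨆ _ : j ≠ i, T j)
        = Submodule.map P.mkQ (⨆ j, ⨆ _ : j ≠ i, span R {n j}) := by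
      rw [Submodule.map_iSup]
      refine iSup_congr fun j => ?_
      rw [Submodule.map_iSup]
      exact iSup_congr fun _ => hTmap j
    rw [hmapiSup] at hq2
    rcases Submodule.mem_map.mp hq2 with ⟨s, hs, hsq⟩
    have hsub : r • n i - s ∈ P := by
      have h0 : P.mkQ (r • n i - s) = 0 := by
        rw [map_sub, map_smul, hsq]
        simp
      rwa [Submodule.mkQ_apply, Submodule.Quotient.mk_eq_zero] at h0
    have hsval : (s : M) ∈ ⨆ j, ⨆ _ : j ≠ i, t j := by
      have h1 : (s : M) ∈ Submodule.map N.subtype (⨆ j, ⨆ _ : j ≠ i, span R {n j}) :=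
        Submodule.mem_map_of_mem hs
      have h2 : Submodule.map N.subtype (⨆ j, ⨆ _ : j ≠ i, span R {n j})
          = ⨆ j, ⨆ _ : j ≠ i, t j := by
        rw [Submodule.map_iSup]
        refine iSup_congr fun j => ?_
        rw [Submodule.map_iSup]
        exact iSup_congr fun _ => hsubtype_span j
      rwa [h2] at h1
    have hPMmem : r • x i - (s : M) ∈ PM := hsub
    have hin : r • x i ∈ (⨆ j, ⨆ _ : j ≠ i, t j) ⊔ PM := by
      have hxx : r • x i = (s : M) + (r • x i - (s : M)) := by abel
      rw [hxx]
      exact Submodule.add_mem_sup hsval hPMmem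
    have hmi : r • x i ∈ m i :=
      hsplit i _ (Submodule.smul_mem _ r (mem_span_singleton_self _)) hin
    have hPmem : r • n i ∈ P := (hmemP i r).mpr ((le_iSup m i) hmi)
    calc r • P.mkQ (n i) = P.mkQ (r • n i) := (map_smul _ _ _).symm
    _ = 0 := by rwa [Submodule.mkQ_apply, Submodule.Quotient.mk_eq_zero]
  exact hM ⟨N, P, ι₀, inferInstance, T, hTind, hTsup,
    fun i => IsSimpleModule.congr (e i).symm, fun i j => ⟨(e i).symm.trans (e j)⟩⟩

/-- An `ℵ₀`-distributive module has no independent set of nonzero submodules of size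
exceeding the number of right ideals of the ring. -/
theorem stmt16_aux_card (hM : IsAleph0Distributive R M) (s : Set (Submodule R M))
    (hind : sSupIndep s) (hbot : ∀ p ∈ s, p ≠ ⊥) :
    Cardinal.mk s ≤ Cardinal.mk (Submodule R R ⊕ ℕ) := by
  classical
  by_contra hlt
  push_neg at hlt
  have hx : ∀ p : s, ∃ z : M, z ∈ (p : Submodule R M) ∧ z ≠ 0 := fun p =>
    Submodule.exists_mem_ne_zero_of_ne_bot (hbot p p.2)
  choose x hxmem hxne using hx
  have hmex : ∀ p : s, ∃ m : Submodule R M, m ≤ span R {x p} ∧ x p ∉ m ∧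
      ∀ q : Submodule R M, q ≤ span R {x p} → x p ∉ q → m ≤ q → q = m :=
    fun p => stmt16_aux_max_avoid (x p) (hxne p)
  choose m hm1 hm2 hm3 using hmex
  set μ : s → Submodule R R :=
    fun p => (m p).comap (LinearMap.toSpanSingleton R M (x p)) with hμdef
  have hcoμ : ∀ p, IsCoatom (μ p) := fun p => stmt16_aux_coatom _ _ (hm1 p) (hm2 p) (hm3 p)
  haveI : Infinite s := Cardinal.infinite_iff.mpr
    ((Cardinal.infinite_iff.mp (inferInstance : Infinite (Submodule R R ⊕ ℕ))).trans hlt.le)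
  obtain ⟨a, ha⟩ := Cardinal.exists_infinite_fiber
    (fun p : s => (Sum.inl (μ p) : Submodule R R ⊕ ℕ)) hlt
  haveI : Infinite ((fun p : s => (Sum.inl (μ p) : Submodule R R ⊕ ℕ)) ⁻¹' {a}) := ha
  set ι₀ := ((fun p : s => (Sum.inl (μ p) : Submodule R R ⊕ ℕ)) ⁻¹' {a})
  obtain ⟨p₀⟩ : Nonempty ι₀ := inferInstance
  have hfib : ∀ i : ι₀, μ i.1 = μ p₀.1 := by
    intro i
    have h1 : (Sum.inl (μ i.1) : Submodule R R ⊕ ℕ) = a := i.2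
    have h2 : (Sum.inl (μ p₀.1) : Submodule R R ⊕ ℕ) = a := p₀.2
    exact Sum.inl.inj (h1.trans h2.symm)
  have hind' : iSupIndep fun p : s => span R {x p} := by
    intro p
    refine (hind p.2).mono ?_ ?_
    · exact (span_singleton_le_iff_mem _ _).mpr (hxmem p)
    · refine iSup₂_le fun q hq => ?_
      refine le_trans ((span_singleton_le_iff_mem _ _).mpr (hxmem q)) (le_sSup ?_)
      exact ⟨q.2, fun h => hq (Subtype.ext h)⟩
  have hindX : iSupIndep fun i : ι₀ => span R {x i.1} :=
    hind'.comp (Subtype.val_injective : Function.Injective (Subtype.val : ι₀ → s))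
  refine stmt16_aux_bad hM (fun i : ι₀ => x i.1) (fun i : ι₀ => m i.1) hindX
    (fun i => hm1 i.1) (μ p₀.1) (hcoμ p₀.1) ?_
  intro i r
  have : r • x i.1 ∈ m i.1 ↔ r ∈ μ i.1 := by
    rw [hμdef]
    simp [Submodule.mem_comap]
  rw [this, hfib i]

end Stmt16Aux

theorem stmt16 (A : Type u) [Ring A] :
    ∃ κ : Cardinal.{u}, ∀ (M : Type u) [AddCommGroup M] [Module Aᵐᵒᵖ M],
      IsAleph0Distributive Aᵐᵒᵖ M → Cardinal.mk M ≤ κ := by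
  classical
  set ν : Cardinal.{u} :=
    Cardinal.mk (Submodule Aᵐᵒᵖ Aᵐᵒᵖ ⊕ ℕ) + Cardinal.mk Aᵐᵒᵖ + Cardinal.aleph0 with hν
  set μc : Cardinal.{u} := ν ^ ν + ν with hμc
  set W : Type u := μc.out with hW
  refine ⟨⨆ K : Submodule Aᵐᵒᵖ (W →₀ Aᵐᵒᵖ),
    Cardinal.mk (CategoryTheory.Injective.under
      (ModuleCat.of Aᵐᵒᵖ ((W →₀ Aᵐᵒᵖ) ⧸ K)) : ModuleCat.{u} Aᵐᵒᵖ), ?_⟩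
  intro M _ _ hM
  have hνinf : Cardinal.aleph0 ≤ ν := by rw [hν]; exact self_le_add_left _ _
  have hν0 : ν ≠ 0 := (Cardinal.aleph0_pos.trans_le hνinf).ne'
  have hRle : Cardinal.mk Aᵐᵒᵖ ≤ ν := by
    rw [hν]; exact le_trans (self_le_add_left _ _) (self_le_add_right _ _)
  -- Zorn: a maximal independent family of nonzero cyclic submodules
  set S : Set (Set (Submodule Aᵐᵒᵖ M)) :=
    {s | sSupIndep s ∧ ∀ p ∈ s, ∃ z : M, z ≠ 0 ∧ p = span Aᵐᵒᵖ {z}} with hS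
  have hzorn : ∀ c ⊆ S, IsChain (· ⊆ ·) c → ∃ ub ∈ S, ∀ s ∈ c, s ⊆ ub := by
    intro c hcS hchain
    refine ⟨⋃₀ c, ⟨iSupIndep_sUnion_of_directed hchain.directedOn fun s hs => (hcS hs).1, ?_⟩,
      fun s hs => Set.subset_sUnion_of_mem hs⟩
    rintro p ⟨sc, hsc, hp⟩
    exact (hcS hsc).2 p hp
  obtain ⟨s, hsmax⟩ := zorn_subset S hzorn
  have hsS : s ∈ S := hsmax.prop
  set D : Submodule Aᵐᵒᵖ M := sSup s with hD
  -- D is essential in M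
  have hEss : ∀ z : M, z ≠ 0 → ∃ r : Aᵐᵒᵖ, r • z ∈ D ∧ r • z ≠ 0 := by
    intro z hz
    by_contra hcon
    push_neg at hcon
    have hzD : z ∉ D := fun hmem => hz (by simpa using hcon 1 (by simpa using hmem))
    have hnots : span Aᵐᵒᵖ {z} ∉ s := fun hmem =>
      hzD (le_sSup hmem (mem_span_singleton_self z))
    have hins : insert (span Aᵐᵒᵖ {z}) s ∈ S := by
      constructor
      · intro p hp
        rcases Set.mem_insert_iff.mp hp with rfl | hps
        · have hsub : insert (span Aᵐᵒᵖ {z}) s \ {span Aᵐᵒᵖ {z}} ⊆ s := by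
            intro q hq
            rcases Set.mem_insert_iff.mp hq.1 with rfl | h
            · exact absurd rfl hq.2
            · exact h
          refine Disjoint.mono_right (sSup_le_sSup hsub) ?_
          rw [Submodule.disjoint_def]
          intro q hq1 hq2
          rcases mem_span_singleton.mp hq1 with ⟨r, rfl⟩
          exact hcon r hq2
        · rw [Submodule.disjoint_def]
          intro q hq1 hq2
          have hle : sSup (insert (span Aᵐᵒᵖ {z}) s \ {p}) ≤ sSup (s \ {p}) ⊔ span Aᵐᵒᵖ {z} := by
            refine sSup_le fun w hw => ?_
            rcases Set.mem_insert_iff.mp hw.1 with rfl | hws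
            · exact le_sup_right
            · exact le_trans (le_sSup (show w ∈ s \ {p} from ⟨hws, hw.2⟩)) le_sup_left
          rcases Submodule.mem_sup.mp (hle hq2) with ⟨u, hu, v, hv, huv⟩
          rcases mem_span_singleton.mp hv with ⟨r, rfl⟩
          have hrzD : r • z ∈ D := by
            have h1 : q ∈ D := le_sSup hps hq1
            have h2 : u ∈ D := (sSup_le_sSup (Set.diff_subset : s \ {p} ⊆ s)) hu
            have h3 : r • z = q - u := by rw [← huv]; abel
            rw [h3]; exact sub_mem h1 h2
          have hq : q = u := by rw [← huv, hcon r hrzD, add_zero]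
          exact Submodule.disjoint_def.mp (hsS.1 hps) q hq1 (hq ▸ hu)
      · intro p hp
        rcases Set.mem_insert_iff.mp hp with rfl | hps
        · exact ⟨z, hz, rfl⟩
        · exact hsS.2 p hps
    exact hnots ((hsmax.2 hins (Set.subset_insert _ _)) (Set.mem_insert _ _))
  -- cardinality of the family
  have hcard_s : Cardinal.mk s ≤ ν := by
    have h1 := stmt16_aux_card hM s hsS.1 (fun p hp => by
      obtain ⟨z, hz, rfl⟩ := hsS.2 p hp
      simpa [Submodule.span_singleton_eq_bot] using hz)
    calc Cardinal.mk s ≤ Cardinal.mk (Submodule Aᵐᵒᵖ Aᵐᵒᵖ ⊕ ℕ) := h1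
    _ ≤ ν := by rw [hν]; exact le_trans (self_le_add_right _ _) (self_le_add_right _ _)
  -- cardinality of D
  set X : Set M := ⋃ p : s, ((p : Submodule Aᵐᵒᵖ M) : Set M) with hX
  have hD2 : D = span Aᵐᵒᵖ X := by
    rw [hD, sSup_eq_iSup', Submodule.iSup_eq_span, hX]
  have hXcard : Cardinal.mk X ≤ ν := by
    calc Cardinal.mk X
        ≤ Cardinal.sum (fun p : s => Cardinal.mk ((p : Submodule Aᵐᵒᵖ M) : Set M)) :=
          Cardinal.mk_iUnion_le_sum_mk
    _ ≤ Cardinal.sum (fun _ : s => Cardinal.mk Aᵐᵒᵖ) := by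
        refine Cardinal.sum_le_sum _ _ fun p => ?_
        obtain ⟨z, hz, hp⟩ := hsS.2 p p.2
        have hmem : ∀ r : Aᵐᵒᵖ, r • z ∈ (p : Submodule Aᵐᵒᵖ M) := by
          intro r; rw [hp]; exact Submodule.smul_mem _ r (mem_span_singleton_self z)
        refine Cardinal.mk_le_of_surjective
          (f := fun r : Aᵐᵒᵖ => (⟨r • z, hmem r⟩ : ((p : Submodule Aᵐᵒᵖ M) : Set M))) ?_
        rintro ⟨y, hy⟩
        have hy' : y ∈ span Aᵐᵒᵖ {z} := by rw [← hp]; exact hy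
        obtain ⟨r, hr⟩ := mem_span_singleton.mp hy'
        exact ⟨r, Subtype.ext hr⟩
    _ = Cardinal.mk s * Cardinal.mk Aᵐᵒᵖ := Cardinal.sum_const' _ _
    _ ≤ ν * ν := mul_le_mul' hcard_s hRle
    _ = ν := Cardinal.mul_eq_self hνinf
  have hcard_D : Cardinal.mk D ≤ μc := by
    have hrange := Finsupp.range_linearCombination (R := Aᵐᵒᵖ) (v := (Subtype.val : X → M))
    rw [Subtype.range_coe] at hrange
    have hsurj : Function.Surjective
        (Finsupp.linearCombination Aᵐᵒᵖ (Subtype.val : X → M)).rangeRestrict :=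
      LinearMap.surjective_rangeRestrict _
    have h1 : Cardinal.mk
        (LinearMap.range (Finsupp.linearCombination Aᵐᵒᵖ (Subtype.val : X → M)))
          ≤ Cardinal.mk (X →₀ Aᵐᵒᵖ) := Cardinal.mk_le_of_surjective hsurj
    rw [hrange] at h1
    calc Cardinal.mk D = Cardinal.mk (span Aᵐᵒᵖ X) := by rw [hD2]
    _ ≤ Cardinal.mk (X →₀ Aᵐᵒᵖ) := h1
    _ ≤ Cardinal.mk (X → Aᵐᵒᵖ) := Cardinal.mk_le_of_injective DFunLike.coe_injective
    _ = Cardinal.mk Aᵐᵒᵖ ^ Cardinal.mk X := (Cardinal.power_def _ _).symm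
    _ ≤ ν ^ ν := le_trans (Cardinal.power_le_power_right hRle)
        (Cardinal.power_le_power_left hν0 hXcard)
    _ ≤ μc := by rw [hμc]; exact self_le_add_right _ _
  -- a surjection from W onto D
  have hDW : Cardinal.mk D ≤ Cardinal.mk W := by
    rw [hW, Cardinal.mk_out]; exact hcard_D
  obtain ⟨e⟩ := (Cardinal.le_def (↥D) W).mp hDW
  haveI : Nonempty (↥D) := ⟨0⟩
  set w : W → D := Function.invFun e with hw
  have hwsurj : Function.Surjective w := Function.invFun_surjective e.injective
  set φ : (W →₀ Aᵐᵒᵖ) →ₗ[Aᵐᵒᵖ] D := Finsupp.linearCombination Aᵐᵒᵖ w with hφ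
  have hφsurj : Function.Surjective φ := by
    rw [← LinearMap.range_eq_top, hφ, Finsupp.range_linearCombination, hwsurj.range_eq,
      Submodule.span_univ]
  set K := LinearMap.ker φ with hK
  let eDK := φ.quotKerEquivOfSurjective hφsurj
  -- the injective envelope
  let Qobj : ModuleCat.{u} Aᵐᵒᵖ :=
    CategoryTheory.Injective.under (ModuleCat.of Aᵐᵒᵖ ((W →₀ Aᵐᵒᵖ) ⧸ K))
  let ιm : ModuleCat.of Aᵐᵒᵖ ((W →₀ Aᵐᵒᵖ) ⧸ K) ⟶ Qobj :=
    CategoryTheory.Injective.ι (ModuleCat.of Aᵐᵒᵖ ((W →₀ Aᵐᵒᵖ) ⧸ K))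
  let βa : ModuleCat.of Aᵐᵒᵖ (↥D) ⟶ ModuleCat.of Aᵐᵒᵖ ((W →₀ Aᵐᵒᵖ) ⧸ K) :=
    ModuleCat.ofHom eDK.symm.toLinearMap
  let β : ModuleCat.of Aᵐᵒᵖ (↥D) ⟶ Qobj := CategoryTheory.CategoryStruct.comp βa ιm
  let α : ModuleCat.of Aᵐᵒᵖ (↥D) ⟶ ModuleCat.of Aᵐᵒᵖ M :=
    ModuleCat.ofHom D.subtype
  haveI : CategoryTheory.Mono α := (ModuleCat.mono_iff_injective α).mpr D.injective_subtype
  let g : ModuleCat.of Aᵐᵒᵖ M ⟶ Qobj := CategoryTheory.Injective.factorThru β α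
  have hfact : CategoryTheory.CategoryStruct.comp α g = β :=
    CategoryTheory.Injective.comp_factorThru β α
  have hβinj : Function.Injective β := by
    have hιinj : Function.Injective ιm := (ModuleCat.mono_iff_injective ιm).mp inferInstance
    have hcomp : ⇑β = ⇑ιm ∘ ⇑βa := funext fun _ => rfl
    rw [hcomp]
    exact hιinj.comp eDK.symm.injective
  have hg0 : ∀ z : M, g z = 0 → z = 0 := by
    intro z hz
    by_contra hzne
    obtain ⟨r, hrD, hrne⟩ := hEss z hzne
    have h2 : g (r • z) = 0 := by rw [map_smul, hz, smul_zero]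
    have h4 : g (α (⟨r • z, hrD⟩ : ↥D)) = β (⟨r • z, hrD⟩ : ↥D) := by
      rw [← hfact]
      exact rfl
    have hαval : α (⟨r • z, hrD⟩ : ↥D) = r • z := rfl
    have h3 : β (⟨r • z, hrD⟩ : ↥D) = 0 := by rw [← h4, hαval, h2]
    have h5 : (⟨r • z, hrD⟩ : ↥D) = 0 := hβinj (by rw [h3, map_zero])
    exact hrne (by simpa using congrArg Subtype.val h5)
  have hginj : Function.Injective g := by
    intro a b hab
    have h1 : g (a - b) = 0 := by rw [map_sub, hab, sub_self]
    exact sub_eq_zero.mp (hg0 _ h1)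
  calc Cardinal.mk M ≤ Cardinal.mk Qobj := Cardinal.mk_le_of_injective hginj
  _ ≤ _ := le_ciSup (Cardinal.bddAbove_range _) K
end
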